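/- arXiv:1909.09412 — 9 statements merged into one kernel-verified Lean document; each statement's English description precedes it below -/
import Mathlib

section
/- Suppose Assumptions (No Dynamics), (Latent Unconfoundedness) and the outcome model hold, and let ω ∈ 𝕎_outc. Then the estimand τ(ω) := E[(1/T)·Σ_{t=1}^T Y_t · ω_{k(i)t}] equals E[τ(U)·ξ], where ξ := (1/T)·Σ_{t=1}^T ω_{k(i)t}·𝐖_{k(i)t} satisfies ξ ≥ 0 almost surely and E[ξ] = 1; in particular τ(ω) is a convex combination of the conditional treatment effects τ(U). -/
open MeasureTheory ProbabilityTheory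
open scoped BigOperators

open Filter

section Aux

lemma aux_continuous_integral_bddmul {Ω : Type*} {mΩ : MeasurableSpace Ω} {μ : Measure Ω} {h : Ω → ℝ}
    (hmeas : AEStronglyMeasurable h μ) (hbdd : ∀ᵐ ω ∂μ, ‖h ω‖ ≤ 1) :
    Continuous fun f : Lp ℝ 1 μ => ∫ ω, h ω * f ω ∂μ := by
  refine LipschitzWith.continuous (K := 1) ?_
  rw [lipschitzWith_iff_dist_le_mul]
  intro f₁ f₂
  have hi₁ : Integrable (f₁ : Ω → ℝ) μ := L1.integrable_coeFn f₁
  have hi₂ : Integrable (f₂ : Ω → ℝ) μ := L1.integrable_coeFn f₂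
  have hm₁ : Integrable (fun ω => h ω * f₁ ω) μ := hi₁.bdd_mul hmeas hbdd
  have hm₂ : Integrable (fun ω => h ω * f₂ ω) μ := hi₂.bdd_mul hmeas hbdd
  rw [NNReal.coe_one, one_mul, Real.dist_eq, ← integral_sub hm₁ hm₂]
  have hdist : dist f₁ f₂ = ∫ ω, ‖f₁ ω - f₂ ω‖ ∂μ := by
    rw [L1.dist_eq_integral_dist]
    simp_rw [dist_eq_norm]
  rw [hdist]
  calc |∫ ω, (h ω * f₁ ω - h ω * f₂ ω) ∂μ|
      ≤ ∫ ω, ‖h ω * f₁ ω - h ω * f₂ ω‖ ∂μ := by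
        simpa [Real.norm_eq_abs] using
          norm_integral_le_integral_norm (fun ω => h ω * f₁ ω - h ω * f₂ ω) (μ := μ)
    _ ≤ ∫ ω, ‖f₁ ω - f₂ ω‖ ∂μ := by
        refine integral_mono_ae (hm₁.sub hm₂).norm (hi₁.sub hi₂).norm ?_
        filter_upwards [hbdd] with ω hω
        calc ‖h ω * f₁ ω - h ω * f₂ ω‖ = ‖h ω‖ * ‖f₁ ω - f₂ ω‖ := by
              rw [← mul_sub, norm_mul]
          _ ≤ 1 * ‖f₁ ω - f₂ ω‖ := mul_le_mul_of_nonneg_right hω (norm_nonneg _)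
          _ = ‖f₁ ω - f₂ ω‖ := one_mul _

lemma aux_condexp_indicator_bound {Ω : Type*} {m' mΩ : MeasurableSpace Ω} (hm' : m' ≤ mΩ)
    (μ : Measure Ω) [IsProbabilityMeasure μ] {s : Set Ω} (hs : MeasurableSet s) :
    ∀ᵐ ω ∂μ, ‖(μ⟦s | m'⟧) ω‖ ≤ 1 := by
  have h0 : (0 : Ω → ℝ) ≤ᵐ[μ] μ⟦s | m'⟧ :=
    condExp_nonneg (Eventually.of_forall fun ω =>
      Set.indicator_nonneg (fun _ _ => zero_le_one) ω)
  have h1 : μ⟦s | m'⟧ ≤ᵐ[μ] μ[(fun _ : Ω => (1 : ℝ)) | m'] := by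
    refine condExp_mono ((integrable_const (1 : ℝ)).indicator hs)
      (integrable_const 1) (Eventually.of_forall fun ω => ?_)
    exact Set.indicator_apply_le' (fun _ => le_rfl) (fun _ => zero_le_one)
  have hc : μ[(fun _ : Ω => (1 : ℝ)) | m'] = fun _ => (1 : ℝ) := condExp_const hm' (1 : ℝ)
  rw [hc] at h1
  filter_upwards [h0, h1] with ω hω0 hω1
  rw [Real.norm_eq_abs, abs_le]
  exact ⟨by simpa using (neg_nonpos.mpr (zero_le_one)).trans hω0, hω1⟩

/-- Key lemma: under conditional independence of `X` and `g` given `m'`, for any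
`Z` measurable w.r.t. `σ(g)` and integrable,
`∫_{X⁻¹ A} Z = ∫ μ⟦X⁻¹A | m'⟧ · μ[Z | m']`. -/
lemma aux_condIndep_setIntegral {Ω : Type*} {m' mΩ : MeasurableSpace Ω}
    [StandardBorelSpace Ω] (hm' : m' ≤ mΩ)
    (μ : Measure Ω) [IsProbabilityMeasure μ]
    {β γ : Type*} [mβ : MeasurableSpace β] [mγ : MeasurableSpace γ]
    {X : Ω → β} {g : Ω → γ} (hX : Measurable X) (hg : Measurable g)
    (hindep : CondIndepFun m' hm' X g μ)
    {A : Set β} (hA : MeasurableSet A)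
    {Z : Ω → ℝ} (hZm : Measurable[mγ.comap g] Z) (hZint : Integrable Z μ) :
    ∫ ω in X ⁻¹' A, Z ω ∂μ = ∫ ω, (μ⟦X ⁻¹' A | m'⟧) ω * (μ[Z | m']) ω ∂μ := by
  set h : Ω → ℝ := μ⟦X ⁻¹' A | m'⟧ with hh
  have hhsm : StronglyMeasurable[m'] h := stronglyMeasurable_condExp
  have hhint : Integrable h μ := integrable_condExp
  have hhb : ∀ᵐ ω ∂μ, ‖h ω‖ ≤ 1 := aux_condexp_indicator_bound hm' μ (hX hA)
  have hhaesm : AEStronglyMeasurable h μ := by exact (hhsm.mono hm').aestronglyMeasurable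
  -- Step 1: ∫_{X⁻¹A} Z = ∫ h * Z
  have step1 : ∫ ω in X ⁻¹' A, Z ω ∂μ = ∫ ω, h ω * Z ω ∂μ := by
    have hm₁ : mγ.comap g ≤ mΩ := hg.comap_le
    refine MemLp.induction_stronglyMeasurable hm₁ (p := 1) ENNReal.one_ne_top
      (fun Z => ∫ ω in X ⁻¹' A, Z ω ∂μ = ∫ ω, h ω * Z ω ∂μ) ?_ ?_ ?_ ?_
      (memLp_one_iff_integrable.mpr hZint)
      ⟨Z, hZm.stronglyMeasurable, EventuallyEq.rfl⟩
    · -- indicators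
      rintro c s ⟨t, ht, rfl⟩ -
      have hkey : (μ (X ⁻¹' A ∩ g ⁻¹' t)).toReal = ∫ ω in g ⁻¹' t, h ω ∂μ := by
        have hfact := ((condIndepFun_iff_condExp_inter_preimage_eq_mul hX hg).mp hindep)
          A t hA ht
        have h1 : (μ (X ⁻¹' A ∩ g ⁻¹' t)).toReal
            = ∫ ω, (μ⟦X ⁻¹' A ∩ g ⁻¹' t | m'⟧) ω ∂μ := by
          rw [integral_condExp hm',
            integral_indicator_const (1 : ℝ) ((hX hA).inter (hg ht)), smul_eq_mul, mul_one, measureReal_def]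
        rw [h1, integral_congr_ae hfact]
        have hitint : Integrable ((g ⁻¹' t).indicator fun _ => (1:ℝ)) μ :=
          (integrable_const (1:ℝ)).indicator (hg ht)
        have hpull : μ[(fun ω => h ω * ((g ⁻¹' t).indicator (fun _ => (1:ℝ))) ω) | m']
            =ᵐ[μ] fun ω => h ω * (μ⟦g ⁻¹' t | m'⟧) ω :=
          condExp_stronglyMeasurable_mul_of_bound hm' hhsm hitint 1 hhb
        calc ∫ ω, h ω * (μ⟦g ⁻¹' t | m'⟧) ω ∂μ
            = ∫ ω, (μ[(fun ω => h ω * ((g ⁻¹' t).indicator (fun _ => (1:ℝ))) ω) | m']) ω ∂μ :=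
              (integral_congr_ae hpull).symm
          _ = ∫ ω, h ω * ((g ⁻¹' t).indicator (fun _ => (1:ℝ))) ω ∂μ :=
              integral_condExp hm'
          _ = ∫ ω in g ⁻¹' t, h ω ∂μ := by
              rw [← integral_indicator (hg ht)]
              congr 1
              funext ω
              by_cases hω : ω ∈ g ⁻¹' t <;> simp [hω]
      calc ∫ ω in X ⁻¹' A, ((g ⁻¹' t).indicator fun _ => c) ω ∂μ
          = ∫ ω in X ⁻¹' A ∩ g ⁻¹' t, c ∂μ := setIntegral_indicator (hg ht)
        _ = (μ (X ⁻¹' A ∩ g ⁻¹' t)).toReal • c := by rw [setIntegral_const, measureReal_def]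
        _ = (∫ ω in g ⁻¹' t, h ω ∂μ) • c := by rw [hkey]
        _ = ∫ ω, h ω * ((g ⁻¹' t).indicator fun _ => c) ω ∂μ := by
            rw [← integral_indicator (hg ht)]
            rw [smul_eq_mul, ← integral_mul_const]
            congr 1
            funext ω
            by_cases hω : ω ∈ g ⁻¹' t <;> simp [hω]
    · -- additivity
      intro Z₁ Z₂ _ hZ₁ hZ₂ _ _ h₁ h₂
      have hi₁ := memLp_one_iff_integrable.mp hZ₁
      have hi₂ := memLp_one_iff_integrable.mp hZ₂
      have hb₁ : Integrable (fun ω => h ω * Z₁ ω) μ := hi₁.bdd_mul hhaesm hhb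
      have hb₂ : Integrable (fun ω => h ω * Z₂ ω) μ := hi₂.bdd_mul hhaesm hhb
      calc ∫ ω in X ⁻¹' A, (Z₁ + Z₂) ω ∂μ
          = ∫ ω in X ⁻¹' A, (Z₁ ω + Z₂ ω) ∂μ := rfl
        _ = (∫ ω in X ⁻¹' A, Z₁ ω ∂μ) + ∫ ω in X ⁻¹' A, Z₂ ω ∂μ :=
            integral_add hi₁.integrableOn hi₂.integrableOn
        _ = (∫ ω, h ω * Z₁ ω ∂μ) + ∫ ω, h ω * Z₂ ω ∂μ := by rw [h₁, h₂]
        _ = ∫ ω, (h ω * Z₁ ω + h ω * Z₂ ω) ∂μ := (integral_add hb₁ hb₂).symm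
        _ = ∫ ω, h ω * (Z₁ + Z₂) ω ∂μ := by
            congr 1; funext ω; simp [mul_add]
    · -- closedness
      have heq₁ : (fun f : lpMeas ℝ ℝ (mγ.comap g) 1 μ => ∫ ω in X ⁻¹' A, (f : Ω → ℝ) ω ∂μ)
          = (fun f : Lp ℝ 1 μ => ∫ ω in X ⁻¹' A, f ω ∂μ) ∘ Submodule.subtypeL _ := rfl
      have heq₂ : (fun f : lpMeas ℝ ℝ (mγ.comap g) 1 μ => ∫ ω, h ω * (f : Ω → ℝ) ω ∂μ)
          = (fun f : Lp ℝ 1 μ => ∫ ω, h ω * f ω ∂μ) ∘ Submodule.subtypeL _ := rfl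
      refine isClosed_eq ?_ ?_
      · rw [heq₁]
        exact (continuous_setIntegral _).comp (ContinuousLinearMap.continuous _)
      · rw [heq₂]
        exact (aux_continuous_integral_bddmul hhaesm hhb).comp
          (ContinuousLinearMap.continuous _)
    · -- a.e. congruence
      intro Z₁ Z₂ hZeq _ h₁
      have h2 : ∫ ω in X ⁻¹' A, Z₂ ω ∂μ = ∫ ω in X ⁻¹' A, Z₁ ω ∂μ :=
        setIntegral_congr_ae (hX hA) (hZeq.symm.mono fun ω hω _ => hω)
      have h3 : ∫ ω, h ω * Z₂ ω ∂μ = ∫ ω, h ω * Z₁ ω ∂μ :=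
        integral_congr_ae (hZeq.symm.mono fun ω hω => by dsimp only; rw [hω])
      rw [h2, h3, h₁]
  -- Step 2: ∫ h * Z = ∫ h * μ[Z|m']
  rw [step1]
  have hpull : μ[(fun ω => h ω * Z ω) | m'] =ᵐ[μ] fun ω => h ω * (μ[Z | m']) ω :=
    condExp_stronglyMeasurable_mul_of_bound hm' hhsm hZint 1 hhb
  calc ∫ ω, h ω * Z ω ∂μ = ∫ ω, (μ[(fun ω => h ω * Z ω) | m']) ω ∂μ :=
        (integral_condExp hm').symm
    _ = ∫ ω, h ω * (μ[Z | m']) ω ∂μ := integral_congr_ae hpull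

/-- For an `m'`-a.e.-measurable integrable `f` and measurable set `s`,
`∫_s f = ∫ μ⟦s|m'⟧ · f`. -/
lemma aux_setIntegral_eq_condexp_mul {Ω : Type*} {m' mΩ : MeasurableSpace Ω}
    [StandardBorelSpace Ω] (hm' : m' ≤ mΩ)
    (μ : Measure Ω) [IsProbabilityMeasure μ]
    {s : Set Ω} (hs : MeasurableSet s)
    {f : Ω → ℝ} (hf : AEStronglyMeasurable[m'] f μ) (hfint : Integrable f μ) :
    ∫ ω in s, f ω ∂μ = ∫ ω, (μ⟦s | m'⟧) ω * f ω ∂μ := by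
  haveI : SigmaFinite (μ.trim hm') := inferInstance
  have hind : Integrable (s.indicator fun _ => (1:ℝ)) μ :=
    (integrable_const (1:ℝ)).indicator hs
  have hprod : Integrable (fun ω => f ω * (s.indicator fun _ => (1:ℝ)) ω) μ := by
    have h' : Integrable (fun ω => (s.indicator fun _ => (1:ℝ)) ω * f ω) μ :=
      hfint.bdd_mul (c := 1) hind.aestronglyMeasurable
        (Eventually.of_forall fun ω => by by_cases hω : ω ∈ s <;> simp [hω])
    exact h'.congr (Eventually.of_forall fun ω => mul_comm _ _)
  have hpull : μ[(fun ω => f ω * (s.indicator fun _ => (1:ℝ)) ω) | m']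
      =ᵐ[μ] fun ω => f ω * (μ⟦s | m'⟧) ω :=
    condExp_mul_of_aestronglyMeasurable_left hf hprod hind
  calc ∫ ω in s, f ω ∂μ
      = ∫ ω, (fun ω => f ω * (s.indicator fun _ => (1:ℝ)) ω) ω ∂μ := by
        rw [← integral_indicator hs]
        congr 1
        funext ω
        by_cases hω : ω ∈ s <;> simp [hω]
    _ = ∫ ω, (μ[(fun ω => f ω * (s.indicator fun _ => (1:ℝ)) ω) | m']) ω ∂μ :=
        (integral_condExp hm').symm
    _ = ∫ ω, f ω * (μ⟦s | m'⟧) ω ∂μ := integral_congr_ae hpull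
    _ = ∫ ω, (μ⟦s | m'⟧) ω * f ω ∂μ := by simp_rw [mul_comm]

end Aux

/-- **Proposition 1 (Identification through the outcome model).**
Under No Dynamics (potential outcomes indexed by the contemporaneous binary
treatment only), Latent Unconfoundedness and the two-way outcome model
`E[Y_t(w) | U] = α(U) + λ_t + τ(U)·w`, for any weights `w ∈ 𝕎_outc` the estimand
`τ(ω) = E[(1/T)·Σ_t Y_t · ω_{k(i)t}]` equals `E[τ(U)·ξ]` where
`ξ = (1/T)·Σ_t ω_{k(i)t}·𝐖_{k(i)t} ≥ 0` a.s. and `E[ξ] = 1`. -/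
theorem outcome_model_identification
    {Ωs 𝓤 : Type*} [MeasurableSpace Ωs] [StandardBorelSpace Ωs] [Nonempty Ωs]
    [MeasurableSpace 𝓤]
    (μ : Measure Ωs) [IsProbabilityMeasure μ]
    (T K : ℕ) (hT : 0 < T) (hK : 0 < K)
    -- the assignment support: `K` distinct rows of a matrix with entries in {0,1}
    (Wmat : Fin K → Fin T → ℝ)
    (hW01 : ∀ k t, Wmat k t = 0 ∨ Wmat k t = 1)
    (hWdistinct : Function.Injective Wmat)
    -- the realized assignment, identified by its (random) row index `k(i)`
    (kidx : Ωs → Fin K) (hkidx : Measurable kidx)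
    -- all rows have positive probability
    (hπpos : ∀ k, 0 < (μ {ω | kidx ω = k}).toReal)
    -- potential outcomes `Y_t(0)` and `Y_t(1)`, integrable
    (Y0 Y1 : Fin T → Ωs → ℝ)
    (hY0meas : ∀ t, Measurable (Y0 t)) (hY1meas : ∀ t, Measurable (Y1 t))
    (hY0int : ∀ t, Integrable (Y0 t) μ) (hY1int : ∀ t, Integrable (Y1 t) μ)
    -- the unobserved confounder
    (U : Ωs → 𝓤) (hU : Measurable U)
    -- Latent Unconfoundedness: W ⫫ {Y_t(w)} | U
    (hunconf : CondIndepFun (MeasurableSpace.comap U inferInstance) hU.comap_le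
      kidx (fun ω => ((fun t => Y0 t ω), (fun t => Y1 t ω))) μ)
    -- Outcome model: E[Y_t(w)|U] = α(U) + λ_t + τ(U)·w
    (a tau : 𝓤 → ℝ) (lam : Fin T → ℝ)
    (haint : Integrable (fun ω => a (U ω)) μ)
    (htauint : Integrable (fun ω => tau (U ω)) μ)
    (hmodel0 : ∀ t, μ[Y0 t | MeasurableSpace.comap U inferInstance]
      =ᵐ[μ] fun ω => a (U ω) + lam t)
    (hmodel1 : ∀ t, μ[Y1 t | MeasurableSpace.comap U inferInstance]
      =ᵐ[μ] fun ω => a (U ω) + lam t + tau (U ω))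
    -- weights ω ∈ 𝕎_outc
    (w : Fin K → Fin T → ℝ)
    (hw1 : (1 / (T : ℝ)) * ∑ k, ∑ t,
      (μ {ω | kidx ω = k}).toReal * w k t * Wmat k t = 1)
    (hw2 : ∀ k, 0 ≤ (1 / (T : ℝ)) * ∑ t, w k t * Wmat k t)
    (hw3 : ∀ k, ∑ t, w k t = 0)
    (hw4 : ∀ t, ∑ k, (μ {ω | kidx ω = k}).toReal * w k t = 0) :
    -- ξ ≥ 0 a.s., E[ξ] = 1, and τ(ω) = E[τ(U)·ξ]
    (∀ᵐ ω ∂μ, 0 ≤ (1 / (T : ℝ)) * ∑ t, w (kidx ω) t * Wmat (kidx ω) t) ∧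
    (∫ ω, (1 / (T : ℝ)) * ∑ t, w (kidx ω) t * Wmat (kidx ω) t ∂μ = 1) ∧
    (∫ ω, (1 / (T : ℝ)) * ∑ t,
        (Wmat (kidx ω) t * Y1 t ω + (1 - Wmat (kidx ω) t) * Y0 t ω) * w (kidx ω) t ∂μ
      = ∫ ω, tau (U ω) * ((1 / (T : ℝ)) * ∑ t, w (kidx ω) t * Wmat (kidx ω) t) ∂μ) := by
  classical
  have hm' := hU.comap_le
  haveI : SigmaFinite (μ.trim hm') := inferInstance
  have hSmeas : ∀ k, MeasurableSet {ω | kidx ω = k} :=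
    fun k => hkidx (measurableSet_singleton k)
  -- π via opaque names
  obtain ⟨π, hπ⟩ : ∃ π : Fin K → ℝ, ∀ k, π k = (μ {ω | kidx ω = k}).toReal :=
    ⟨_, fun k => rfl⟩
  have hw1' : (1 / (T : ℝ)) * ∑ k, ∑ t, π k * w k t * Wmat k t = 1 := by
    simp_rw [hπ]; exact hw1
  have hw4' : ∀ t, ∑ k, π k * w k t = 0 := by
    intro t; simp_rw [hπ]; exact hw4 t
  refine ⟨Filter.Eventually.of_forall fun ω => hw2 (kidx ω), ?_, ?_⟩
  · -- Part 2 : E[ξ] = 1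
    have hdecomp2 : (fun ω => (1 / (T : ℝ)) * ∑ t, w (kidx ω) t * Wmat (kidx ω) t)
        = fun ω => ∑ k, ({ω' | kidx ω' = k}).indicator
            (fun _ => (1 / (T : ℝ)) * ∑ t, w k t * Wmat k t) ω := by
      funext ω
      rw [Finset.sum_eq_single (kidx ω)]
      · rw [Set.indicator_of_mem (show ω ∈ {ω' | kidx ω' = kidx ω} from rfl)]
      · intro b _ hb
        refine Set.indicator_of_notMem ?_ _
        intro hmem
        exact hb (Eq.symm (by exact hmem))
      · intro hmem; exact absurd (Finset.mem_univ _) hmem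
    rw [hdecomp2, integral_finset_sum _ (fun k _ => (integrable_const _).indicator (hSmeas k))]
    have : ∀ k, ∫ ω, ({ω' | kidx ω' = k}).indicator
        (fun _ => (1 / (T : ℝ)) * ∑ t, w k t * Wmat k t) ω ∂μ
        = π k * ((1 / (T : ℝ)) * ∑ t, w k t * Wmat k t) := by
      intro k
      rw [integral_indicator_const _ (hSmeas k), smul_eq_mul, hπ, measureReal_def]
    have hswap : ∑ k, π k * ((1 / (T : ℝ)) * ∑ t, w k t * Wmat k t)
        = (1 / (T : ℝ)) * ∑ k, ∑ t, π k * w k t * Wmat k t := by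
      rw [Finset.mul_sum]
      refine Finset.sum_congr rfl fun k _ => ?_
      rw [Finset.mul_sum, Finset.mul_sum, Finset.mul_sum]
      refine Finset.sum_congr rfl fun t _ => by ring
    rw [Finset.sum_congr rfl fun k _ => this k, hswap, hw1']
  · -- Part 3 : identification
    -- measurability of the potential-outcome bundle
    set g : Ωs → (Fin T → ℝ) × (Fin T → ℝ) :=
      fun ω => ((fun t => Y0 t ω), (fun t => Y1 t ω)) with hgdef
    have hgm : Measurable g :=
      Measurable.prodMk (measurable_pi_lambda _ fun t => hY0meas t)
        (measurable_pi_lambda _ fun t => hY1meas t)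
    have hgcm : Measurable[MeasurableSpace.comap g inferInstance] g :=
      Measurable.of_comap_le le_rfl
    have hZ0 : ∀ t, Measurable[MeasurableSpace.comap g inferInstance] (Y0 t) :=
      fun t => ((measurable_pi_apply t).comp measurable_fst).comp hgcm
    have hZ1 : ∀ t, Measurable[MeasurableSpace.comap g inferInstance] (Y1 t) :=
      fun t => ((measurable_pi_apply t).comp measurable_snd).comp hgcm
    -- τ∘U is a.e. m'-measurable
    have hτaesm : AEStronglyMeasurable[MeasurableSpace.comap U inferInstance] (fun ω => tau (U ω)) μ := by
      have t0 : Fin T := ⟨0, hT⟩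
      have hsub : μ[(fun ω => Y1 t0 ω - Y0 t0 ω) | MeasurableSpace.comap U inferInstance]
          =ᵐ[μ] μ[Y1 t0 | MeasurableSpace.comap U inferInstance] - μ[Y0 t0 | MeasurableSpace.comap U inferInstance] := condExp_sub (hY1int t0) (hY0int t0) _
      have hae : (fun ω => tau (U ω)) =ᵐ[μ] μ[(fun ω => Y1 t0 ω - Y0 t0 ω) | MeasurableSpace.comap U inferInstance] := by
        filter_upwards [hsub, hmodel0 t0, hmodel1 t0] with ω h1 h2 h3
        rw [h1, Pi.sub_apply, h2, h3]; ring
      exact ⟨μ[(fun ω => Y1 t0 ω - Y0 t0 ω) | MeasurableSpace.comap U inferInstance], stronglyMeasurable_condExp, hae⟩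
    -- facts about h_k := μ⟦{kidx = k}|m'⟧
    have hhb : ∀ k, ∀ᵐ ω ∂μ, ‖(μ⟦{ω' | kidx ω' = k} | MeasurableSpace.comap U inferInstance⟧) ω‖ ≤ 1 :=
      fun k => aux_condexp_indicator_bound hm' μ (hSmeas k)
    have hhaesm : ∀ k, AEStronglyMeasurable (μ⟦{ω' | kidx ω' = k} | MeasurableSpace.comap U inferInstance⟧) μ :=
      fun k => by exact (stronglyMeasurable_condExp.mono hm').aestronglyMeasurable
    have hint_a : ∀ k, Integrable
        (fun ω => (μ⟦{ω' | kidx ω' = k} | MeasurableSpace.comap U inferInstance⟧) ω * a (U ω)) μ :=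
      fun k => haint.bdd_mul (c := 1) (hhaesm k) (hhb k)
    have hint_tau : ∀ k, Integrable
        (fun ω => (μ⟦{ω' | kidx ω' = k} | MeasurableSpace.comap U inferInstance⟧) ω * tau (U ω)) μ :=
      fun k => htauint.bdd_mul (c := 1) (hhaesm k) (hhb k)
    have hint_h : ∀ k, Integrable (μ⟦{ω' | kidx ω' = k} | MeasurableSpace.comap U inferInstance⟧) μ :=
      fun k => integrable_condExp
    have hπint : ∀ k, ∫ ω, (μ⟦{ω' | kidx ω' = k} | MeasurableSpace.comap U inferInstance⟧) ω ∂μ = π k := by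
      intro k
      rw [integral_condExp hm', integral_indicator_const (1 : ℝ) (hSmeas k),
        smul_eq_mul, mul_one, hπ, measureReal_def]
    -- opaque names for the two structural integrals
    obtain ⟨D, hD⟩ : ∃ D : Fin K → ℝ, ∀ k,
        D k = ∫ ω, (μ⟦{ω' | kidx ω' = k} | MeasurableSpace.comap U inferInstance⟧) ω * a (U ω) ∂μ := ⟨_, fun k => rfl⟩
    obtain ⟨Tk, hTk⟩ : ∃ Tk : Fin K → ℝ, ∀ k,
        Tk k = ∫ ω, (μ⟦{ω' | kidx ω' = k} | MeasurableSpace.comap U inferInstance⟧) ω * tau (U ω) ∂μ := ⟨_, fun k => rfl⟩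
    -- evaluation of set integrals of Y1, Y0, τ∘U over {kidx = k}
    have hsplit : ∀ k (c : ℝ), ∫ ω, (μ⟦{ω' | kidx ω' = k} | MeasurableSpace.comap U inferInstance⟧) ω
          * (a (U ω) + c + tau (U ω)) ∂μ = D k + π k * c + Tk k := by
      intro k c
      have e1 : ∫ ω, ((μ⟦{ω' | kidx ω' = k} | MeasurableSpace.comap U inferInstance⟧) ω * a (U ω)
            + (μ⟦{ω' | kidx ω' = k} | MeasurableSpace.comap U inferInstance⟧) ω * c) ∂μ
          = D k + π k * c := by
        rw [integral_add (hint_a k) ((hint_h k).mul_const c), integral_mul_const,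
          hπint k, hD]
      calc ∫ ω, (μ⟦{ω' | kidx ω' = k} | MeasurableSpace.comap U inferInstance⟧) ω
              * (a (U ω) + c + tau (U ω)) ∂μ
          = ∫ ω, (((μ⟦{ω' | kidx ω' = k} | MeasurableSpace.comap U inferInstance⟧) ω * a (U ω)
              + (μ⟦{ω' | kidx ω' = k} | MeasurableSpace.comap U inferInstance⟧) ω * c)
              + (μ⟦{ω' | kidx ω' = k} | MeasurableSpace.comap U inferInstance⟧) ω * tau (U ω)) ∂μ := by
            congr 1; funext ω; ring
        _ = (∫ ω, ((μ⟦{ω' | kidx ω' = k} | MeasurableSpace.comap U inferInstance⟧) ω * a (U ω)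
              + (μ⟦{ω' | kidx ω' = k} | MeasurableSpace.comap U inferInstance⟧) ω * c) ∂μ)
            + ∫ ω, (μ⟦{ω' | kidx ω' = k} | MeasurableSpace.comap U inferInstance⟧) ω * tau (U ω) ∂μ :=
            integral_add ((hint_a k).add ((hint_h k).mul_const c)) (hint_tau k)
        _ = D k + π k * c + Tk k := by rw [e1, hTk]
    have hsplit0 : ∀ k (c : ℝ), ∫ ω, (μ⟦{ω' | kidx ω' = k} | MeasurableSpace.comap U inferInstance⟧) ω
          * (a (U ω) + c) ∂μ = D k + π k * c := by
      intro k c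
      calc ∫ ω, (μ⟦{ω' | kidx ω' = k} | MeasurableSpace.comap U inferInstance⟧) ω
              * (a (U ω) + c) ∂μ
          = ∫ ω, ((μ⟦{ω' | kidx ω' = k} | MeasurableSpace.comap U inferInstance⟧) ω * a (U ω)
              + (μ⟦{ω' | kidx ω' = k} | MeasurableSpace.comap U inferInstance⟧) ω * c) ∂μ := by
            congr 1; funext ω; ring
        _ = (∫ ω, (μ⟦{ω' | kidx ω' = k} | MeasurableSpace.comap U inferInstance⟧) ω * a (U ω) ∂μ)
            + ∫ ω, (μ⟦{ω' | kidx ω' = k} | MeasurableSpace.comap U inferInstance⟧) ω * c ∂μ :=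
            integral_add (hint_a k) ((hint_h k).mul_const c)
        _ = D k + π k * c := by rw [integral_mul_const, hπint k, hD]
    have hI1 : ∀ k t, ∫ ω in {ω' | kidx ω' = k}, Y1 t ω ∂μ = D k + π k * lam t + Tk k := by
      intro k t
      have hkey : ∫ ω in {ω' | kidx ω' = k}, Y1 t ω ∂μ
          = ∫ ω, (μ⟦{ω' | kidx ω' = k} | MeasurableSpace.comap U inferInstance⟧) ω * (μ[Y1 t | MeasurableSpace.comap U inferInstance]) ω ∂μ :=
        aux_condIndep_setIntegral hm' μ hkidx hgm hunconf
          (measurableSet_singleton k) (hZ1 t) (hY1int t)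
      rw [hkey, integral_congr_ae (show (fun ω => (μ⟦{ω' | kidx ω' = k} | MeasurableSpace.comap U inferInstance⟧) ω * (μ[Y1 t | MeasurableSpace.comap U inferInstance]) ω) =ᵐ[μ] fun ω => (μ⟦{ω' | kidx ω' = k} | MeasurableSpace.comap U inferInstance⟧) ω * (a (U ω) + lam t + tau (U ω)) from Filter.EventuallyEq.mul
        (Filter.EventuallyEq.refl _ _) (hmodel1 t)), hsplit k (lam t)]
    have hI0 : ∀ k t, ∫ ω in {ω' | kidx ω' = k}, Y0 t ω ∂μ = D k + π k * lam t := by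
      intro k t
      have hkey : ∫ ω in {ω' | kidx ω' = k}, Y0 t ω ∂μ
          = ∫ ω, (μ⟦{ω' | kidx ω' = k} | MeasurableSpace.comap U inferInstance⟧) ω * (μ[Y0 t | MeasurableSpace.comap U inferInstance]) ω ∂μ :=
        aux_condIndep_setIntegral hm' μ hkidx hgm hunconf
          (measurableSet_singleton k) (hZ0 t) (hY0int t)
      rw [hkey, integral_congr_ae (show (fun ω => (μ⟦{ω' | kidx ω' = k} | MeasurableSpace.comap U inferInstance⟧) ω * (μ[Y0 t | MeasurableSpace.comap U inferInstance]) ω) =ᵐ[μ] fun ω => (μ⟦{ω' | kidx ω' = k} | MeasurableSpace.comap U inferInstance⟧) ω * (a (U ω) + lam t) from Filter.EventuallyEq.mul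
        (Filter.EventuallyEq.refl _ _) (hmodel0 t)), hsplit0 k (lam t)]
    have hItau : ∀ k, ∫ ω in {ω' | kidx ω' = k}, tau (U ω) ∂μ = Tk k := by
      intro k
      rw [hTk]
      exact aux_setIntegral_eq_condexp_mul hm' μ (hSmeas k) hτaesm htauint
    -- integrability of the per-row observed-outcome functional
    have hFint : ∀ k, Integrable (fun ω => (1 / (T : ℝ)) * ∑ t,
        (Wmat k t * Y1 t ω + (1 - Wmat k t) * Y0 t ω) * w k t) μ := by
      intro k
      refine Integrable.const_mul ?_ _
      refine integrable_finset_sum _ fun t _ => ?_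
      have he : (fun ω => (Wmat k t * Y1 t ω + (1 - Wmat k t) * Y0 t ω) * w k t)
          = fun ω => (Wmat k t * w k t) * Y1 t ω + ((1 - Wmat k t) * w k t) * Y0 t ω := by
        funext ω; ring
      rw [he]
      exact ((hY1int t).const_mul _).add ((hY0int t).const_mul _)
    -- decompose LHS over the partition {kidx = k}
    have hLdecomp : (fun ω => (1 / (T : ℝ)) * ∑ t,
          (Wmat (kidx ω) t * Y1 t ω + (1 - Wmat (kidx ω) t) * Y0 t ω) * w (kidx ω) t)
        = fun ω => ∑ k, ({ω' | kidx ω' = k}).indicator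
            (fun ω' => (1 / (T : ℝ)) * ∑ t,
              (Wmat k t * Y1 t ω' + (1 - Wmat k t) * Y0 t ω') * w k t) ω := by
      funext ω
      rw [Finset.sum_eq_single (kidx ω)]
      · rw [Set.indicator_of_mem (show ω ∈ {ω' | kidx ω' = kidx ω} from rfl)]
      · intro b _ hb
        refine Set.indicator_of_notMem ?_ _
        intro hmem
        exact hb (Eq.symm (by exact hmem))
      · intro hmem; exact absurd (Finset.mem_univ _) hmem
    have hRdecomp : (fun ω => tau (U ω)
          * ((1 / (T : ℝ)) * ∑ t, w (kidx ω) t * Wmat (kidx ω) t))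
        = fun ω => ∑ k, ({ω' | kidx ω' = k}).indicator
            (fun ω' => tau (U ω') * ((1 / (T : ℝ)) * ∑ t, w k t * Wmat k t)) ω := by
      funext ω
      rw [Finset.sum_eq_single (kidx ω)]
      · rw [Set.indicator_of_mem (show ω ∈ {ω' | kidx ω' = kidx ω} from rfl)]
      · intro b _ hb
        refine Set.indicator_of_notMem ?_ _
        intro hmem
        exact hb (Eq.symm (by exact hmem))
      · intro hmem; exact absurd (Finset.mem_univ _) hmem
    -- per-row evaluation of the LHS set integral
    have hLk : ∀ k, ∫ ω in {ω' | kidx ω' = k}, ((1 / (T : ℝ)) * ∑ t,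
          (Wmat k t * Y1 t ω + (1 - Wmat k t) * Y0 t ω) * w k t) ∂μ
        = (1 / (T : ℝ)) * (∑ t, w k t * lam t) * π k
          + Tk k * ((1 / (T : ℝ)) * ∑ t, w k t * Wmat k t) := by
      intro k
      have hstep : ∀ t : Fin T, ∫ ω in {ω' | kidx ω' = k},
            (Wmat k t * Y1 t ω + (1 - Wmat k t) * Y0 t ω) * w k t ∂μ
          = (Wmat k t * w k t) * (D k + π k * lam t + Tk k)
            + ((1 - Wmat k t) * w k t) * (D k + π k * lam t) := by
        intro t
        calc ∫ ω in {ω' | kidx ω' = k}, (Wmat k t * Y1 t ω + (1 - Wmat k t) * Y0 t ω) * w k t ∂μ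
            = ∫ ω in {ω' | kidx ω' = k},
                ((Wmat k t * w k t) * Y1 t ω + ((1 - Wmat k t) * w k t) * Y0 t ω) ∂μ := by
              congr 1; funext ω; ring
          _ = (∫ ω in {ω' | kidx ω' = k}, (Wmat k t * w k t) * Y1 t ω ∂μ)
              + ∫ ω in {ω' | kidx ω' = k}, ((1 - Wmat k t) * w k t) * Y0 t ω ∂μ :=
              integral_add (((hY1int t).const_mul _).integrableOn)
                (((hY0int t).const_mul _).integrableOn)
          _ = (Wmat k t * w k t) * (∫ ω in {ω' | kidx ω' = k}, Y1 t ω ∂μ)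
              + ((1 - Wmat k t) * w k t) * ∫ ω in {ω' | kidx ω' = k}, Y0 t ω ∂μ := by
              rw [integral_const_mul, integral_const_mul]
          _ = (Wmat k t * w k t) * (D k + π k * lam t + Tk k)
              + ((1 - Wmat k t) * w k t) * (D k + π k * lam t) := by
              rw [hI1 k t, hI0 k t]
      rw [integral_const_mul, integral_finset_sum _ (fun t _ => by
        have he : (fun ω => (Wmat k t * Y1 t ω + (1 - Wmat k t) * Y0 t ω) * w k t)
            = fun ω => (Wmat k t * w k t) * Y1 t ω + ((1 - Wmat k t) * w k t) * Y0 t ω := by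
          funext ω; ring
        rw [he]
        exact (((hY1int t).const_mul _).add ((hY0int t).const_mul _)).integrableOn),
        Finset.sum_congr rfl fun t _ => hstep t]
      calc (1 / (T : ℝ)) * ∑ t, ((Wmat k t * w k t) * (D k + π k * lam t + Tk k)
              + ((1 - Wmat k t) * w k t) * (D k + π k * lam t))
          = (1 / (T : ℝ)) * (D k * ∑ t, w k t + π k * ∑ t, w k t * lam t
              + Tk k * ∑ t, w k t * Wmat k t) := by
            congr 1
            rw [Finset.mul_sum, Finset.mul_sum, Finset.mul_sum,
              ← Finset.sum_add_distrib, ← Finset.sum_add_distrib]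
            exact Finset.sum_congr rfl fun t _ => by ring
        _ = (1 / (T : ℝ)) * (∑ t, w k t * lam t) * π k
              + Tk k * ((1 / (T : ℝ)) * ∑ t, w k t * Wmat k t) := by
            rw [hw3 k]; ring
    -- the λ-terms vanish
    have hzero : ∑ k, (1 / (T : ℝ)) * (∑ t, w k t * lam t) * π k = 0 := by
      calc ∑ k, (1 / (T : ℝ)) * (∑ t, w k t * lam t) * π k
          = ∑ k, ∑ t, (1 / (T : ℝ)) * lam t * (π k * w k t) := by
            refine Finset.sum_congr rfl fun k _ => ?_
            rw [Finset.mul_sum, Finset.sum_mul]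
            exact Finset.sum_congr rfl fun t _ => by ring
        _ = ∑ t, ∑ k, (1 / (T : ℝ)) * lam t * (π k * w k t) := Finset.sum_comm
        _ = ∑ t, (1 / (T : ℝ)) * lam t * ∑ k, π k * w k t := by
            refine Finset.sum_congr rfl fun t _ => ?_
            rw [Finset.mul_sum]
        _ = 0 := by simp [hw4']
    -- put everything together
    calc ∫ ω, (1 / (T : ℝ)) * ∑ t,
          (Wmat (kidx ω) t * Y1 t ω + (1 - Wmat (kidx ω) t) * Y0 t ω) * w (kidx ω) t ∂μ
        = ∑ k, ∫ ω in {ω' | kidx ω' = k}, ((1 / (T : ℝ)) * ∑ t,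
            (Wmat k t * Y1 t ω + (1 - Wmat k t) * Y0 t ω) * w k t) ∂μ := by
          rw [hLdecomp, integral_finset_sum _ (fun k _ => (hFint k).indicator (hSmeas k))]
          exact Finset.sum_congr rfl fun k _ => integral_indicator (hSmeas k)
      _ = ∑ k, ((1 / (T : ℝ)) * (∑ t, w k t * lam t) * π k
            + Tk k * ((1 / (T : ℝ)) * ∑ t, w k t * Wmat k t)) :=
          Finset.sum_congr rfl fun k _ => hLk k
      _ = (∑ k, (1 / (T : ℝ)) * (∑ t, w k t * lam t) * π k)
            + ∑ k, Tk k * ((1 / (T : ℝ)) * ∑ t, w k t * Wmat k t) :=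
          Finset.sum_add_distrib
      _ = ∑ k, Tk k * ((1 / (T : ℝ)) * ∑ t, w k t * Wmat k t) := by
          rw [hzero, zero_add]
      _ = ∑ k, ∫ ω in {ω' | kidx ω' = k},
            tau (U ω) * ((1 / (T : ℝ)) * ∑ t, w k t * Wmat k t) ∂μ := by
          refine Finset.sum_congr rfl fun k _ => ?_
          rw [integral_mul_const, hItau k]
      _ = ∫ ω, tau (U ω) * ((1 / (T : ℝ)) * ∑ t, w (kidx ω) t * Wmat (kidx ω) t) ∂μ := by
          rw [hRdecomp, integral_finset_sum _ (fun k _ =>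
            ((htauint.mul_const _).indicator (hSmeas k)))]
          exact (Finset.sum_congr rfl fun k _ => integral_indicator (hSmeas k)).symm
end

section
/- Suppose W is conditionally independent of (Y(0), Y(1)) given U, and W is conditionally independent of U given S, where S = s(W) for a measurable map s. Then for every assignment value w̲, the indicator 1{W = w̲} is conditionally independent of (Y(0), Y(1)) given S; that is, for all measurable sets A₀, A₁, E[1{W = w̲}·1{Y(0) ∈ A₀, Y(1) ∈ A₁} | S] = E[1{W = w̲} | S]·E[1{Y(0) ∈ A₀, Y(1) ∈ A₁} | S] almost surely. -/
open MeasureTheory ProbabilityTheory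
open scoped BigOperators

open MeasureTheory ProbabilityTheory

section Aux
variable {Ω : Type*} {m m0 : MeasurableSpace Ω} {μ : @Measure Ω m0}

lemma du_ind_mul' (t : Set Ω) (f : Ω → ℝ) (ω : Ω) :
    t.indicator f ω = t.indicator (fun _ => (1:ℝ)) ω * f ω := by
  by_cases h : ω ∈ t <;> simp [Set.indicator_apply, h]

lemma du_pullout (hm : m ≤ m0) [IsFiniteMeasure μ] {f g : Ω → ℝ}
    (hf : StronglyMeasurable[m] f) (hg : Integrable g μ)
    (hfg : Integrable (fun ω => f ω * g ω) μ) :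
    ∫ ω, f ω * (μ[g|m]) ω ∂μ = ∫ ω, f ω * g ω ∂μ := by
  have h : μ[f * g|m] =ᵐ[μ] f * μ[g|m] := condExp_mul_of_stronglyMeasurable_left hf hfg hg
  calc ∫ ω, f ω * (μ[g|m]) ω ∂μ = ∫ ω, (μ[f * g|m]) ω ∂μ := (integral_congr_ae h).symm
    _ = ∫ ω, (f * g) ω ∂μ := integral_condExp hm
    _ = ∫ ω, f ω * g ω ∂μ := rfl

lemma du_ce_bound [IsProbabilityMeasure μ] (hm : m ≤ m0) {t : Set Ω}
    (ht : MeasurableSet[m0] t) :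
    ∀ᵐ ω ∂μ, ‖(μ[t.indicator (fun _ => (1:ℝ))|m]) ω‖ ≤ 1 := by
  have hint : Integrable (t.indicator (fun _ => (1:ℝ))) μ := (integrable_const 1).indicator ht
  have h0 : 0 ≤ᵐ[μ] μ[t.indicator (fun _ => (1:ℝ))|m] :=
    condExp_nonneg (Filter.Eventually.of_forall fun ω =>
      Set.indicator_nonneg (fun _ _ => zero_le_one) ω)
  have h1 : μ[t.indicator (fun _ => (1:ℝ))|m] ≤ᵐ[μ] μ[(fun _ => (1:ℝ))|m] :=
    condExp_mono hint (integrable_const 1)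
      (Filter.Eventually.of_forall fun ω => Set.indicator_le_self' (fun _ _ => zero_le_one) ω)
  have hc : μ[(fun _ => (1:ℝ))|m] = fun _ => (1:ℝ) := condExp_const hm 1
  filter_upwards [h0, h1] with ω hω0 hω1
  rw [hc] at hω1
  rw [Real.norm_eq_abs, abs_le]
  exact ⟨le_trans (by norm_num) hω0, hω1⟩

end Aux

/-- Abstract core of the design-unconfoundedness argument. -/
lemma du_core {Ω : Type*} {mS mU mW m0 : MeasurableSpace Ω}
    (μ : @Measure Ω m0) [IsProbabilityMeasure μ]
    (hmS : mS ≤ m0) (hmU : mU ≤ m0) (hmW : mW ≤ m0) (hmSW : mS ≤ mW)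
    (W1 B1 : Set Ω) (hW1 : MeasurableSet[m0] W1) (hB1 : MeasurableSet[m0] B1)
    (hW1W : MeasurableSet[mW] W1)
    (hunconf : ∀ t, MeasurableSet[mW] t →
      μ[(t ∩ B1).indicator (fun _ => (1:ℝ))|mU] =ᵐ[μ]
        fun ω => (μ[t.indicator (fun _ => (1:ℝ))|mU]) ω *
          (μ[B1.indicator (fun _ => (1:ℝ))|mU]) ω)
    (hsuff : ∀ t, MeasurableSet[mU] t →
      μ[(W1 ∩ t).indicator (fun _ => (1:ℝ))|mS] =ᵐ[μ]
        fun ω => (μ[W1.indicator (fun _ => (1:ℝ))|mS]) ω *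
          (μ[t.indicator (fun _ => (1:ℝ))|mS]) ω)
    (hconst : ∀ t, MeasurableSet[mS] t → ∃ c : ℝ,
      ∀ ω, t.indicator (fun _ => (1:ℝ)) ω * W1.indicator (fun _ => (1:ℝ)) ω
        = c * W1.indicator (fun _ => (1:ℝ)) ω) :
    μ[(fun ω => W1.indicator (fun _ => (1:ℝ)) ω * B1.indicator (fun _ => (1:ℝ)) ω)|mS]
      =ᵐ[μ] fun ω => (μ[W1.indicator (fun _ => (1:ℝ))|mS]) ω *
        (μ[B1.indicator (fun _ => (1:ℝ))|mS]) ω := by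
  set f1 : Ω → ℝ := W1.indicator (fun _ => (1:ℝ)) with hf1_def
  set f2 : Ω → ℝ := B1.indicator (fun _ => (1:ℝ)) with hf2_def
  set φ : Ω → ℝ := μ[f1|mS] with hφ_def
  set ψ : Ω → ℝ := μ[f2|mS] with hψ_def
  set gU : Ω → ℝ := μ[f2|mU] with hgU_def
  have intf1 : Integrable f1 μ := (integrable_const 1).indicator hW1
  have intf2 : Integrable f2 μ := (integrable_const 1).indicator hB1
  have normf1 : ∀ᵐ ω ∂μ, ‖f1 ω‖ ≤ 1 := Filter.Eventually.of_forall fun ω => by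
    by_cases h : ω ∈ W1 <;> simp [hf1_def, Set.indicator_apply, h]
  have normf2 : ∀ᵐ ω ∂μ, ‖f2 ω‖ ≤ 1 := Filter.Eventually.of_forall fun ω => by
    by_cases h : ω ∈ B1 <;> simp [hf2_def, Set.indicator_apply, h]
  have hφ_bd : ∀ᵐ ω ∂μ, ‖φ ω‖ ≤ 1 := du_ce_bound hmS hW1
  have hψ_bd : ∀ᵐ ω ∂μ, ‖ψ ω‖ ≤ 1 := du_ce_bound hmS hB1
  have hgU_bd : ∀ᵐ ω ∂μ, ‖gU ω‖ ≤ 1 := du_ce_bound hmU hB1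
  have hφ_sm : StronglyMeasurable[mS] φ := stronglyMeasurable_condExp
  have hψ_sm : StronglyMeasurable[mS] ψ := stronglyMeasurable_condExp
  have hgU_sm : StronglyMeasurable[mU] gU := stronglyMeasurable_condExp
  have hφ_asm : AEStronglyMeasurable f1 μ := intf1.aestronglyMeasurable
  have intφ : Integrable φ μ := integrable_condExp
  have intψ : Integrable ψ μ := integrable_condExp
  have intgU : Integrable gU μ := integrable_condExp
  have hφ_aesm : AEStronglyMeasurable φ μ := (hφ_sm.mono hmS).aestronglyMeasurable
  have hgU_aesm : AEStronglyMeasurable gU μ := (hgU_sm.mono hmU).aestronglyMeasurable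
  -- Step A: ∀ t ∈ mU, ∫ (W1 ∩ t).indicator = ∫ φ * t.indicator
  have stepA : ∀ t, MeasurableSet[mU] t →
      ∫ ω, (W1 ∩ t).indicator (fun _ => (1:ℝ)) ω ∂μ
        = ∫ ω, φ ω * t.indicator (fun _ => (1:ℝ)) ω ∂μ := by
    intro t ht
    have ht0 : MeasurableSet[m0] t := hmU t ht
    have intt : Integrable (t.indicator (fun _ => (1:ℝ))) μ := (integrable_const 1).indicator ht0
    calc ∫ ω, (W1 ∩ t).indicator (fun _ => (1:ℝ)) ω ∂μ
        = ∫ ω, (μ[(W1 ∩ t).indicator (fun _ => (1:ℝ))|mS]) ω ∂μ := (integral_condExp hmS).symm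
      _ = ∫ ω, φ ω * (μ[t.indicator (fun _ => (1:ℝ))|mS]) ω ∂μ := integral_congr_ae (hsuff t ht)
      _ = ∫ ω, φ ω * t.indicator (fun _ => (1:ℝ)) ω ∂μ := by
          refine du_pullout hmS hφ_sm intt ?_
          exact Integrable.bdd_mul intt hφ_aesm hφ_bd
  -- Step B: μ[f1|mU] = μ[φ|mU]
  have stepB : μ[f1|mU] =ᵐ[μ] μ[φ|mU] := by
    refine ae_eq_condExp_of_forall_setIntegral_eq hmU intφ
      (fun t _ _ => integrable_condExp.integrableOn) (fun t ht _ => ?_)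
      stronglyMeasurable_condExp.aestronglyMeasurable
    have ht0 : MeasurableSet[m0] t := hmU t ht
    calc ∫ ω in t, (μ[f1|mU]) ω ∂μ = ∫ ω in t, f1 ω ∂μ := setIntegral_condExp hmU intf1 ht
      _ = ∫ ω, t.indicator f1 ω ∂μ := (integral_indicator ht0).symm
      _ = ∫ ω, (W1 ∩ t).indicator (fun _ => (1:ℝ)) ω ∂μ := by
          rw [hf1_def, Set.indicator_indicator, Set.inter_comm t W1]
      _ = ∫ ω, φ ω * t.indicator (fun _ => (1:ℝ)) ω ∂μ := stepA t ht
      _ = ∫ ω, t.indicator φ ω ∂μ := by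
          refine integral_congr_ae (Filter.Eventually.of_forall fun ω => ?_)
          rw [du_ind_mul' t φ ω, mul_comm]
      _ = ∫ ω in t, φ ω ∂μ := integral_indicator ht0
  -- Step C: ∀ t ∈ mW, ∫_t f2 = ∫_t gU
  have stepC : ∀ t, MeasurableSet[mW] t →
      ∫ ω in t, f2 ω ∂μ = ∫ ω in t, gU ω ∂μ := by
    intro t ht
    have ht0 : MeasurableSet[m0] t := hmW t ht
    have intt : Integrable (t.indicator (fun _ => (1:ℝ))) μ := (integrable_const 1).indicator ht0
    calc ∫ ω in t, f2 ω ∂μ = ∫ ω, t.indicator f2 ω ∂μ := (integral_indicator ht0).symm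
      _ = ∫ ω, (t ∩ B1).indicator (fun _ => (1:ℝ)) ω ∂μ := by
          rw [hf2_def, Set.indicator_indicator]
      _ = ∫ ω, (μ[(t ∩ B1).indicator (fun _ => (1:ℝ))|mU]) ω ∂μ := (integral_condExp hmU).symm
      _ = ∫ ω, (μ[t.indicator (fun _ => (1:ℝ))|mU]) ω * gU ω ∂μ :=
          integral_congr_ae (hunconf t ht)
      _ = ∫ ω, gU ω * (μ[t.indicator (fun _ => (1:ℝ))|mU]) ω ∂μ := by
          refine integral_congr_ae (Filter.Eventually.of_forall fun ω => ?_); ring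
      _ = ∫ ω, gU ω * t.indicator (fun _ => (1:ℝ)) ω ∂μ := by
          refine du_pullout hmU hgU_sm intt ?_
          exact Integrable.bdd_mul intt hgU_aesm hgU_bd
      _ = ∫ ω, t.indicator gU ω ∂μ := by
          refine integral_congr_ae (Filter.Eventually.of_forall fun ω => ?_)
          rw [du_ind_mul' t gU ω, mul_comm]
      _ = ∫ ω in t, gU ω ∂μ := integral_indicator ht0
  -- Step D: μ[f2|mW] = μ[gU|mW]
  have stepD : μ[f2|mW] =ᵐ[μ] μ[gU|mW] := by
    refine ae_eq_condExp_of_forall_setIntegral_eq hmW intgU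
      (fun t _ _ => integrable_condExp.integrableOn) (fun t ht _ => ?_)
      stronglyMeasurable_condExp.aestronglyMeasurable
    calc ∫ ω in t, (μ[f2|mW]) ω ∂μ = ∫ ω in t, f2 ω ∂μ := setIntegral_condExp hmW intf2 ht
      _ = ∫ ω in t, gU ω ∂μ := stepC t ht
  -- key identity: ∫ φ * f2 = ∫ f1 * f2
  have hφ_smW : StronglyMeasurable[mW] φ := hφ_sm.mono hmSW
  have hkey : ∫ ω, φ ω * f2 ω ∂μ = ∫ ω, f1 ω * f2 ω ∂μ := by
    have e1 : ∫ ω, φ ω * f2 ω ∂μ = ∫ ω, φ ω * (μ[f2|mW]) ω ∂μ :=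
      (du_pullout hmW hφ_smW intf2 (Integrable.bdd_mul intf2 hφ_aesm hφ_bd)).symm
    have e2 : ∫ ω, φ ω * (μ[f2|mW]) ω ∂μ = ∫ ω, φ ω * (μ[gU|mW]) ω ∂μ := by
      refine integral_congr_ae ?_
      filter_upwards [stepD] with ω hω
      rw [hω]
    have e3 : ∫ ω, φ ω * (μ[gU|mW]) ω ∂μ = ∫ ω, φ ω * gU ω ∂μ :=
      du_pullout hmW hφ_smW intgU (Integrable.bdd_mul intgU hφ_aesm hφ_bd)
    have e4 : ∫ ω, φ ω * gU ω ∂μ = ∫ ω, gU ω * (μ[φ|mU]) ω ∂μ := by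
      rw [show (∫ ω, φ ω * gU ω ∂μ) = ∫ ω, gU ω * φ ω ∂μ from
        integral_congr_ae (Filter.Eventually.of_forall fun ω => mul_comm _ _)]
      exact (du_pullout hmU hgU_sm intφ (Integrable.bdd_mul intφ hgU_aesm hgU_bd)).symm
    have e5 : ∫ ω, gU ω * (μ[φ|mU]) ω ∂μ = ∫ ω, gU ω * (μ[f1|mU]) ω ∂μ := by
      refine integral_congr_ae ?_
      filter_upwards [stepB] with ω hω
      rw [hω]
    have e6 : ∫ ω, gU ω * (μ[f1|mU]) ω ∂μ = ∫ ω, gU ω * f1 ω ∂μ :=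
      du_pullout hmU hgU_sm intf1 (Integrable.bdd_mul intf1 hgU_aesm hgU_bd)
    have e7 : ∫ ω, gU ω * f1 ω ∂μ = ∫ ω, f1 ω * f2 ω ∂μ := by
      have h := stepC W1 hW1W
      calc ∫ ω, gU ω * f1 ω ∂μ = ∫ ω, W1.indicator gU ω ∂μ := by
            refine integral_congr_ae (Filter.Eventually.of_forall fun ω => ?_)
            rw [du_ind_mul' W1 gU ω, mul_comm]
        _ = ∫ ω in W1, gU ω ∂μ := integral_indicator hW1
        _ = ∫ ω in W1, f2 ω ∂μ := h.symm
        _ = ∫ ω, W1.indicator f2 ω ∂μ := (integral_indicator hW1).symm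
        _ = ∫ ω, f1 ω * f2 ω ∂μ :=
            integral_congr_ae (Filter.Eventually.of_forall fun ω => du_ind_mul' W1 f2 ω)
    rw [e1, e2, e3, e4, e5, e6, e7]
  -- Final step
  have hfprod_int : Integrable (fun ω => f1 ω * f2 ω) μ :=
    Integrable.bdd_mul intf2 intf1.aestronglyMeasurable normf1
  have hgprod_int : Integrable (fun ω => φ ω * ψ ω) μ :=
    Integrable.bdd_mul intψ hφ_aesm hφ_bd
  refine (ae_eq_condExp_of_forall_setIntegral_eq hmS hfprod_int
    (fun t _ _ => hgprod_int.integrableOn) (fun t ht _ => ?_)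
    ((hφ_sm.mul hψ_sm).aestronglyMeasurable)).symm
  obtain ⟨c, hc⟩ := hconst t ht
  have ht0 : MeasurableSet[m0] t := hmS t ht
  have hind_sm : StronglyMeasurable[mS] (t.indicator (fun _ => (1:ℝ))) :=
    stronglyMeasurable_const.indicator ht
  have hind_bd : ∀ ω, ‖t.indicator (fun _ => (1:ℝ)) ω‖ ≤ 1 := fun ω => by
    by_cases h : ω ∈ t <;> simp [Set.indicator_apply, h]
  have hindφ_aesm : AEStronglyMeasurable (fun ω => t.indicator (fun _ => (1:ℝ)) ω * φ ω) μ :=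
    ((hind_sm.mul hφ_sm).mono hmS).aestronglyMeasurable
  have hindφ_bd : ∀ᵐ ω ∂μ, ‖t.indicator (fun _ => (1:ℝ)) ω * φ ω‖ ≤ 1 := by
    filter_upwards [hφ_bd] with ω hω
    rw [norm_mul]
    exact mul_le_one₀ (hind_bd ω) (norm_nonneg _) hω
  -- a.e. identity: 1_t * φ = c * φ
  have haeid : (fun ω => t.indicator (fun _ => (1:ℝ)) ω * φ ω) =ᵐ[μ] fun ω => c * φ ω := by
    have p1 : μ[(fun ω => t.indicator (fun _ => (1:ℝ)) ω * f1 ω)|mS]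
        =ᵐ[μ] fun ω => t.indicator (fun _ => (1:ℝ)) ω * φ ω := by
      have := condExp_mul_of_stronglyMeasurable_left (μ := μ) hind_sm
        (Integrable.bdd_mul intf1 ((hind_sm.mono hmS).aestronglyMeasurable)
          (Filter.Eventually.of_forall hind_bd)) intf1
      exact this
    have p2 : (fun ω => t.indicator (fun _ => (1:ℝ)) ω * f1 ω) = fun ω => c * f1 ω :=
      funext hc
    have p3 : μ[(fun ω => c * f1 ω)|mS] =ᵐ[μ] fun ω => c * φ ω := by
      have h := condExp_smul (μ := μ) (m := mS) c f1
      have e1 : (c • f1) = fun ω => c * f1 ω := by funext ω; simp [smul_eq_mul]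
      have e2 : (c • μ[f1|mS]) = fun ω => c * (μ[f1|mS]) ω := by funext ω; simp [smul_eq_mul]
      rw [e1, e2] at h
      exact h
    exact p1.symm.trans (p2 ▸ p3)
  calc ∫ ω in t, φ ω * ψ ω ∂μ
      = ∫ ω, t.indicator (fun ω' => φ ω' * ψ ω') ω ∂μ := (integral_indicator ht0).symm
    _ = ∫ ω, (t.indicator (fun _ => (1:ℝ)) ω * φ ω) * ψ ω ∂μ := by
        refine integral_congr_ae (Filter.Eventually.of_forall fun ω => ?_)
        beta_reduce
        rw [du_ind_mul' t _ ω, mul_assoc]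
    _ = ∫ ω, (t.indicator (fun _ => (1:ℝ)) ω * φ ω) * f2 ω ∂μ :=
        du_pullout hmS (hind_sm.mul hφ_sm) intf2
          (Integrable.bdd_mul intf2 hindφ_aesm hindφ_bd)
    _ = ∫ ω, (c * φ ω) * f2 ω ∂μ := by
        refine integral_congr_ae ?_
        filter_upwards [haeid] with ω hω
        rw [hω]
    _ = c * ∫ ω, φ ω * f2 ω ∂μ := by
        simp_rw [mul_assoc]
        exact integral_const_mul c _
    _ = c * ∫ ω, f1 ω * f2 ω ∂μ := by rw [hkey]
    _ = ∫ ω, c * (f1 ω * f2 ω) ∂μ := (integral_const_mul c _).symm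
    _ = ∫ ω, (t.indicator (fun _ => (1:ℝ)) ω * f1 ω) * f2 ω ∂μ := by
        refine integral_congr_ae (Filter.Eventually.of_forall fun ω => ?_)
        beta_reduce
        rw [← mul_assoc, ← hc ω]
    _ = ∫ ω, t.indicator (fun ω' => f1 ω' * f2 ω') ω ∂μ := by
        refine integral_congr_ae (Filter.Eventually.of_forall fun ω => ?_)
        beta_reduce
        rw [du_ind_mul' t (fun ω' => f1 ω' * f2 ω') ω]
        ring
    _ = ∫ ω in t, f1 ω * f2 ω ∂μ := integral_indicator ht0


/-- **Proposition 2 (feasible unconfoundedness).**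
If `W ⫫ (Y(0), Y(1)) | U` (latent unconfoundedness) and `W ⫫ U | S` with
`S = s(W)` (sufficiency), then for every assignment value `w̲`, the indicator
`1{W = w̲}` is conditionally independent of `(Y(0), Y(1))` given `S`: for all
measurable `A₀, A₁`,
`E[1{W = w̲}·1{Y(0) ∈ A₀, Y(1) ∈ A₁} | S] = E[1{W = w̲} | S]·E[1{Y(0) ∈ A₀, Y(1) ∈ A₁} | S]` a.s. -/
theorem design_unconfoundedness
    {Ωs 𝓤 𝕊 : Type*} [MeasurableSpace Ωs] [StandardBorelSpace Ωs] [Nonempty Ωs]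
    [MeasurableSpace 𝓤] [MeasurableSpace 𝕊]
    (μ : Measure Ωs) [IsProbabilityMeasure μ]
    (T : ℕ)
    -- the assignment, a random vector with values in {0,1}^T
    (W : Ωs → Fin T → Bool) (hW : Measurable W)
    -- potential outcome vectors under control and treatment
    (Y0 Y1 : Ωs → Fin T → ℝ) (hY0 : Measurable Y0) (hY1 : Measurable Y1)
    -- the unobserved confounder
    (U : Ωs → 𝓤) (hU : Measurable U)
    -- the sufficient statistic S = s(W)
    (s : (Fin T → Bool) → 𝕊) (hs : Measurable s)
    -- Latent Unconfoundedness: W ⫫ (Y(0), Y(1)) | U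
    (hunconf : CondIndepFun (MeasurableSpace.comap U inferInstance) hU.comap_le
      W (fun ω => (Y0 ω, Y1 ω)) μ)
    -- Sufficiency: W ⫫ U | S
    (hsuff : CondIndepFun (MeasurableSpace.comap (fun ω => s (W ω)) inferInstance)
      ((hs.comp hW).comap_le) W U μ) :
    ∀ (wbar : Fin T → Bool) (A0 A1 : Set (Fin T → ℝ)),
      MeasurableSet A0 → MeasurableSet A1 →
      μ[(fun ω => (if W ω = wbar then (1 : ℝ) else 0) *
            Set.indicator {ω' : Ωs | Y0 ω' ∈ A0 ∧ Y1 ω' ∈ A1} (fun _ => (1 : ℝ)) ω) |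
          MeasurableSpace.comap (fun ω => s (W ω)) inferInstance]
        =ᵐ[μ]
      (fun ω =>
        ((μ[(fun ω' => if W ω' = wbar then (1 : ℝ) else 0) |
            MeasurableSpace.comap (fun ω'' => s (W ω'')) inferInstance]) ω) *
        ((μ[(fun ω' => Set.indicator {ω'' : Ωs | Y0 ω'' ∈ A0 ∧ Y1 ω'' ∈ A1}
              (fun _ => (1 : ℝ)) ω') |
            MeasurableSpace.comap (fun ω'' => s (W ω'')) inferInstance]) ω)) := by
  intro wbar A0 A1 hA0 hA1
  have hYm : Measurable (fun ω => (Y0 ω, Y1 ω)) := hY0.prodMk hY1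
  have hwsing : MeasurableSet ({wbar} : Set (Fin T → Bool)) := measurableSet_singleton wbar
  have hBeq : {ω' : Ωs | Y0 ω' ∈ A0 ∧ Y1 ω' ∈ A1}
      = (fun ω => (Y0 ω, Y1 ω)) ⁻¹' (A0 ×ˢ A1) := rfl
  have hWeq : (fun ω => if W ω = wbar then (1:ℝ) else 0)
      = (W ⁻¹' {wbar}).indicator (fun _ => (1:ℝ)) := by
    funext ω
    by_cases h : W ω = wbar <;> simp [Set.indicator_apply, h]
  have hF : (fun ω => (if W ω = wbar then (1:ℝ) else 0) *
        ((fun ω => (Y0 ω, Y1 ω)) ⁻¹' (A0 ×ˢ A1)).indicator (fun _ => (1:ℝ)) ω)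
      = fun ω => (W ⁻¹' {wbar}).indicator (fun _ => (1:ℝ)) ω *
        ((fun ω => (Y0 ω, Y1 ω)) ⁻¹' (A0 ×ˢ A1)).indicator (fun _ => (1:ℝ)) ω := by
    funext ω
    by_cases h : W ω = wbar <;> simp [Set.indicator_apply, h]
  rw [hBeq, hF, hWeq]
  have hW1 : MeasurableSet (W ⁻¹' {wbar}) := hW hwsing
  have hB1 : MeasurableSet ((fun ω => (Y0 ω, Y1 ω)) ⁻¹' (A0 ×ˢ A1)) := hYm (hA0.prod hA1)
  have hW1W : MeasurableSet[MeasurableSpace.comap W inferInstance] (W ⁻¹' {wbar}) :=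
    ⟨{wbar}, hwsing, rfl⟩
  have hmSW : MeasurableSpace.comap (fun ω => s (W ω)) inferInstance
      ≤ MeasurableSpace.comap W inferInstance := by
    have h1 : (MeasurableSpace.comap s inferInstance).comap W
        = MeasurableSpace.comap (fun ω => s (W ω)) inferInstance :=
      MeasurableSpace.comap_comp
    rw [← h1]
    exact MeasurableSpace.comap_mono hs.comap_le
  have hunconf' : ∀ t, MeasurableSet[MeasurableSpace.comap W inferInstance] t →
      μ[(t ∩ (fun ω => (Y0 ω, Y1 ω)) ⁻¹' (A0 ×ˢ A1)).indicator (fun _ => (1:ℝ))|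
          MeasurableSpace.comap U inferInstance] =ᵐ[μ]
        fun ω => (μ[t.indicator (fun _ => (1:ℝ))|MeasurableSpace.comap U inferInstance]) ω *
          (μ[((fun ω => (Y0 ω, Y1 ω)) ⁻¹' (A0 ×ˢ A1)).indicator (fun _ => (1:ℝ))|
            MeasurableSpace.comap U inferInstance]) ω := by
    rintro t ⟨V, hV, rfl⟩
    exact (condIndepFun_iff_condExp_inter_preimage_eq_mul hW hYm).mp hunconf V (A0 ×ˢ A1)
      hV (hA0.prod hA1)
  have hsuff' : ∀ t, MeasurableSet[MeasurableSpace.comap U inferInstance] t →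
      μ[((W ⁻¹' {wbar}) ∩ t).indicator (fun _ => (1:ℝ))|
          MeasurableSpace.comap (fun ω => s (W ω)) inferInstance] =ᵐ[μ]
        fun ω => (μ[(W ⁻¹' {wbar}).indicator (fun _ => (1:ℝ))|
            MeasurableSpace.comap (fun ω => s (W ω)) inferInstance]) ω *
          (μ[t.indicator (fun _ => (1:ℝ))|
            MeasurableSpace.comap (fun ω => s (W ω)) inferInstance]) ω := by
    rintro t ⟨E, hE, rfl⟩
    exact (condIndepFun_iff_condExp_inter_preimage_eq_mul hW hU).mp hsuff {wbar} E hwsing hE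
  have hconst : ∀ t, MeasurableSet[MeasurableSpace.comap (fun ω => s (W ω)) inferInstance] t →
      ∃ c : ℝ, ∀ ω, t.indicator (fun _ => (1:ℝ)) ω *
          (W ⁻¹' {wbar}).indicator (fun _ => (1:ℝ)) ω
        = c * (W ⁻¹' {wbar}).indicator (fun _ => (1:ℝ)) ω := by
    rintro t ⟨D, hD, rfl⟩
    by_cases hmem : s wbar ∈ D
    · refine ⟨1, fun ω => ?_⟩
      by_cases h : W ω = wbar
      · simp [Set.indicator_apply, Set.mem_preimage, h, hmem]
      · simp [Set.indicator_apply, h]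
    · refine ⟨0, fun ω => ?_⟩
      by_cases h : W ω = wbar
      · simp [Set.indicator_apply, Set.mem_preimage, h, hmem]
      · simp [Set.indicator_apply, h]
  exact du_core μ (Measurable.comap_le (hs.comp hW)) hU.comap_le hW.comap_le hmSW
    (W ⁻¹' {wbar}) ((fun ω => (Y0 ω, Y1 ω)) ⁻¹' (A0 ×ˢ A1)) hW1 hB1 hW1W
    hunconf' hsuff' hconst
end

section
/- Suppose Assumptions (No Dynamics), (Latent Unconfoundedness), (Latent Overlap) and (Sufficiency) hold, and let ω ∈ 𝕎_design. Then τ(ω) := E[(1/T)·Σ_{t=1}^T Y_t · ω_{k(i)t}] = Σ_{σ,t} c_{σt} · E[τ_t | S = σ], where c_{σt} := (1/T)·Σ_{k : s(k)=σ} π_k ω_{kt} 𝐖_{kt} ≥ 0 and Σ_{σ,t} c_{σt} = 1; in particular τ(ω) is a convex combination of conditional average treatment effects. -/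
open MeasureTheory ProbabilityTheory
open scoped BigOperators

lemma design_aux_ind {Ω : Type*} [MeasurableSpace Ω] (μ : Measure Ω) [IsFiniteMeasure μ]
    {A : Set Ω} (hA : MeasurableSet A) :
    ∫ x, A.indicator (fun _ => (1 : ℝ)) x ∂μ = (μ A).toReal :=
  integral_indicator_one hA

lemma design_aux_prod {Ω β γ : Type*} [mΩ : MeasurableSpace Ω] [StandardBorelSpace Ω]
    [MeasurableSpace β] [MeasurableSpace γ]
    (μ : Measure Ω) [IsProbabilityMeasure μ]
    {f : Ω → β} {g : Ω → γ} (hf : Measurable f) (hg : Measurable g)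
    {s : Set β} {t : Set γ} (hs : MeasurableSet s) (ht : MeasurableSet t)
    {m' : MeasurableSpace Ω} (hm' : m' ≤ mΩ)
    (h : CondIndepFun m' hm' f g μ) :
    (μ (f ⁻¹' s ∩ g ⁻¹' t)).toReal
      = ∫ ω, (μ⟦f ⁻¹' s | m'⟧) ω * (μ⟦g ⁻¹' t | m'⟧) ω ∂μ := by
  have hp := (condIndepFun_iff_condExp_inter_preimage_eq_mul (μ := μ) hf hg).mp h s t hs ht
  rw [← integral_congr_ae hp, integral_condExp hm']
  exact (@design_aux_ind Ω mΩ μ _ _ ((hf hs).inter (hg ht))).symm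

/-- **Proposition 3 (Identification through design).**
Under No Dynamics, Latent Unconfoundedness, Latent Overlap and Sufficiency
(`W ⫫ U | S` with `S = s(W)` known), for any weights `ω ∈ 𝕎_design` the estimand
`τ(ω) = E[(1/T)·Σ_t Y_t·ω_{k(i)t}]` equals `Σ_{σ,t} c_{σt}·E[τ_t | S = σ]` where
`c_{σt} = (1/T)·Σ_{k : s(k)=σ} π_k ω_{kt} 𝐖_{kt} ≥ 0` and `Σ_{σ,t} c_{σt} = 1`. -/
theorem design_identification
    {Ωs 𝓤 𝕊 : Type*} [MeasurableSpace Ωs] [StandardBorelSpace Ωs] [Nonempty Ωs]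
    [MeasurableSpace 𝓤] [MeasurableSpace 𝕊] [Fintype 𝕊] [DecidableEq 𝕊]
    (μ : Measure Ωs) [IsProbabilityMeasure μ]
    (T K : ℕ) (hT : 0 < T) (hK : 0 < K)
    -- the assignment support: `K` distinct rows with entries in {0,1}
    (Wmat : Fin K → Fin T → ℝ)
    (hW01 : ∀ k t, Wmat k t = 0 ∨ Wmat k t = 1)
    (hWdistinct : Function.Injective Wmat)
    -- the realized assignment, identified by its (random) row index `k(i)`
    (kidx : Ωs → Fin K) (hkidx : Measurable kidx)
    (hπpos : ∀ k, 0 < (μ {ω | kidx ω = k}).toReal)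
    -- potential outcomes, integrable
    (Y0 Y1 : Fin T → Ωs → ℝ)
    (hY0meas : ∀ t, Measurable (Y0 t)) (hY1meas : ∀ t, Measurable (Y1 t))
    (hY0int : ∀ t, Integrable (Y0 t) μ) (hY1int : ∀ t, Integrable (Y1 t) μ)
    -- the unobserved confounder
    (U : Ωs → 𝓤) (hU : Measurable U)
    -- Latent Unconfoundedness: W ⫫ {Y_t(w)} | U
    (hunconf : CondIndepFun (MeasurableSpace.comap U inferInstance) hU.comap_le
      kidx (fun ω => ((fun t => Y0 t ω), (fun t => Y1 t ω))) μ)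
    -- Latent Overlap: a.s. no value of the assignment has conditional probability one given U
    (hoverlap : ∀ k, ∀ᵐ ω ∂μ,
      (μ[Set.indicator {ω' | kidx ω' = k} (fun _ => (1 : ℝ)) |
        MeasurableSpace.comap U inferInstance]) ω < 1)
    -- Sufficiency: the known statistic S = s(W) satisfies W ⫫ U | S
    (s : Fin K → 𝕊) (hS : Measurable (fun ω => s (kidx ω)))
    (hsuff : CondIndepFun (MeasurableSpace.comap (fun ω => s (kidx ω)) inferInstance)
      hS.comap_le kidx U μ)
    -- weights ω ∈ 𝕎_design
    (w : Fin K → Fin T → ℝ)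
    (hw1 : (1 / (T : ℝ)) * ∑ k, ∑ t,
      (μ {ω | kidx ω = k}).toReal * w k t * Wmat k t = 1)
    (hw2 : ∀ (σ : 𝕊) (t : Fin T),
      0 ≤ ∑ k ∈ Finset.univ.filter (fun k => s k = σ),
        (μ {ω | kidx ω = k}).toReal * w k t * Wmat k t)
    (hw3 : ∀ (σ : 𝕊) (t : Fin T),
      ∑ k ∈ Finset.univ.filter (fun k => s k = σ),
        (μ {ω | kidx ω = k}).toReal * w k t = 0) :
    -- c_{σt} ≥ 0, Σ_{σ,t} c_{σt} = 1, and τ(ω) = Σ_{σ,t} c_{σt}·E[τ_t | S = σ]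
    (∀ (σ : 𝕊) (t : Fin T),
      0 ≤ (1 / (T : ℝ)) * ∑ k ∈ Finset.univ.filter (fun k => s k = σ),
        (μ {ω | kidx ω = k}).toReal * w k t * Wmat k t) ∧
    (∑ σ : 𝕊, ∑ t, (1 / (T : ℝ)) * ∑ k ∈ Finset.univ.filter (fun k => s k = σ),
        (μ {ω | kidx ω = k}).toReal * w k t * Wmat k t = 1) ∧
    (∫ ω, (1 / (T : ℝ)) * ∑ t,
        (Wmat (kidx ω) t * Y1 t ω + (1 - Wmat (kidx ω) t) * Y0 t ω) * w (kidx ω) t ∂μ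
      = ∑ σ : 𝕊, ∑ t,
          ((1 / (T : ℝ)) * ∑ k ∈ Finset.univ.filter (fun k => s k = σ),
            (μ {ω | kidx ω = k}).toReal * w k t * Wmat k t) *
          ((∫ ω in {ω | s (kidx ω) = σ}, (Y1 t ω - Y0 t ω) ∂μ) /
            (μ {ω | s (kidx ω) = σ}).toReal)) := by
  classical
  have hTpos : (0:ℝ) < T := by exact_mod_cast hT
  -- part 1
  refine ⟨fun σ t => mul_nonneg (by positivity) (hw2 σ t), ?_, ?_⟩
  -- part 2
  · calc ∑ σ : 𝕊, ∑ t, (1 / (T : ℝ)) * ∑ k ∈ Finset.univ.filter (fun k => s k = σ),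
        (μ {ω | kidx ω = k}).toReal * w k t * Wmat k t
        = (1 / (T : ℝ)) * ∑ σ : 𝕊, ∑ k ∈ Finset.univ.filter (fun k => s k = σ), ∑ t,
            (μ {ω | kidx ω = k}).toReal * w k t * Wmat k t := by
          rw [Finset.mul_sum]
          refine Finset.sum_congr rfl fun σ _ => ?_
          rw [← Finset.mul_sum, Finset.sum_comm]
      _ = (1 / (T : ℝ)) * ∑ k, ∑ t,
            (μ {ω | kidx ω = k}).toReal * w k t * Wmat k t := by
          rw [Finset.sum_fiberwise_of_maps_to (fun k _ => Finset.mem_univ (s k))]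
      _ = 1 := hw1
  -- part 3
  · have hB1 : ∀ B1 : Set (Fin K), MeasurableSet B1 := fun B1 => B1.toFinite.measurableSet
    have hAk : ∀ k : Fin K, MeasurableSet {ω | kidx ω = k} := fun k => hkidx (hB1 {k})
    have hAs : ∀ σ : 𝕊, MeasurableSet {ω | s (kidx ω) = σ} :=
      fun σ => hkidx (hB1 {k | s k = σ})
    set YP : Ωs → (Fin T → ℝ) × (Fin T → ℝ) :=
      fun ω => ((fun t => Y0 t ω), (fun t => Y1 t ω)) with hYPdef
    have hYP : Measurable YP :=
      Measurable.prod (measurable_pi_lambda _ fun t => hY0meas t)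
        (measurable_pi_lambda _ fun t => hY1meas t)
    have hmS : MeasurableSpace.comap (fun ω => s (kidx ω)) inferInstance
        ≤ ‹MeasurableSpace Ωs› := hS.comap_le
    have hmU : MeasurableSpace.comap U inferInstance ≤ ‹MeasurableSpace Ωs› := hU.comap_le
    set c : Fin K → ℝ :=
      fun k => (μ {ω | kidx ω = k}).toReal / (μ {ω | s (kidx ω) = s k}).toReal with hcdef
    have hPpos : ∀ k : Fin K, 0 < (μ {ω | s (kidx ω) = s k}).toReal := by
      intro k
      refine lt_of_lt_of_le (hπpos k)
        (ENNReal.toReal_mono (measure_ne_top μ _) (measure_mono ?_))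
      intro ω hω
      have h1 : kidx ω = k := hω
      simp only [Set.mem_setOf_eq, h1]
    have hc0 : ∀ k, 0 ≤ c k := fun k => div_nonneg ENNReal.toReal_nonneg ENNReal.toReal_nonneg
    have hAkeq : ∀ k : Fin K, kidx ⁻¹' {k} = {ω | kidx ω = k} := fun k => rfl
    have hAseq : ∀ k : Fin K, kidx ⁻¹' {k' | s k' = s k} = {ω | s (kidx ω) = s k} :=
      fun k => rfl
    have stepS : ∀ (B1 : Set (Fin K)) (C : Set 𝓤), MeasurableSet C →
        (μ (kidx ⁻¹' B1 ∩ U ⁻¹' C)).toReal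
          = ∫ ω, (μ⟦kidx ⁻¹' B1 | MeasurableSpace.comap (fun ω => s (kidx ω)) inferInstance⟧) ω
              * (μ⟦U ⁻¹' C | MeasurableSpace.comap (fun ω => s (kidx ω)) inferInstance⟧) ω ∂μ :=
      fun B1 C hC => design_aux_prod μ hkidx hU (hB1 B1) hC hmS hsuff
    have stepU : ∀ (B1 : Set (Fin K)) (B : Set ((Fin T → ℝ) × (Fin T → ℝ))), MeasurableSet B →
        (μ (kidx ⁻¹' B1 ∩ YP ⁻¹' B)).toReal
          = ∫ ω, (μ⟦kidx ⁻¹' B1 | MeasurableSpace.comap U inferInstance⟧) ω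
              * (μ⟦YP ⁻¹' B | MeasurableSpace.comap U inferInstance⟧) ω ∂μ :=
      fun B1 B hB => design_aux_prod μ hkidx hYP (hB1 B1) hB hmU hunconf
    have claimA : ∀ k : Fin K,
        (μ⟦{ω | kidx ω = k} | MeasurableSpace.comap (fun ω => s (kidx ω)) inferInstance⟧)
          =ᵐ[μ] fun ω => c k *
            (μ⟦{ω | s (kidx ω) = s k} |
              MeasurableSpace.comap (fun ω => s (kidx ω)) inferInstance⟧) ω := by
      intro k
      refine (ae_eq_condExp_of_forall_setIntegral_eq hmS
        ((integrable_const (1:ℝ)).indicator (hAk k))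
        (fun A hA hμA => (integrable_condExp.const_mul (c k)).integrableOn)
        (fun A hA hμA => ?_)
        ((stronglyMeasurable_condExp.const_mul (c k)).aestronglyMeasurable)).symm
      obtain ⟨C, hC, rfl⟩ := hA
      rw [integral_const_mul,
        setIntegral_condExp hmS ((integrable_const (1:ℝ)).indicator (hAs (s k))) ⟨C, hC, rfl⟩,
        setIntegral_indicator (hAs (s k)), setIntegral_indicator (hAk k)]
      simp only [setIntegral_const, smul_eq_mul, mul_one]
      by_cases hmem : s k ∈ C
      · have h1 : (fun ω => s (kidx ω)) ⁻¹' C ∩ {ω | s (kidx ω) = s k}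
            = {ω | s (kidx ω) = s k} := by
          refine Set.inter_eq_right.mpr fun ω hω => ?_
          have h2 : s (kidx ω) = s k := hω
          exact Set.mem_preimage.mpr (h2 ▸ hmem)
        have h2 : (fun ω => s (kidx ω)) ⁻¹' C ∩ {ω | kidx ω = k} = {ω | kidx ω = k} := by
          refine Set.inter_eq_right.mpr fun ω hω => ?_
          have h3 : kidx ω = k := hω
          exact Set.mem_preimage.mpr (by rw [h3]; exact hmem)
        rw [h1, h2, hcdef]
        exact div_mul_cancel₀ _ (ne_of_gt (hPpos k))
      · have h1 : (fun ω => s (kidx ω)) ⁻¹' C ∩ {ω | s (kidx ω) = s k} = ∅ := by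
          refine Set.eq_empty_iff_forall_notMem.mpr fun ω hω => ?_
          have h2 : s (kidx ω) = s k := hω.2
          exact hmem (h2 ▸ hω.1)
        have h2 : (fun ω => s (kidx ω)) ⁻¹' C ∩ {ω | kidx ω = k} = ∅ := by
          refine Set.eq_empty_iff_forall_notMem.mpr fun ω hω => ?_
          have h3 : kidx ω = k := hω.2
          have h4 : s (kidx ω) ∈ C := hω.1
          rw [h3] at h4
          exact hmem h4
        rw [h1, h2]
        simp
    have claimB : ∀ k : Fin K,
        (μ⟦{ω | kidx ω = k} | MeasurableSpace.comap U inferInstance⟧)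
          =ᵐ[μ] fun ω => c k *
            (μ⟦{ω | s (kidx ω) = s k} | MeasurableSpace.comap U inferInstance⟧) ω := by
      intro k
      refine (ae_eq_condExp_of_forall_setIntegral_eq hmU
        ((integrable_const (1:ℝ)).indicator (hAk k))
        (fun A hA hμA => (integrable_condExp.const_mul (c k)).integrableOn)
        (fun A hA hμA => ?_)
        ((stronglyMeasurable_condExp.const_mul (c k)).aestronglyMeasurable)).symm
      obtain ⟨C, hC, rfl⟩ := hA
      rw [integral_const_mul,
        setIntegral_condExp hmU ((integrable_const (1:ℝ)).indicator (hAs (s k))) ⟨C, hC, rfl⟩,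
        setIntegral_indicator (hAs (s k)), setIntegral_indicator (hAk k)]
      simp only [setIntegral_const, smul_eq_mul, mul_one]
      have e1 := stepS {k} C hC
      rw [hAkeq k] at e1
      have e2 := stepS {k' | s k' = s k} C hC
      rw [hAseq k] at e2
      have hcongr : ∫ ω, (μ⟦{ω | kidx ω = k} |
              MeasurableSpace.comap (fun ω => s (kidx ω)) inferInstance⟧) ω
            * (μ⟦U ⁻¹' C | MeasurableSpace.comap (fun ω => s (kidx ω)) inferInstance⟧) ω ∂μ
          = c k * ∫ ω, (μ⟦{ω | s (kidx ω) = s k} |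
              MeasurableSpace.comap (fun ω => s (kidx ω)) inferInstance⟧) ω
            * (μ⟦U ⁻¹' C | MeasurableSpace.comap (fun ω => s (kidx ω)) inferInstance⟧) ω ∂μ := by
        rw [← integral_const_mul]
        refine integral_congr_ae ((claimA k).mono fun ω hω => ?_)
        simp only [hω]
        ring
      calc c k * (μ (U ⁻¹' C ∩ {ω | s (kidx ω) = s k})).toReal
          = c k * (μ ({ω | s (kidx ω) = s k} ∩ U ⁻¹' C)).toReal := by rw [Set.inter_comm]
        _ = c k * ∫ ω, (μ⟦{ω | s (kidx ω) = s k} |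
              MeasurableSpace.comap (fun ω => s (kidx ω)) inferInstance⟧) ω
            * (μ⟦U ⁻¹' C | MeasurableSpace.comap (fun ω => s (kidx ω)) inferInstance⟧) ω ∂μ := by
            rw [e2]
        _ = ∫ ω, (μ⟦{ω | kidx ω = k} |
              MeasurableSpace.comap (fun ω => s (kidx ω)) inferInstance⟧) ω
            * (μ⟦U ⁻¹' C | MeasurableSpace.comap (fun ω => s (kidx ω)) inferInstance⟧) ω ∂μ :=
            hcongr.symm
        _ = (μ ({ω | kidx ω = k} ∩ U ⁻¹' C)).toReal := e1.symm
        _ = (μ (U ⁻¹' C ∩ {ω | kidx ω = k})).toReal := by rw [Set.inter_comm]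
    have keyset : ∀ (k : Fin K) (B : Set ((Fin T → ℝ) × (Fin T → ℝ))), MeasurableSet B →
        (μ (YP ⁻¹' B ∩ {ω | kidx ω = k})).toReal
          = c k * (μ (YP ⁻¹' B ∩ {ω | s (kidx ω) = s k})).toReal := by
      intro k B hB
      have e1 := stepU {k} B hB
      rw [hAkeq k] at e1
      have e2 := stepU {k' | s k' = s k} B hB
      rw [hAseq k] at e2
      have hcongr : ∫ ω, (μ⟦{ω | kidx ω = k} | MeasurableSpace.comap U inferInstance⟧) ω
            * (μ⟦YP ⁻¹' B | MeasurableSpace.comap U inferInstance⟧) ω ∂μ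
          = c k * ∫ ω, (μ⟦{ω | s (kidx ω) = s k} | MeasurableSpace.comap U inferInstance⟧) ω
            * (μ⟦YP ⁻¹' B | MeasurableSpace.comap U inferInstance⟧) ω ∂μ := by
        rw [← integral_const_mul]
        refine integral_congr_ae ((claimB k).mono fun ω hω => ?_)
        simp only [hω]
        ring
      calc (μ (YP ⁻¹' B ∩ {ω | kidx ω = k})).toReal
          = (μ ({ω | kidx ω = k} ∩ YP ⁻¹' B)).toReal := by rw [Set.inter_comm]
        _ = ∫ ω, (μ⟦{ω | kidx ω = k} | MeasurableSpace.comap U inferInstance⟧) ω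
            * (μ⟦YP ⁻¹' B | MeasurableSpace.comap U inferInstance⟧) ω ∂μ := e1
        _ = c k * ∫ ω, (μ⟦{ω | s (kidx ω) = s k} | MeasurableSpace.comap U inferInstance⟧) ω
            * (μ⟦YP ⁻¹' B | MeasurableSpace.comap U inferInstance⟧) ω ∂μ := hcongr
        _ = c k * (μ ({ω | s (kidx ω) = s k} ∩ YP ⁻¹' B)).toReal := by rw [e2]
        _ = c k * (μ (YP ⁻¹' B ∩ {ω | s (kidx ω) = s k})).toReal := by rw [Set.inter_comm]
    have keyfun : ∀ (k : Fin K) (φ : (Fin T → ℝ) × (Fin T → ℝ) → ℝ), Measurable φ →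
        ∫ ω in {ω | kidx ω = k}, φ (YP ω) ∂μ
          = c k * ∫ ω in {ω | s (kidx ω) = s k}, φ (YP ω) ∂μ := by
      intro k φ hφ
      have hmeq : (μ.restrict {ω | kidx ω = k}).map YP
          = ENNReal.ofReal (c k) • (μ.restrict {ω | s (kidx ω) = s k}).map YP := by
        ext B hB
        rw [Measure.map_apply hYP hB, Measure.smul_apply, Measure.map_apply hYP hB,
          Measure.restrict_apply (hYP hB), Measure.restrict_apply (hYP hB), smul_eq_mul]
        calc μ (YP ⁻¹' B ∩ {ω | kidx ω = k})
            = ENNReal.ofReal ((μ (YP ⁻¹' B ∩ {ω | kidx ω = k})).toReal) :=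
              (ENNReal.ofReal_toReal (measure_ne_top μ _)).symm
          _ = ENNReal.ofReal (c k * (μ (YP ⁻¹' B ∩ {ω | s (kidx ω) = s k})).toReal) := by
              rw [keyset k B hB]
          _ = ENNReal.ofReal (c k)
              * ENNReal.ofReal ((μ (YP ⁻¹' B ∩ {ω | s (kidx ω) = s k})).toReal) :=
              ENNReal.ofReal_mul (hc0 k)
          _ = ENNReal.ofReal (c k) * μ (YP ⁻¹' B ∩ {ω | s (kidx ω) = s k}) := by
              rw [ENNReal.ofReal_toReal (measure_ne_top μ _)]
      calc ∫ ω in {ω | kidx ω = k}, φ (YP ω) ∂μ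
          = ∫ p, φ p ∂((μ.restrict {ω | kidx ω = k}).map YP) :=
            (integral_map hYP.aemeasurable hφ.aestronglyMeasurable).symm
        _ = ∫ p, φ p ∂(ENNReal.ofReal (c k) • (μ.restrict {ω | s (kidx ω) = s k}).map YP) := by
            rw [hmeq]
        _ = (ENNReal.ofReal (c k)).toReal • ∫ p, φ p
              ∂((μ.restrict {ω | s (kidx ω) = s k}).map YP) := integral_smul_measure _ _
        _ = c k * ∫ ω in {ω | s (kidx ω) = s k}, φ (YP ω) ∂μ := by
            rw [ENNReal.toReal_ofReal (hc0 k),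
              integral_map hYP.aemeasurable hφ.aestronglyMeasurable, smul_eq_mul]
    have key1 : ∀ (k : Fin K) (t : Fin T),
        ∫ ω in {ω | kidx ω = k}, (Y1 t ω - Y0 t ω) ∂μ
          = c k * ∫ ω in {ω | s (kidx ω) = s k}, (Y1 t ω - Y0 t ω) ∂μ :=
      fun k t => keyfun k (fun p => p.2 t - p.1 t)
        (((measurable_pi_apply t).comp measurable_snd).sub
          ((measurable_pi_apply t).comp measurable_fst))
    have key0 : ∀ (k : Fin K) (t : Fin T),
        ∫ ω in {ω | kidx ω = k}, Y0 t ω ∂μ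
          = c k * ∫ ω in {ω | s (kidx ω) = s k}, Y0 t ω ∂μ :=
      fun k t => keyfun k (fun p => p.1 t) ((measurable_pi_apply t).comp measurable_fst)
    have hint1 : ∀ (k : Fin K) (t : Fin T),
        Integrable (fun ω => (Wmat k t * Y1 t ω + (1 - Wmat k t) * Y0 t ω) * w k t) μ :=
      fun k t => (((hY1int t).const_mul _).add ((hY0int t).const_mul _)).mul_const _
    have hgk : ∀ k : Fin K, Integrable (fun ω => (1 / (T:ℝ)) *
        ∑ t, (Wmat k t * Y1 t ω + (1 - Wmat k t) * Y0 t ω) * w k t) μ :=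
      fun k => (integrable_finset_sum _ (fun t _ => hint1 k t)).const_mul _
    have hdecomp : (fun ω => (1 / (T:ℝ)) * ∑ t,
          (Wmat (kidx ω) t * Y1 t ω + (1 - Wmat (kidx ω) t) * Y0 t ω) * w (kidx ω) t)
        = fun ω => ∑ k : Fin K, Set.indicator {ω' | kidx ω' = k}
            (fun ω' => (1 / (T:ℝ)) * ∑ t,
              (Wmat k t * Y1 t ω' + (1 - Wmat k t) * Y0 t ω') * w k t) ω := by
      funext ω
      have h1 : ∀ b : Fin K, b ∈ Finset.univ → b ≠ kidx ω →
          Set.indicator {ω' | kidx ω' = b}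
            (fun ω' => (1 / (T:ℝ)) * ∑ t,
              (Wmat b t * Y1 t ω' + (1 - Wmat b t) * Y0 t ω') * w b t) ω = 0 :=
        fun b _ hb => Set.indicator_of_notMem
          (show ω ∉ {ω' | kidx ω' = b} from fun h => hb (Eq.symm h)) _
      rw [Finset.sum_eq_single (kidx ω) h1 (fun h => absurd (Finset.mem_univ _) h),
        Set.indicator_of_mem (show ω ∈ {ω' | kidx ω' = kidx ω} from rfl)]
    rw [hdecomp, integral_finset_sum _ (fun k _ => (hgk k).indicator (hAk k)),
      Finset.sum_congr rfl (fun k _ => integral_indicator (hAk k))]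
    have hval : ∀ k : Fin K,
        ∫ ω in {ω | kidx ω = k}, (1 / (T:ℝ)) *
            ∑ t, (Wmat k t * Y1 t ω + (1 - Wmat k t) * Y0 t ω) * w k t ∂μ
          = (1 / (T:ℝ)) * ∑ t,
              (w k t * Wmat k t * (c k * ∫ ω in {ω | s (kidx ω) = s k}, (Y1 t ω - Y0 t ω) ∂μ)
                + w k t * (c k * ∫ ω in {ω | s (kidx ω) = s k}, Y0 t ω ∂μ)) := by
      intro k
      rw [integral_const_mul]
      congr 1
      rw [integral_finset_sum _ (fun t _ => (hint1 k t).integrableOn)]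
      refine Finset.sum_congr rfl fun t _ => ?_
      have hptw : ∀ ω, (Wmat k t * Y1 t ω + (1 - Wmat k t) * Y0 t ω) * w k t
          = w k t * Wmat k t * (Y1 t ω - Y0 t ω) + w k t * Y0 t ω := fun ω => by ring
      simp only [hptw]
      have hi1 : Integrable (fun ω => w k t * Wmat k t * (Y1 t ω - Y0 t ω))
          (μ.restrict {ω | kidx ω = k}) :=
        (((hY1int t).sub (hY0int t)).const_mul _).integrableOn
      have hi2 : Integrable (fun ω => w k t * Y0 t ω) (μ.restrict {ω | kidx ω = k}) :=
        ((hY0int t).const_mul _).integrableOn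
      rw [integral_add hi1 hi2, integral_const_mul, integral_const_mul, key1 k t, key0 k t]
    rw [Finset.sum_congr rfl (fun k _ => hval k)]
    rw [← Finset.sum_fiberwise_of_maps_to (fun k (_ : k ∈ Finset.univ) => Finset.mem_univ (s k))
      (fun k => (1 / (T:ℝ)) * ∑ t,
        (w k t * Wmat k t * (c k * ∫ ω in {ω | s (kidx ω) = s k}, (Y1 t ω - Y0 t ω) ∂μ)
          + w k t * (c k * ∫ ω in {ω | s (kidx ω) = s k}, Y0 t ω ∂μ)))]
    refine Finset.sum_congr rfl fun σ _ => ?_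
    have hfib : ∀ k ∈ Finset.univ.filter (fun k => s k = σ),
        (1 / (T:ℝ)) * ∑ t,
            (w k t * Wmat k t * (c k * ∫ ω in {ω | s (kidx ω) = s k}, (Y1 t ω - Y0 t ω) ∂μ)
              + w k t * (c k * ∫ ω in {ω | s (kidx ω) = s k}, Y0 t ω ∂μ))
          = (1 / (T:ℝ)) * ∑ t,
            (w k t * Wmat k t * ((μ {ω | kidx ω = k}).toReal / (μ {ω | s (kidx ω) = σ}).toReal
                * ∫ ω in {ω | s (kidx ω) = σ}, (Y1 t ω - Y0 t ω) ∂μ)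
              + w k t * ((μ {ω | kidx ω = k}).toReal / (μ {ω | s (kidx ω) = σ}).toReal
                * ∫ ω in {ω | s (kidx ω) = σ}, Y0 t ω ∂μ)) := by
      intro k hk
      have hsk : s k = σ := (Finset.mem_filter.mp hk).2
      rw [hcdef]
      simp only [hsk]
    rw [Finset.sum_congr rfl hfib]
    calc ∑ k ∈ Finset.univ.filter (fun k => s k = σ), (1 / (T:ℝ)) * ∑ t,
            (w k t * Wmat k t * ((μ {ω | kidx ω = k}).toReal / (μ {ω | s (kidx ω) = σ}).toReal
                * ∫ ω in {ω | s (kidx ω) = σ}, (Y1 t ω - Y0 t ω) ∂μ)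
              + w k t * ((μ {ω | kidx ω = k}).toReal / (μ {ω | s (kidx ω) = σ}).toReal
                * ∫ ω in {ω | s (kidx ω) = σ}, Y0 t ω ∂μ))
        = (1 / (T:ℝ)) * ∑ t, ∑ k ∈ Finset.univ.filter (fun k => s k = σ),
            (w k t * Wmat k t * ((μ {ω | kidx ω = k}).toReal / (μ {ω | s (kidx ω) = σ}).toReal
                * ∫ ω in {ω | s (kidx ω) = σ}, (Y1 t ω - Y0 t ω) ∂μ)
              + w k t * ((μ {ω | kidx ω = k}).toReal / (μ {ω | s (kidx ω) = σ}).toReal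
                * ∫ ω in {ω | s (kidx ω) = σ}, Y0 t ω ∂μ)) := by
          rw [← Finset.mul_sum, Finset.sum_comm]
      _ = (1 / (T:ℝ)) * ∑ t,
            (∑ k ∈ Finset.univ.filter (fun k => s k = σ),
              (μ {ω | kidx ω = k}).toReal * w k t * Wmat k t)
            * ((∫ ω in {ω | s (kidx ω) = σ}, (Y1 t ω - Y0 t ω) ∂μ)
                / (μ {ω | s (kidx ω) = σ}).toReal) := by
          congr 1
          refine Finset.sum_congr rfl fun t _ => ?_
          rw [Finset.sum_add_distrib]
          have hA : ∑ k ∈ Finset.univ.filter (fun k => s k = σ),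
              w k t * Wmat k t * ((μ {ω | kidx ω = k}).toReal / (μ {ω | s (kidx ω) = σ}).toReal
                * ∫ ω in {ω | s (kidx ω) = σ}, (Y1 t ω - Y0 t ω) ∂μ)
              = (∑ k ∈ Finset.univ.filter (fun k => s k = σ),
                  (μ {ω | kidx ω = k}).toReal * w k t * Wmat k t)
                * ((∫ ω in {ω | s (kidx ω) = σ}, (Y1 t ω - Y0 t ω) ∂μ)
                    / (μ {ω | s (kidx ω) = σ}).toReal) := by
            rw [Finset.sum_mul]
            exact Finset.sum_congr rfl fun k _ => by ring
          have hB : ∑ k ∈ Finset.univ.filter (fun k => s k = σ),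
              w k t * ((μ {ω | kidx ω = k}).toReal / (μ {ω | s (kidx ω) = σ}).toReal
                * ∫ ω in {ω | s (kidx ω) = σ}, Y0 t ω ∂μ)
              = (∑ k ∈ Finset.univ.filter (fun k => s k = σ),
                  (μ {ω | kidx ω = k}).toReal * w k t)
                * ((∫ ω in {ω | s (kidx ω) = σ}, Y0 t ω ∂μ)
                    / (μ {ω | s (kidx ω) = σ}).toReal) := by
            rw [Finset.sum_mul]
            exact Finset.sum_congr rfl fun k _ => by ring
          rw [hA, hB, hw3 σ t, zero_mul, add_zero]
      _ = ∑ t, ((1 / (T:ℝ)) * ∑ k ∈ Finset.univ.filter (fun k => s k = σ),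
            (μ {ω | kidx ω = k}).toReal * w k t * Wmat k t)
            * ((∫ ω in {ω | s (kidx ω) = σ}, (Y1 t ω - Y0 t ω) ∂μ)
                / (μ {ω | s (kidx ω) = σ}).toReal) := by
          rw [Finset.mul_sum]
          exact Finset.sum_congr rfl fun t _ => by ring
end

section
/- Suppose the conditional distribution of W given U has the exponential-family form: for every w in the finite support of W, ℙ(W = w | U) = exp(S(w)ᵀ·α(U) + β(U) + γ(w)) almost surely, where S : 𝒲 → ℝ^d and γ : 𝒲 → ℝ are known functions and α(U) ∈ ℝ^d, β(U) ∈ ℝ are measurable functions of U. Then W is conditionally independent of U given S(W): for every w, ℙ(W = w | U, S(W)) = ℙ(W = w | S(W)) almost surely. -/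
open MeasureTheory ProbabilityTheory
open scoped BigOperators

/-- **Exponential-family sufficiency.**
If the conditional distribution of the assignment `W` given `U` has the
exponential-family form `ℙ(W = w | U) = exp(S(w)ᵀα(U) + β(U) + γ(w))` a.s. for
every `w` in the (finite) support, with known `S` and `γ`, then `W` is
conditionally independent of `U` given `S(W)`: for every `w`,
`ℙ(W = w | U, S(W)) = ℙ(W = w | S(W))` a.s. -/
theorem expfamily_sufficiency
    {Ωs 𝓤 : Type*} [MeasurableSpace Ωs] [MeasurableSpace 𝓤]
    (μ : Measure Ωs) [IsProbabilityMeasure μ]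
    (T d : ℕ)
    -- the assignment, a random vector with values in the finite set {0,1}^T
    (W : Ωs → Fin T → Bool) (hW : Measurable W)
    -- the unobserved confounder
    (U : Ωs → 𝓤) (hU : Measurable U)
    -- known functions S and γ, measurable functions α(U), β(U)
    (S : (Fin T → Bool) → Fin d → ℝ) (gam : (Fin T → Bool) → ℝ)
    (a : 𝓤 → Fin d → ℝ) (b : 𝓤 → ℝ) (ha : Measurable a) (hb : Measurable b)
    -- the exponential-family form of ℙ(W = w | U)
    (hexp : ∀ w : Fin T → Bool,
      μ[(fun ω => if W ω = w then (1 : ℝ) else 0) |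
          MeasurableSpace.comap U inferInstance]
        =ᵐ[μ] fun ω => Real.exp ((∑ j, S w j * a (U ω) j) + b (U ω) + gam w)) :
    ∀ w : Fin T → Bool,
      μ[(fun ω => if W ω = w then (1 : ℝ) else 0) |
          MeasurableSpace.comap (fun ω => (U ω, S (W ω))) inferInstance]
        =ᵐ[μ]
      μ[(fun ω => if W ω = w then (1 : ℝ) else 0) |
          MeasurableSpace.comap (fun ω => S (W ω)) inferInstance] := by
  classical
  intro w
  have hS : Measurable S := measurable_of_countable S
  have hSW : Measurable (fun ω => S (W ω)) := hS.comp hW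
  set P : Ωs → 𝓤 × (Fin d → ℝ) := fun ω => (U ω, S (W ω)) with hP_def
  have hP : Measurable P := hU.prodMk hSW
  have hmP : MeasurableSpace.comap P inferInstance ≤ ‹MeasurableSpace Ωs› := hP.comap_le
  have hmS : MeasurableSpace.comap (fun ω => S (W ω)) inferInstance ≤ ‹MeasurableSpace Ωs› :=
    hSW.comap_le
  have hmU : MeasurableSpace.comap U inferInstance ≤ ‹MeasurableSpace Ωs› := hU.comap_le
  have hmSP : MeasurableSpace.comap (fun ω => S (W ω)) inferInstance
      ≤ MeasurableSpace.comap P inferInstance := by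
    have h1 : (fun ω => S (W ω)) = Prod.snd ∘ P := rfl
    rw [h1, ← MeasurableSpace.comap_comp]
    exact MeasurableSpace.comap_mono measurable_snd.comap_le
  -- indicators are integrable
  have hind_int : ∀ v : Fin T → Bool,
      Integrable (fun ω => if W ω = v then (1 : ℝ) else 0) μ := by
    intro v
    have h : (fun ω => if W ω = v then (1 : ℝ) else 0)
        = (W ⁻¹' {v}).indicator (fun _ => (1 : ℝ)) := by
      funext ω; by_cases h : W ω = v <;> simp [Set.indicator_apply, h]
    rw [h]
    exact (integrable_const (1 : ℝ)).indicator (hW (measurableSet_singleton v))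
  -- the normalizing constant
  set D : ℝ := ∑ v ∈ Finset.univ.filter (fun v => S v = S w), Real.exp (gam v) with hD_def
  have hD : 0 < D :=
    Finset.sum_pos (fun _ _ => Real.exp_pos _) ⟨w, by simp⟩
  -- the candidate conditional probability, a function of S(W)
  set cS : (Fin d → ℝ) → ℝ := fun s => if s = S w then Real.exp (gam w) / D else 0 with hcS_def
  have hcS : Measurable cS := by
    apply Measurable.ite _ measurable_const measurable_const
    exact measurableSet_eq
  set g : Ωs → ℝ := fun ω => cS (S (W ω)) with hg_def
  have hg_sum : ∀ ω, g ω = ∑ v : Fin T → Bool,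
      (if W ω = v then (1 : ℝ) else 0) * cS (S v) := by
    intro ω
    rw [Finset.sum_eq_single (W ω)]
    · simp [hg_def]
    · intro v _ hv
      rw [if_neg (fun h => hv h.symm), zero_mul]
    · simp
  have hg_int : Integrable g μ := by
    have h : g = fun ω => ∑ v : Fin T → Bool,
        (if W ω = v then (1 : ℝ) else 0) * cS (S v) := funext hg_sum
    rw [h]
    exact integrable_finset_sum _ (fun v _ => (hind_int v).mul_const _)
  -- g is measurable w.r.t. σ(S(W))
  have hSW_comap : @Measurable _ _ (MeasurableSpace.comap (fun ω => S (W ω)) inferInstance) _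
      (fun ω => S (W ω)) := fun s hs => ⟨s, hs, rfl⟩
  have hg_measS : @Measurable _ _ (MeasurableSpace.comap (fun ω => S (W ω)) inferInstance) _ g :=
    hcS.comp hSW_comap
  have hg_aesmS : AEStronglyMeasurable[
      MeasurableSpace.comap (fun ω => S (W ω)) inferInstance] g μ :=
    StronglyMeasurable.aestronglyMeasurable hg_measS.stronglyMeasurable
  have hg_aesmP : AEStronglyMeasurable[MeasurableSpace.comap P inferInstance] g μ :=
    StronglyMeasurable.aestronglyMeasurable
      ((hg_measS.mono hmSP le_rfl).stronglyMeasurable)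
  -- Step A: integrals of indicators over σ(U)-sets
  have stepA : ∀ (v : Fin T → Bool) (B : Set 𝓤), MeasurableSet B →
      ∫ ω in U ⁻¹' B, (if W ω = v then (1 : ℝ) else 0) ∂μ
        = ∫ ω in U ⁻¹' B, Real.exp ((∑ j, S v j * a (U ω) j) + b (U ω) + gam v) ∂μ := by
    intro v B hB
    have hAm : MeasurableSet[MeasurableSpace.comap U inferInstance] (U ⁻¹' B) := ⟨B, hB, rfl⟩
    rw [← setIntegral_condExp hmU (hind_int v) hAm]
    exact setIntegral_congr_ae (hmU _ hAm) ((hexp v).mono fun ω h _ => h)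
  -- key claim: the integrals of the indicator and of g agree on σ(U, S(W))-sets
  have key : ∀ B : Set (𝓤 × (Fin d → ℝ)), MeasurableSet B →
      ∫ ω in P ⁻¹' B, (if W ω = w then (1 : ℝ) else 0) ∂μ = ∫ ω in P ⁻¹' B, g ω ∂μ := by
    intro B hB
    have hBs : ∀ v : Fin T → Bool, MeasurableSet ((fun u => (u, S v)) ⁻¹' B) := by
      intro v; exact measurable_prodMk_right hB
    -- reduction of the domain of integration
    have hred : ∀ v : Fin T → Bool,
        ∫ ω in P ⁻¹' B, (if W ω = v then (1 : ℝ) else 0) ∂μ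
          = ∫ ω in U ⁻¹' ((fun u => (u, S v)) ⁻¹' B), (if W ω = v then (1 : ℝ) else 0) ∂μ := by
      intro v
      rw [← integral_indicator (hP hB), ← integral_indicator (hU (hBs v))]
      congr 1
      funext ω
      by_cases h : W ω = v
      · simp [Set.indicator_apply, Set.mem_preimage, hP_def, h]
      · simp [Set.indicator_apply, h]
    -- common factor
    set J : ℝ := ∫ ω in U ⁻¹' ((fun u => (u, S w)) ⁻¹' B),
        Real.exp ((∑ j, S w j * a (U ω) j) + b (U ω)) ∂μ with hJ_def
    have hfact : ∀ v : Fin T → Bool, S v = S w →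
        ∫ ω in U ⁻¹' ((fun u => (u, S v)) ⁻¹' B),
          Real.exp ((∑ j, S v j * a (U ω) j) + b (U ω) + gam v) ∂μ
        = J * Real.exp (gam v) := by
      intro v hv
      rw [hv, hJ_def, ← integral_mul_const]
      congr 1
      funext ω
      rw [Real.exp_add]
    -- LHS
    have hLHS : ∫ ω in P ⁻¹' B, (if W ω = w then (1 : ℝ) else 0) ∂μ = J * Real.exp (gam w) := by
      rw [hred w, stepA w _ (hBs w), hfact w rfl]
    -- RHS
    have hRHS : ∫ ω in P ⁻¹' B, g ω ∂μ = J * Real.exp (gam w) := by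
      simp only [hg_sum]
      rw [integral_finset_sum _ (fun v _ => ((hind_int v).mul_const _).integrableOn)]
      have hterm : ∀ v : Fin T → Bool,
          ∫ ω in P ⁻¹' B, (if W ω = v then (1 : ℝ) else 0) * cS (S v) ∂μ
            = (∫ ω in U ⁻¹' ((fun u => (u, S v)) ⁻¹' B),
                Real.exp ((∑ j, S v j * a (U ω) j) + b (U ω) + gam v) ∂μ) * cS (S v) := by
        intro v
        rw [integral_mul_const, hred v, stepA v _ (hBs v)]
      simp only [hterm]
      rw [← Finset.sum_subset (Finset.filter_subset (fun v => S v = S w) Finset.univ)]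
      · have hcongr : ∀ v ∈ Finset.univ.filter (fun v => S v = S w),
            (∫ ω in U ⁻¹' ((fun u => (u, S v)) ⁻¹' B),
              Real.exp ((∑ j, S v j * a (U ω) j) + b (U ω) + gam v) ∂μ) * cS (S v)
            = J * Real.exp (gam v) * (Real.exp (gam w) / D) := by
          intro v hv
          rw [Finset.mem_filter] at hv
          rw [hfact v hv.2]
          simp only [hcS_def]
          rw [if_pos hv.2]
        rw [Finset.sum_congr rfl hcongr]
        have : ∑ v ∈ Finset.univ.filter (fun v => S v = S w),
            J * Real.exp (gam v) * (Real.exp (gam w) / D)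
            = (∑ v ∈ Finset.univ.filter (fun v => S v = S w), Real.exp (gam v))
              * (J * (Real.exp (gam w) / D)) := by
          rw [Finset.sum_mul]
          exact Finset.sum_congr rfl (fun v _ => by ring)
        rw [this, ← hD_def]
        field_simp
      · intro v _ hv
        rw [Finset.mem_filter] at hv
        have hv' : S v ≠ S w := fun h => hv ⟨Finset.mem_univ v, h⟩
        rw [hcS_def]
        simp only [if_neg hv', mul_zero]
    rw [hLHS, hRHS]
  -- apply uniqueness of conditional expectation twice
  have h1 : g =ᵐ[μ] μ[(fun ω => if W ω = w then (1 : ℝ) else 0) |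
      MeasurableSpace.comap P inferInstance] := by
    refine ae_eq_condExp_of_forall_setIntegral_eq hmP (hind_int w)
      (fun s _ _ => hg_int.integrableOn) (fun s hs _ => ?_) hg_aesmP
    obtain ⟨B, hB, rfl⟩ := hs
    exact (key B hB).symm
  have h2 : g =ᵐ[μ] μ[(fun ω => if W ω = w then (1 : ℝ) else 0) |
      MeasurableSpace.comap (fun ω => S (W ω)) inferInstance] := by
    refine ae_eq_condExp_of_forall_setIntegral_eq hmS (hind_int w)
      (fun s _ _ => hg_int.integrableOn) (fun s hs _ => ?_) hg_aesmS
    obtain ⟨B', hB', rfl⟩ := hs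
    have hset : (fun ω => S (W ω)) ⁻¹' B' = P ⁻¹' (Set.univ ×ˢ B') := by
      ext ω; simp [hP_def]
    rw [hset]
    exact (key _ (MeasurableSet.univ.prod hB')).symm
  exact h1.symm.trans h2
end

section
/- In the static logit model — where the coordinates W_1, …, W_T are conditionally independent given U and ℙ(W_t = 1 | U) = exp(α(U)ᵀψ(t) + λ_t)/(1 + exp(α(U)ᵀψ(t) + λ_t)) for each t — the statistic S := (1/T)·Σ_{t=1}^T ψ(t)·W_t is sufficient for the assignment: W is conditionally independent of U given S. -/
open MeasureTheory ProbabilityTheory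

lemma condexp_comap_finite_range {Ω γ : Type*} [MeasurableSpace Ω]
    [mγ : MeasurableSpace γ] [MeasurableSingletonClass γ]
    (μ : Measure Ω) [IsFiniteMeasure μ]
    (S : Ω → γ) (hS : Measurable S) (V : Finset γ) (hV : ∀ ω, S ω ∈ V)
    (f : Ω → ℝ) (hf : Integrable f μ) :
    μ[f | MeasurableSpace.comap S mγ]
      =ᵐ[μ] fun ω => (∫ x in S ⁻¹' {S ω}, f x ∂μ) / (μ (S ⁻¹' {S ω})).toReal := by
  classical
  have hm : MeasurableSpace.comap S mγ ≤ _ := hS.comap_le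
  set c : γ → ℝ := fun v => (∫ x in S ⁻¹' {v}, f x ∂μ) / (μ (S ⁻¹' {v})).toReal with hc
  have hone : ∀ v : γ, (fun ω => if S ω = v then c v else 0)
      = Set.indicator (S ⁻¹' {v}) (fun _ => c v) := by
    intro v
    funext ω
    simp [Set.indicator_apply]
  have hfun : (fun ω => c (S ω))
      = fun ω => ∑ v ∈ V, Set.indicator (S ⁻¹' {v}) (fun _ => c v) ω := by
    funext ω
    calc c (S ω) = ∑ v ∈ V, if S ω = v then c v else 0 := by
          rw [Finset.sum_ite_eq V (S ω) c, if_pos (hV ω)]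
      _ = _ := Finset.sum_congr rfl fun v _ => congrFun (hone v) ω
  have hsingle : ∀ v : γ, ∫ x in S ⁻¹' {v}, f x ∂μ = c v * (μ (S ⁻¹' {v})).toReal := by
    intro v
    by_cases h0 : μ (S ⁻¹' {v}) = 0
    · rw [Measure.restrict_eq_zero.2 h0, h0]
      simp
    · rw [hc]
      rw [div_mul_cancel₀]
      exact ENNReal.toReal_ne_zero.2 ⟨h0, measure_ne_top _ _⟩
  have hmeas : Measurable[MeasurableSpace.comap S mγ] fun ω => c (S ω) := by
    rw [hfun]
    exact Finset.measurable_sum _ fun v _ =>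
      measurable_const.indicator ⟨{v}, measurableSet_singleton v, rfl⟩
  have hint : Integrable (fun ω => c (S ω)) μ := by
    rw [hfun]
    exact integrable_finset_sum _ fun v _ =>
      (integrable_const (c v)).indicator (hS (measurableSet_singleton v))
  refine (ae_eq_condExp_of_forall_setIntegral_eq hm hf
    (fun s _ _ => hint.integrableOn) ?_ (StronglyMeasurable.aestronglyMeasurable hmeas.stronglyMeasurable)).symm
  rintro A ⟨E, hE, rfl⟩ -
  have hdecomp : S ⁻¹' E = ⋃ v ∈ V, (S ⁻¹' E ∩ S ⁻¹' {v}) := by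
    ext ω
    simp only [Set.mem_iUnion, Set.mem_inter_iff, Set.mem_preimage, Set.mem_singleton_iff]
    exact ⟨fun h => ⟨S ω, hV ω, h, rfl⟩, fun ⟨v, _, h, _⟩ => h⟩
  have hmeasv : ∀ v ∈ V, MeasurableSet (S ⁻¹' E ∩ S ⁻¹' {v}) :=
    fun v _ => (hS hE).inter (hS (measurableSet_singleton v))
  have hdisj : (V : Set γ).Pairwise (Function.onFun Disjoint
      fun v => S ⁻¹' E ∩ S ⁻¹' {v}) := by
    intro x _ y _ hxy
    refine Set.disjoint_left.2 fun ω hx hy => hxy ?_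
    exact (hx.2 : S ω = x).symm.trans hy.2
  have hRHS : ∫ x in S ⁻¹' E, f x ∂μ
      = ∑ v ∈ V, ∫ x in S ⁻¹' E ∩ S ⁻¹' {v}, f x ∂μ := by
    conv_lhs => rw [hdecomp]
    exact integral_biUnion_finset V hmeasv hdisj fun v _ => hf.integrableOn
  rw [hRHS]
  calc ∫ x in S ⁻¹' E, c (S x) ∂μ
      = ∑ v ∈ V, ∫ x in S ⁻¹' E, Set.indicator (S ⁻¹' {v}) (fun _ => c v) x ∂μ := by
        simp only [hfun]
        exact integral_finset_sum V fun v _ => ((integrable_const (c v)).indicator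
            (hS (measurableSet_singleton v))).integrableOn
    _ = ∑ v ∈ V, ∫ x in S ⁻¹' E ∩ S ⁻¹' {v}, c v ∂μ := by
        refine Finset.sum_congr rfl fun v _ => ?_
        rw [setIntegral_indicator (hS (measurableSet_singleton v))]
    _ = ∑ v ∈ V, ∫ x in S ⁻¹' E ∩ S ⁻¹' {v}, f x ∂μ := by
        refine Finset.sum_congr rfl fun v _ => ?_
        by_cases hvE : v ∈ E
        · have heq : S ⁻¹' E ∩ S ⁻¹' {v} = S ⁻¹' {v} := by
            ext ω
            simp only [Set.mem_inter_iff, Set.mem_preimage, Set.mem_singleton_iff]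
            exact ⟨fun h => h.2, fun h => ⟨h ▸ hvE, h⟩⟩
          rw [heq, hsingle v, setIntegral_const, smul_eq_mul, mul_comm, measureReal_def]
        · have heq : S ⁻¹' E ∩ S ⁻¹' {v} = ∅ := by
            refine Set.eq_empty_iff_forall_notMem.2 fun ω hω => hvE (hω.2 ▸ hω.1)
          rw [heq]
          simp

lemma static_logit_key
    {Ωs 𝓤 : Type*} [MeasurableSpace Ωs] [StandardBorelSpace Ωs] [Nonempty Ωs]
    [MeasurableSpace 𝓤]
    (μ : Measure Ωs) [IsProbabilityMeasure μ]
    (T d : ℕ)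
    (W : Ωs → Fin T → Bool) (hW : Measurable W)
    (U : Ωs → 𝓤) (hU : Measurable U)
    (ψ : Fin T → Fin d → ℝ) (lam : Fin T → ℝ) (a : 𝓤 → Fin d → ℝ)
    (hcondindep : iCondIndepFun (MeasurableSpace.comap U inferInstance) hU.comap_le
      (fun t ω => W ω t) μ)
    (hmarg : ∀ t, μ[(fun ω => if W ω t then (1 : ℝ) else 0) |
        MeasurableSpace.comap U inferInstance]
      =ᵐ[μ] fun ω =>
        Real.exp ((∑ j, a (U ω) j * ψ t j) + lam t) /
          (1 + Real.exp ((∑ j, a (U ω) j * ψ t j) + lam t)))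
    (w : Fin T → Bool) (B : Set 𝓤) (hB : MeasurableSet B) :
    (μ (W ⁻¹' {w} ∩ U ⁻¹' B)).toReal
      = Real.exp (∑ t, lam t * (if w t then (1:ℝ) else 0)) *
        ∫ ω in U ⁻¹' B,
          Real.exp (∑ j, a (U ω) j * ∑ t, ψ t j * (if w t then (1:ℝ) else 0)) /
            ∏ t, (1 + Real.exp ((∑ j, a (U ω) j * ψ t j) + lam t)) ∂μ := by
  classical
  have hWt : ∀ t, Measurable fun ω => W ω t := fun t => (measurable_pi_apply t).comp hW
  have hIt_ind : ∀ t, (fun ω => if W ω t then (1:ℝ) else 0)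
      = Set.indicator ((fun ω => W ω t) ⁻¹' {true}) (fun _ => (1:ℝ)) := by
    intro t; funext ω; by_cases h : W ω t <;> simp [Set.indicator_apply, h]
  have hIt_int : ∀ t, Integrable (fun ω => if W ω t then (1:ℝ) else 0) μ := by
    intro t
    rw [hIt_ind t]
    exact (integrable_const 1).indicator (hWt t (measurableSet_singleton true))
  -- conditional probability of each coordinate
  have hcond_t : ∀ (t : Fin T) (b : Bool),
      μ⟦(fun ω => W ω t) ⁻¹' {b} | MeasurableSpace.comap U inferInstance⟧
        =ᵐ[μ] fun ω => if b then Real.exp ((∑ j, a (U ω) j * ψ t j) + lam t) /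
              (1 + Real.exp ((∑ j, a (U ω) j * ψ t j) + lam t))
            else 1 - Real.exp ((∑ j, a (U ω) j * ψ t j) + lam t) /
              (1 + Real.exp ((∑ j, a (U ω) j * ψ t j) + lam t)) := by
    intro t b
    cases b
    · have hset : ((fun ω => W ω t) ⁻¹' {false}).indicator (fun _ => (1:ℝ))
          = (fun _ => (1:ℝ)) - fun ω => if W ω t then (1:ℝ) else 0 := by
        funext ω; by_cases h : W ω t <;> simp [Set.indicator_apply, h]
      rw [hset]
      refine (condExp_sub (integrable_const 1) (hIt_int t) _).trans ?_
      filter_upwards [hmarg t] with ω hω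
      simp only [Pi.sub_apply, hω, condExp_const hU.comap_le, if_false]
      rfl
    · have hset : ((fun ω => W ω t) ⁻¹' {true}).indicator (fun _ => (1:ℝ))
          = fun ω => if W ω t then (1:ℝ) else 0 := (hIt_ind t).symm
      rw [hset]
      filter_upwards [hmarg t] with ω hω
      simpa using hω
  -- product over coordinates
  have hprod := (iCondIndepFun_iff_condExp_inter_preimage_eq_mul
      (fun _ : Fin T => inferInstance) (fun t ω => W ω t) hWt).1 hcondindep
      Finset.univ (sets := fun t => {w t}) (fun t _ => measurableSet_singleton _)
  have hInter : (⋂ t ∈ Finset.univ, (fun ω => W ω t) ⁻¹' {w t}) = W ⁻¹' {w} := by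
    ext ω
    simp [funext_iff]
  rw [hInter] at hprod
  have h2 : (∏ t, μ⟦(fun ω => W ω t) ⁻¹' {w t}|MeasurableSpace.comap U inferInstance⟧)
      =ᵐ[μ] fun ω => ∏ t, (if w t then Real.exp ((∑ j, a (U ω) j * ψ t j) + lam t) /
              (1 + Real.exp ((∑ j, a (U ω) j * ψ t j) + lam t))
            else 1 - Real.exp ((∑ j, a (U ω) j * ψ t j) + lam t) /
              (1 + Real.exp ((∑ j, a (U ω) j * ψ t j) + lam t))) := by
    have hall : ∀ᵐ ω ∂μ, ∀ t : Fin T, (μ⟦(fun ω => W ω t) ⁻¹' {w t}|MeasurableSpace.comap U inferInstance⟧) ω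
        = if w t then Real.exp ((∑ j, a (U ω) j * ψ t j) + lam t) /
              (1 + Real.exp ((∑ j, a (U ω) j * ψ t j) + lam t))
            else 1 - Real.exp ((∑ j, a (U ω) j * ψ t j) + lam t) /
              (1 + Real.exp ((∑ j, a (U ω) j * ψ t j) + lam t)) :=
      ae_all_iff.2 fun t => hcond_t t (w t)
    filter_upwards [hall] with ω hω
    rw [Finset.prod_apply]
    exact Finset.prod_congr rfl fun t _ => hω t
  -- pointwise algebra
  have halg : ∀ u : 𝓤,
      (∏ t, (if w t then Real.exp ((∑ j, a u j * ψ t j) + lam t) /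
              (1 + Real.exp ((∑ j, a u j * ψ t j) + lam t))
            else 1 - Real.exp ((∑ j, a u j * ψ t j) + lam t) /
              (1 + Real.exp ((∑ j, a u j * ψ t j) + lam t))))
      = Real.exp (∑ t, lam t * (if w t then (1:ℝ) else 0)) *
        (Real.exp (∑ j, a u j * ∑ t, ψ t j * (if w t then (1:ℝ) else 0)) /
          ∏ t, (1 + Real.exp ((∑ j, a u j * ψ t j) + lam t))) := by
    intro u
    have hpos : ∀ t : Fin T, (0:ℝ) < 1 + Real.exp ((∑ j, a u j * ψ t j) + lam t) :=
      fun t => by positivity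
    have hfac : ∀ t : Fin T,
        (if w t then Real.exp ((∑ j, a u j * ψ t j) + lam t) /
              (1 + Real.exp ((∑ j, a u j * ψ t j) + lam t))
            else 1 - Real.exp ((∑ j, a u j * ψ t j) + lam t) /
              (1 + Real.exp ((∑ j, a u j * ψ t j) + lam t)))
        = Real.exp (if w t then (∑ j, a u j * ψ t j) + lam t else 0) /
            (1 + Real.exp ((∑ j, a u j * ψ t j) + lam t)) := by
      intro t
      by_cases h : w t
      · simp [h]
      · simp only [h, Bool.false_eq_true, if_false, Real.exp_zero]
        field_simp
        ring
    rw [Finset.prod_congr rfl fun t _ => hfac t, Finset.prod_div_distrib, ← Real.exp_sum]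
    have h1 : ∀ t : Fin T,
        (if w t then (∑ j, a u j * ψ t j) + lam t else 0)
        = (∑ j, a u j * (ψ t j * (if w t then (1:ℝ) else 0)))
            + lam t * (if w t then (1:ℝ) else 0) := by
      intro t; by_cases h : w t <;> simp [h]
    rw [Finset.sum_congr rfl fun t _ => h1 t, Finset.sum_add_distrib, Finset.sum_comm]
    have h3 : ∀ j : Fin d, (∑ t, a u j * (ψ t j * (if w t then (1:ℝ) else 0)))
        = a u j * ∑ t, ψ t j * (if w t then (1:ℝ) else 0) :=
      fun j => (Finset.mul_sum _ _ _).symm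
    rw [Finset.sum_congr rfl fun j _ => h3 j, Real.exp_add]
    ring
  have hdens : μ⟦W ⁻¹' {w} | MeasurableSpace.comap U inferInstance⟧
      =ᵐ[μ] fun ω => Real.exp (∑ t, lam t * (if w t then (1:ℝ) else 0)) *
        (Real.exp (∑ j, a (U ω) j * ∑ t, ψ t j * (if w t then (1:ℝ) else 0)) /
          ∏ t, (1 + Real.exp ((∑ j, a (U ω) j * ψ t j) + lam t))) :=
    hprod.trans (h2.trans (Filter.Eventually.of_forall fun ω => halg (U ω)))
  have hXmeas : MeasurableSet (W ⁻¹' {w}) := hW (measurableSet_singleton w)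
  have hXint : Integrable ((W ⁻¹' {w}).indicator fun _ => (1:ℝ)) μ :=
    (integrable_const 1).indicator hXmeas
  have hUB : MeasurableSet[MeasurableSpace.comap U inferInstance] (U ⁻¹' B) := ⟨B, hB, rfl⟩
  calc (μ (W ⁻¹' {w} ∩ U ⁻¹' B)).toReal
      = ∫ ω in U ⁻¹' B, (W ⁻¹' {w}).indicator (fun _ => (1:ℝ)) ω ∂μ := by
        rw [setIntegral_indicator hXmeas, setIntegral_const, smul_eq_mul, mul_one,
          Set.inter_comm, measureReal_def]
    _ = ∫ ω in U ⁻¹' B, (μ⟦W ⁻¹' {w}|MeasurableSpace.comap U inferInstance⟧) ω ∂μ :=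
        (setIntegral_condExp hU.comap_le hXint hUB).symm
    _ = ∫ ω in U ⁻¹' B, Real.exp (∑ t, lam t * (if w t then (1:ℝ) else 0)) *
          (Real.exp (∑ j, a (U ω) j * ∑ t, ψ t j * (if w t then (1:ℝ) else 0)) /
            ∏ t, (1 + Real.exp ((∑ j, a (U ω) j * ψ t j) + lam t))) ∂μ :=
        integral_congr_ae (ae_restrict_of_ae hdens)
    _ = _ := by rw [MeasureTheory.integral_const_mul]


/-- **Static logit model sufficiency.**
If the coordinates `W_1, …, W_T` are conditionally independent given `U` with
`ℙ(W_t = 1 | U) = exp(α(U)ᵀψ(t) + λ_t)/(1 + exp(α(U)ᵀψ(t) + λ_t))`, then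
`S = (1/T)·Σ_t ψ(t)·W_t` is sufficient for the assignment: `W ⫫ U | S`. -/
theorem static_logit_sufficiency
    {Ωs 𝓤 : Type*} [MeasurableSpace Ωs] [StandardBorelSpace Ωs] [Nonempty Ωs]
    [MeasurableSpace 𝓤]
    (μ : Measure Ωs) [IsProbabilityMeasure μ]
    (T d : ℕ)
    (W : Ωs → Fin T → Bool) (hW : Measurable W)
    (U : Ωs → 𝓤) (hU : Measurable U)
    (ψ : Fin T → Fin d → ℝ) (lam : Fin T → ℝ) (a : 𝓤 → Fin d → ℝ)
    -- the coordinates of W are conditionally independent given U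
    (hcondindep : iCondIndepFun (MeasurableSpace.comap U inferInstance) hU.comap_le
      (fun t ω => W ω t) μ)
    -- logistic conditional means
    (hmarg : ∀ t, μ[(fun ω => if W ω t then (1 : ℝ) else 0) |
        MeasurableSpace.comap U inferInstance]
      =ᵐ[μ] fun ω =>
        Real.exp ((∑ j, a (U ω) j * ψ t j) + lam t) /
          (1 + Real.exp ((∑ j, a (U ω) j * ψ t j) + lam t)))
    -- the sufficient statistic S = (1/T)·Σ_t ψ(t)·W_t
    (S : Ωs → Fin d → ℝ)
    (hSdef : ∀ ω j, S ω j = (1 / (T : ℝ)) * ∑ t, ψ t j * (if W ω t then 1 else 0))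
    (hS : Measurable S) :
    CondIndepFun (MeasurableSpace.comap S inferInstance) hS.comap_le W U μ := by
  classical
  set S₀ : (Fin T → Bool) → (Fin d → ℝ) :=
    fun w j => (1 / (T : ℝ)) * ∑ t, ψ t j * (if w t then 1 else 0) with hS₀def
  have hSstat : ∀ ω, S ω = S₀ (W ω) := fun ω => funext fun j => hSdef ω j
  set V : Finset (Fin d → ℝ) := Finset.image S₀ Finset.univ with hVdef
  have hV : ∀ ω, S ω ∈ V := by
    intro ω
    rw [hSstat ω]
    exact Finset.mem_image_of_mem _ (Finset.mem_univ _)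
  -- swap identity
  have hSWAP : ∀ (w w' : Fin T → Bool) (B : Set 𝓤), MeasurableSet B →
      (∀ j, (∑ t, ψ t j * (if w t then (1:ℝ) else 0))
        = ∑ t, ψ t j * (if w' t then 1 else 0)) →
      (μ (W ⁻¹' {w} ∩ U ⁻¹' B)).toReal * (μ (W ⁻¹' {w'} ∩ U ⁻¹' Set.univ)).toReal
        = (μ (W ⁻¹' {w} ∩ U ⁻¹' Set.univ)).toReal
            * (μ (W ⁻¹' {w'} ∩ U ⁻¹' B)).toReal := by
    intro w w' B hB hmeq
    rw [static_logit_key μ T d W hW U hU ψ lam a hcondindep hmarg w B hB,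
      static_logit_key μ T d W hW U hU ψ lam a hcondindep hmarg w' Set.univ
        MeasurableSet.univ,
      static_logit_key μ T d W hW U hU ψ lam a hcondindep hmarg w Set.univ
        MeasurableSet.univ,
      static_logit_key μ T d W hW U hU ψ lam a hcondindep hmarg w' B hB]
    have hmm : ∀ ω : Ωs, (∑ j, a (U ω) j * ∑ t, ψ t j * (if w' t then (1:ℝ) else 0))
        = ∑ j, a (U ω) j * ∑ t, ψ t j * (if w t then 1 else 0) := fun ω =>
      Finset.sum_congr rfl fun j _ => by rw [hmeq j]
    simp only [hmm]
    ring
  -- finite decomposition of measures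
  have hMSUM : ∀ (F : Finset (Fin T → Bool)) (B : Set 𝓤), MeasurableSet B →
      (μ (W ⁻¹' ↑F ∩ U ⁻¹' B)).toReal
        = ∑ w ∈ F, (μ (W ⁻¹' {w} ∩ U ⁻¹' B)).toReal := by
    intro F B hB
    have hd : W ⁻¹' ↑F ∩ U ⁻¹' B = ⋃ w ∈ F, (W ⁻¹' {w} ∩ U ⁻¹' B) := by
      ext ω
      simp only [Set.mem_inter_iff, Set.mem_preimage, Finset.mem_coe, Set.mem_iUnion,
        Set.mem_singleton_iff]
      exact ⟨fun ⟨h1, h2⟩ => ⟨W ω, h1, rfl, h2⟩, fun ⟨w, hw, h1, h2⟩ => ⟨h1 ▸ hw, h2⟩⟩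
    rw [hd, measure_biUnion_finset ?_ ?_]
    · rw [ENNReal.toReal_sum fun w _ => measure_ne_top μ _]
    · intro x _ y _ hxy
      refine Set.disjoint_left.2 fun ω hx hy => hxy ?_
      exact (hx.1 : W ω = x).symm.trans hy.1
    · exact fun w _ => (hW (measurableSet_singleton w)).inter (hU hB)
  -- statistics agree on fibers of S₀
  have hfiber : ∀ (w w' : Fin T → Bool), S₀ w = S₀ w' →
      ∀ j, (∑ t, ψ t j * (if w t then (1:ℝ) else 0))
        = ∑ t, ψ t j * (if w' t then 1 else 0) := by
    intro w w' h j
    rcases Nat.eq_zero_or_pos T with hT | hT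
    · have : w = w' := funext fun t => absurd t.isLt (by omega)
      rw [this]
    · have hTne : (1 / (T : ℝ)) ≠ 0 :=
        one_div_ne_zero (Nat.cast_ne_zero.2 (by omega))
      have h3 := congrFun h j
      simp only [hS₀def] at h3
      exact mul_left_cancel₀ hTne h3
  -- the core factorization identity
  have hCORE : ∀ (v : Fin d → ℝ) (A : Set (Fin T → Bool)) (B : Set 𝓤),
      MeasurableSet B →
      (μ (S ⁻¹' {v} ∩ (W ⁻¹' A ∩ U ⁻¹' B))).toReal * (μ (S ⁻¹' {v})).toReal
        = (μ (S ⁻¹' {v} ∩ W ⁻¹' A)).toReal * (μ (S ⁻¹' {v} ∩ U ⁻¹' B)).toReal := by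
    intro v A B hB
    set 𝒲 : Finset (Fin T → Bool) := Finset.univ.filter (fun w => S₀ w = v) with h𝒲
    set 𝒲A : Finset (Fin T → Bool) :=
      Finset.univ.filter (fun w => S₀ w = v ∧ w ∈ A) with h𝒲A
    have e1 : S ⁻¹' {v} ∩ (W ⁻¹' A ∩ U ⁻¹' B) = W ⁻¹' ↑𝒲A ∩ U ⁻¹' B := by
      ext ω
      simp only [Set.mem_inter_iff, Set.mem_preimage, Set.mem_singleton_iff, hSstat ω,
        Finset.mem_coe, h𝒲A, Finset.mem_filter, Finset.mem_univ, true_and]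
      tauto
    have e2 : S ⁻¹' {v} ∩ W ⁻¹' A = W ⁻¹' ↑𝒲A ∩ U ⁻¹' Set.univ := by
      ext ω
      simp only [Set.mem_inter_iff, Set.mem_preimage, Set.mem_singleton_iff, hSstat ω,
        Finset.mem_coe, h𝒲A, Finset.mem_filter, Finset.mem_univ, true_and, Set.mem_univ,
        and_true]
    have e3 : S ⁻¹' {v} ∩ U ⁻¹' B = W ⁻¹' ↑𝒲 ∩ U ⁻¹' B := by
      ext ω
      simp only [Set.mem_inter_iff, Set.mem_preimage, Set.mem_singleton_iff, hSstat ω,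
        Finset.mem_coe, h𝒲, Finset.mem_filter, Finset.mem_univ, true_and]
    have e4 : S ⁻¹' {v} = W ⁻¹' ↑𝒲 ∩ U ⁻¹' Set.univ := by
      ext ω
      simp only [Set.mem_preimage, Set.mem_singleton_iff, hSstat ω, Set.mem_inter_iff,
        Finset.mem_coe, h𝒲, Finset.mem_filter, Finset.mem_univ, true_and, Set.mem_univ,
        and_true]
    rw [e1, e2, e3, e4]
    rw [hMSUM 𝒲A B hB, hMSUM 𝒲 Set.univ MeasurableSet.univ,
      hMSUM 𝒲A Set.univ MeasurableSet.univ, hMSUM 𝒲 B hB,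
      Finset.sum_mul_sum, Finset.sum_mul_sum]
    refine Finset.sum_congr rfl fun w hw => Finset.sum_congr rfl fun w' hw' => ?_
    have h1 : S₀ w = v := ((Finset.mem_filter.1 hw).2).1
    have h2 : S₀ w' = v := (Finset.mem_filter.1 hw').2
    exact hSWAP w w' B hB (hfiber w w' (h1.trans h2.symm))
  -- a.e. positivity of the conditioning atom
  have hpos : ∀ᵐ ω ∂μ, μ (S ⁻¹' {S ω}) ≠ 0 := by
    rw [ae_iff]
    have hsub : {ω | ¬ μ (S ⁻¹' {S ω}) ≠ 0} ⊆
        ⋃ v ∈ (V.filter fun v => μ (S ⁻¹' {v}) = 0), S ⁻¹' {v} := by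
      intro ω hω
      simp only [Set.mem_setOf_eq, not_not] at hω
      exact Set.mem_biUnion (Finset.mem_filter.2 ⟨hV ω, hω⟩) rfl
    refine measure_mono_null hsub ?_
    refine (measure_biUnion_null_iff (V.filter _).countable_toSet).2
      fun v hv => (Finset.mem_filter.1 hv).2
  -- reduce to explicit conditional expectations
  rw [condIndepFun_iff_condExp_inter_preimage_eq_mul hW hU]
  intro A B hA hB
  have hXm : MeasurableSet (W ⁻¹' A) := hW hA
  have hYm : MeasurableSet (U ⁻¹' B) := hU hB
  have hconv : ∀ (X : Set Ωs), MeasurableSet X → ∀ s : Set Ωs,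
      ∫ x in s, X.indicator (fun _ => (1:ℝ)) x ∂μ = (μ (s ∩ X)).toReal := by
    intro X hX s
    rw [setIntegral_indicator hX, setIntegral_const, smul_eq_mul, mul_one, measureReal_def]
  have h1 := condexp_comap_finite_range μ S hS V hV
    ((W ⁻¹' A ∩ U ⁻¹' B).indicator fun _ => (1:ℝ))
    ((integrable_const 1).indicator (hXm.inter hYm))
  have h2 := condexp_comap_finite_range μ S hS V hV
    ((W ⁻¹' A).indicator fun _ => (1:ℝ)) ((integrable_const 1).indicator hXm)
  have h3 := condexp_comap_finite_range μ S hS V hV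
    ((U ⁻¹' B).indicator fun _ => (1:ℝ)) ((integrable_const 1).indicator hYm)
  filter_upwards [h1, h2, h3, hpos] with ω e1 e2 e3 epos
  rw [e1, e2, e3, hconv _ (hXm.inter hYm) _, hconv _ hXm _, hconv _ hYm _]
  have hp : (μ (S ⁻¹' {S ω})).toReal ≠ 0 :=
    ENNReal.toReal_ne_zero.2 ⟨epos, measure_ne_top μ _⟩
  have hkey := hCORE (S ω) A B hB
  field_simp
  linear_combination hkey
end

section
/- In the time-homogeneous Markov logit model — where for t ≥ 2, ℙ(W_t = 1 | U, W_1,…,W_{t−1}) = exp(α(U) + γ(U)·W_{t−1})/(1 + exp(α(U) + γ(U)·W_{t−1})) and, given U and (W_1,…,W_{t−1}), W_t is conditionally independent of nothing further (i.e., the process is first-order Markov given U) — the statistic S := (Σ_{t=2}^{T−1} W_t, Σ_{t=2}^{T} W_t·W_{t−1}, W_1, W_T) is sufficient for the assignment: W is conditionally independent of U given S. -/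
open MeasureTheory ProbabilityTheory
open scoped BigOperators

namespace MarkovLogitAux

/-- The sufficient statistic computed from a path. -/
def stat (n : ℕ) (w : Fin (n + 1) → Bool) : ℕ × ℕ × Bool × Bool :=
  (∑ t : Fin (n + 1), (if t ≠ 0 ∧ t ≠ Fin.last n ∧ w t then 1 else 0),
   ∑ i : Fin n, (if w i.succ ∧ w i.castSucc then 1 else 0),
   w 0, w (Fin.last n))

/-- The conditional pmf value. -/
noncomputable def pmfVal (n : ℕ) (w : Fin (n + 1) → Bool) (α γ p : ℝ) : ℝ :=
  (if w 0 then p else 1 - p) *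
  ∏ i : Fin n,
    (if w i.succ then
      Real.exp (α + γ * (if w i.castSucc then 1 else 0)) /
        (1 + Real.exp (α + γ * (if w i.castSucc then 1 else 0)))
    else
      1 / (1 + Real.exp (α + γ * (if w i.castSucc then 1 else 0))))

lemma count_succ (n : ℕ) (hn : n ≠ 0) (u : Fin (n + 1) → Bool) :
    (∑ i : Fin n, if u i.succ then 1 else 0) =
      (∑ t : Fin (n + 1), if t ≠ 0 ∧ t ≠ Fin.last n ∧ u t then 1 else 0)
        + (if u (Fin.last n) then (1 : ℕ) else 0) := by
  classical
  have h0l : (0 : Fin (n + 1)) ≠ Fin.last n := by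
    simp only [ne_eq, Fin.ext_iff, Fin.val_last, Fin.val_zero]
    omega
  have h1 : (∑ t : Fin (n + 1), if t ≠ 0 ∧ t ≠ Fin.last n ∧ u t then (1 : ℕ) else 0)
      = ∑ i : Fin n, if i.succ ≠ Fin.last n ∧ u i.succ then 1 else 0 := by
    rw [Fin.sum_univ_succ]
    simp [Fin.succ_ne_zero]
  have h2 : (∑ i : Fin n, if i.succ = Fin.last n ∧ u i.succ then (1 : ℕ) else 0)
      = if u (Fin.last n) then 1 else 0 := by
    have h3 : (∑ t : Fin (n + 1), if t = Fin.last n ∧ u t then (1 : ℕ) else 0)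
        = if u (Fin.last n) then 1 else 0 := by
      have hpt : ∀ t : Fin (n + 1), (if t = Fin.last n ∧ u t then (1 : ℕ) else 0)
          = if t = Fin.last n then (if u t then 1 else 0) else 0 := by
        intro t; by_cases h : t = Fin.last n <;> simp [h]
      simp_rw [hpt]
      rw [Finset.sum_ite_eq' Finset.univ (Fin.last n)]
      simp
    rw [← h3, Fin.sum_univ_succ]
    simp [h0l]
  rw [h1, ← h2, ← Finset.sum_add_distrib]
  refine Finset.sum_congr rfl fun i _ => ?_
  by_cases hl : i.succ = Fin.last n <;> by_cases hu : u i.succ <;> simp [hl, hu]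

lemma count_castSucc (n : ℕ) (hn : n ≠ 0) (u : Fin (n + 1) → Bool) :
    (∑ i : Fin n, if u i.castSucc then 1 else 0) =
      (∑ t : Fin (n + 1), if t ≠ 0 ∧ t ≠ Fin.last n ∧ u t then 1 else 0)
        + (if u 0 then (1 : ℕ) else 0) := by
  classical
  have hl0 : (Fin.last n) ≠ (0 : Fin (n + 1)) := by
    simp only [ne_eq, Fin.ext_iff, Fin.val_last, Fin.val_zero]
    omega
  have hcl : ∀ i : Fin n, i.castSucc ≠ Fin.last n := fun i => (Fin.castSucc_lt_last i).ne
  have h1 : (∑ t : Fin (n + 1), if t ≠ 0 ∧ t ≠ Fin.last n ∧ u t then (1 : ℕ) else 0)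
      = ∑ i : Fin n, if i.castSucc ≠ 0 ∧ u i.castSucc then 1 else 0 := by
    rw [Fin.sum_univ_castSucc]
    simp [hcl]
  have h2 : (∑ i : Fin n, if i.castSucc = 0 ∧ u i.castSucc then (1 : ℕ) else 0)
      = if u 0 then 1 else 0 := by
    have h3 : (∑ t : Fin (n + 1), if t = 0 ∧ u t then (1 : ℕ) else 0)
        = if u 0 then 1 else 0 := by
      have hpt : ∀ t : Fin (n + 1), (if t = 0 ∧ u t then (1 : ℕ) else 0)
          = if t = (0 : Fin (n + 1)) then (if u t then 1 else 0) else 0 := by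
        intro t; by_cases h : t = (0 : Fin (n + 1)) <;> simp [h]
      simp_rw [hpt]
      rw [Finset.sum_ite_eq' Finset.univ (0 : Fin (n + 1))]
      simp
    rw [← h3, Fin.sum_univ_castSucc]
    simp [hl0]
  rw [h1, ← h2, ← Finset.sum_add_distrib]
  refine Finset.sum_congr rfl fun i _ => ?_
  by_cases hl : i.castSucc = 0 <;> by_cases hu : u i.castSucc <;> simp [hl, hu]



lemma pmfVal_eq (n : ℕ) (hn : n ≠ 0) (w w' : Fin (n + 1) → Bool)
    (h : stat n w = stat n w') (α γ p : ℝ) :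
    pmfVal n w α γ p = pmfVal n w' α γ p := by
  classical
  have h1 : (∑ t : Fin (n + 1), if t ≠ 0 ∧ t ≠ Fin.last n ∧ w t then 1 else 0)
      = (∑ t : Fin (n + 1), if t ≠ 0 ∧ t ≠ Fin.last n ∧ w' t then (1:ℕ) else 0) :=
    congrArg (fun x : ℕ × ℕ × Bool × Bool => x.1) h
  have h2 : (∑ i : Fin n, if w i.succ ∧ w i.castSucc then 1 else 0)
      = (∑ i : Fin n, if w' i.succ ∧ w' i.castSucc then (1:ℕ) else 0) :=
    congrArg (fun x : ℕ × ℕ × Bool × Bool => x.2.1) h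
  have h0 : w 0 = w' 0 := congrArg (fun x : ℕ × ℕ × Bool × Bool => x.2.2.1) h
  have hl : w (Fin.last n) = w' (Fin.last n) :=
    congrArg (fun x : ℕ × ℕ × Bool × Bool => x.2.2.2) h
  -- counts agree
  have hsucc : (∑ i : Fin n, if w i.succ then (1:ℕ) else 0)
      = ∑ i : Fin n, if w' i.succ then 1 else 0 := by
    rw [count_succ n hn w, count_succ n hn w', h1, hl]
  have hcast : (∑ i : Fin n, if w i.castSucc then (1:ℕ) else 0)
      = ∑ i : Fin n, if w' i.castSucc then 1 else 0 := by
    rw [count_castSucc n hn w, count_castSucc n hn w', h1, h0]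
  have hcardP : (Finset.univ.filter fun i : Fin n => w i.castSucc = true).card
      = (Finset.univ.filter fun i : Fin n => w' i.castSucc = true).card := by
    rw [Finset.card_filter, Finset.card_filter]
    exact hcast
  have hcardN : (Finset.univ.filter fun i : Fin n => ¬ w i.castSucc = true).card
      = (Finset.univ.filter fun i : Fin n => ¬ w' i.castSucc = true).card := by
    have c1 := Finset.card_filter_add_card_filter_not
      (s := (Finset.univ : Finset (Fin n))) (p := fun i => w i.castSucc = true)
    have c2 := Finset.card_filter_add_card_filter_not
      (s := (Finset.univ : Finset (Fin n))) (p := fun i => w' i.castSucc = true)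
    omega
  -- canonical form
  have form : ∀ u : Fin (n + 1) → Bool, pmfVal n u α γ p =
      (if u 0 then p else 1 - p) *
      (Real.exp (α * (∑ i : Fin n, if u i.succ then (1:ℝ) else 0)
          + γ * (∑ i : Fin n, if u i.succ ∧ u i.castSucc then (1:ℝ) else 0)) /
        ((1 + Real.exp (α + γ)) ^ (Finset.univ.filter fun i : Fin n => u i.castSucc = true).card *
         (1 + Real.exp α) ^ (Finset.univ.filter fun i : Fin n => ¬ u i.castSucc = true).card)) := by
    intro u
    unfold pmfVal
    congr 1
    have hfac : ∀ i : Fin n,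
        (if u i.succ then
          Real.exp (α + γ * (if u i.castSucc then (1:ℝ) else 0)) /
            (1 + Real.exp (α + γ * (if u i.castSucc then (1:ℝ) else 0)))
        else 1 / (1 + Real.exp (α + γ * (if u i.castSucc then (1:ℝ) else 0))))
        = Real.exp ((α + γ * (if u i.castSucc then (1:ℝ) else 0)) * (if u i.succ then 1 else 0)) /
          (if u i.castSucc then (1 + Real.exp (α + γ)) else (1 + Real.exp α)) := by
      intro i
      by_cases hs : u i.succ <;> by_cases hc : u i.castSucc <;>
        simp [hs, hc, Real.exp_zero]
    rw [Finset.prod_congr rfl fun i _ => hfac i, Finset.prod_div_distrib, ← Real.exp_sum]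
    congr 1
    · congr 1
      rw [Finset.mul_sum, Finset.mul_sum, ← Finset.sum_add_distrib]
      refine Finset.sum_congr rfl fun i _ => ?_
      by_cases hs : u i.succ <;> by_cases hc : u i.castSucc <;>
        simp [hs, hc]
    · rw [Finset.prod_ite _ _, Finset.prod_const, Finset.prod_const]
  -- real versions of count equalities
  have e1 : (∑ i : Fin n, if w i.succ then (1:ℝ) else 0)
      = ∑ i : Fin n, if w' i.succ then (1:ℝ) else 0 := by
    have := congrArg (Nat.cast : ℕ → ℝ) hsucc
    push_cast at this
    convert this using 2
  have e2 : (∑ i : Fin n, if w i.succ ∧ w i.castSucc then (1:ℝ) else 0)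
      = ∑ i : Fin n, if w' i.succ ∧ w' i.castSucc then (1:ℝ) else 0 := by
    have := congrArg (Nat.cast : ℕ → ℝ) h2
    push_cast at this
    convert this using 2
  rw [form w, form w', h0, e1, e2, hcardP, hcardN]


lemma condexp_comap_discrete {Ω V : Type*} {mΩ : MeasurableSpace Ω} [MeasurableSpace V]
    [MeasurableSingletonClass V] [Countable V]
    (μ : Measure Ω) [IsProbabilityMeasure μ] {S : Ω → V} (hS : Measurable S)
    (R : Finset V) (hR : ∀ ω, S ω ∈ R)
    {f : Ω → ℝ} (hf : Integrable f μ) :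
    μ[f | MeasurableSpace.comap S inferInstance] =ᵐ[μ]
      fun ω => (∫ x in S ⁻¹' {S ω}, f x ∂μ) / (μ (S ⁻¹' {S ω})).toReal := by
  classical
  have hm : MeasurableSpace.comap S inferInstance ≤ mΩ := hS.comap_le
  set c : V → ℝ := fun v => (∫ x in S ⁻¹' {v}, f x ∂μ) / (μ (S ⁻¹' {v})).toReal with hc_def
  have hc : Measurable c := measurable_of_countable c
  have hSm : Measurable[MeasurableSpace.comap S inferInstance] S := fun s hs => ⟨s, hs, rfl⟩
  have key_atom : ∀ v : V, ∫ x in S ⁻¹' {v}, c (S x) ∂μ = ∫ x in S ⁻¹' {v}, f x ∂μ := by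
    intro v
    have hmeas : MeasurableSet (S ⁻¹' {v}) := hS (measurableSet_singleton v)
    have h1 : ∫ x in S ⁻¹' {v}, c (S x) ∂μ = ∫ x in S ⁻¹' {v}, c v ∂μ :=
      setIntegral_congr_fun hmeas fun x hx => by
        simp only [Set.mem_preimage, Set.mem_singleton_iff] at hx
        rw [hx]
    rw [h1, setIntegral_const, smul_eq_mul]
    by_cases h0 : μ (S ⁻¹' {v}) = 0
    · rw [Measure.restrict_eq_zero.mpr h0, integral_zero_measure, measureReal_def, h0]
      simp
    · rw [hc_def]
      simp only []
      rw [mul_comm, measureReal_def, div_mul_cancel₀ _ (ENNReal.toReal_ne_zero.mpr ⟨h0, measure_ne_top μ _⟩)]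
  have hbound : ∀ ω, ‖c (S ω)‖ ≤ ∑ v ∈ R, ‖c v‖ := fun ω =>
    Finset.single_le_sum (f := fun v => ‖c v‖) (fun v _ => norm_nonneg _) (hR ω)
  have hint : Integrable (fun ω => c (S ω)) μ :=
    Integrable.mono' (integrable_const _) ((hc.comp hS).aestronglyMeasurable)
      (ae_of_all _ hbound)
  haveI : SigmaFinite (μ.trim hm) := by
    haveI : IsFiniteMeasure (μ.trim hm) := isFiniteMeasure_trim hm
    infer_instance
  refine (ae_eq_condExp_of_forall_setIntegral_eq hm hf
      (fun s _ _ => hint.integrableOn) (fun A hA _ => ?_) ?_).symm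
  · obtain ⟨C, hC, rfl⟩ := hA
    have hdecomp : S ⁻¹' C = ⋃ v ∈ R.filter (fun v => v ∈ C), S ⁻¹' {v} := by
      ext ω
      simp only [Set.mem_preimage, Set.mem_iUnion, Finset.mem_filter, Set.mem_singleton_iff,
        exists_prop]
      constructor
      · intro h; exact ⟨S ω, ⟨hR ω, h⟩, rfl⟩
      · rintro ⟨v, ⟨-, hv⟩, h⟩; exact h ▸ hv
    have hdisj : Set.Pairwise ↑(R.filter (fun v => v ∈ C)) (Function.onFun Disjoint fun v => S ⁻¹' {v}) := by
      intro v _ v' _ hne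
      simp only [Function.onFun]
      refine Set.disjoint_left.mpr fun ω h1 h2 => ?_
      simp only [Set.mem_preimage, Set.mem_singleton_iff] at h1 h2
      exact hne (h1.symm.trans h2)
    rw [hdecomp,
      integral_biUnion_finset _ (fun v _ => hS (measurableSet_singleton v)) hdisj
        (fun v _ => hint.integrableOn),
      integral_biUnion_finset _ (fun v _ => hS (measurableSet_singleton v)) hdisj
        (fun v _ => hf.integrableOn)]
    exact Finset.sum_congr rfl fun v _ => key_atom v
  · exact ((hc.comp hSm).stronglyMeasurable).aestronglyMeasurable

lemma condexp_indicator_discrete {Ω V : Type*} {mΩ : MeasurableSpace Ω} [MeasurableSpace V]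
    [MeasurableSingletonClass V] [Countable V]
    (μ : Measure Ω) [IsProbabilityMeasure μ] {S : Ω → V} (hS : Measurable S)
    (R : Finset V) (hR : ∀ ω, S ω ∈ R) (A : Set Ω) (hA : MeasurableSet A) :
    (μ⟦A | MeasurableSpace.comap S inferInstance⟧) =ᵐ[μ]
      fun ω => (μ (A ∩ S ⁻¹' {S ω})).toReal / (μ (S ⁻¹' {S ω})).toReal := by
  have h := condexp_comap_discrete μ hS R hR
      (f := A.indicator fun _ => (1 : ℝ)) ((integrable_const 1).indicator hA)
  refine h.trans (ae_of_all _ fun ω => ?_)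
  simp only []
  rw [setIntegral_indicator hA, setIntegral_const, smul_eq_mul, mul_one, Set.inter_comm, measureReal_def]


end MarkovLogitAux
/-- **Markov logit model sufficiency.**
In the time-homogeneous first-order Markov logit model given `U` — where the
initial value `W_1` has an arbitrary conditional distribution given `U` and, for
`t ≥ 2`, `ℙ(W_t = 1 | U, W_1,…,W_{t−1}) = exp(α(U) + γ(U)·W_{t−1})/(1 + exp(α(U) + γ(U)·W_{t−1}))`
(equivalently, the conditional pmf of `W` given `U` factorizes as below) — the
statistic `S = (Σ_{t=2}^{T−1} W_t, Σ_{t=2}^T W_t·W_{t−1}, W_1, W_T)` is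
sufficient: `W ⫫ U | S`. Here time is indexed by `Fin (n+1)` with `T = n+1 ≥ 3`. -/
theorem markov_logit_sufficiency
    {Ωs 𝓤 : Type*} [MeasurableSpace Ωs] [StandardBorelSpace Ωs] [Nonempty Ωs]
    [MeasurableSpace 𝓤]
    (μ : Measure Ωs) [IsProbabilityMeasure μ]
    (n : ℕ) (hn : 2 ≤ n)  -- T = n + 1 ≥ 3 periods
    (W : Ωs → Fin (n + 1) → Bool) (hW : Measurable W)
    (U : Ωs → 𝓤) (hU : Measurable U)
    (a g : 𝓤 → ℝ)
    -- the conditional probability of the (arbitrary) initial condition given U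
    (p1 : 𝓤 → ℝ)
    -- the Markov-logit factorization of the conditional pmf of W given U
    (hpmf : ∀ w : Fin (n + 1) → Bool,
      μ[(fun ω => if W ω = w then (1 : ℝ) else 0) |
          MeasurableSpace.comap U inferInstance]
        =ᵐ[μ] fun ω =>
          (if w 0 then p1 (U ω) else 1 - p1 (U ω)) *
          ∏ i : Fin n,
            (if w i.succ then
              Real.exp (a (U ω) + g (U ω) * (if w i.castSucc then 1 else 0)) /
                (1 + Real.exp (a (U ω) + g (U ω) * (if w i.castSucc then 1 else 0)))
            else
              1 / (1 + Real.exp (a (U ω) + g (U ω) * (if w i.castSucc then 1 else 0)))))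
    -- the sufficient statistic S
    (S : Ωs → ℕ × ℕ × Bool × Bool)
    (hSdef : ∀ ω, S ω =
      (∑ t : Fin (n + 1), (if t ≠ 0 ∧ t ≠ Fin.last n ∧ W ω t then 1 else 0),
       ∑ i : Fin n, (if W ω i.succ ∧ W ω i.castSucc then 1 else 0),
       W ω 0, W ω (Fin.last n)))
    (hS : Measurable S) :
    CondIndepFun (MeasurableSpace.comap S inferInstance) hS.comap_le W U μ := by
  classical
  have hn0 : n ≠ 0 := by omega
  rw [condIndepFun_iff_condExp_inter_preimage_eq_mul hW hU]
  intro s t hs ht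
  have hSW : ∀ ω, S ω = MarkovLogitAux.stat n (W ω) := fun ω => hSdef ω
  set R : Finset (ℕ × ℕ × Bool × Bool) :=
    Finset.image (MarkovLogitAux.stat n) Finset.univ with hR_def
  have hR : ∀ ω, S ω ∈ R := fun ω => by
    rw [hSW]; exact Finset.mem_image_of_mem _ (Finset.mem_univ _)
  have hA1 := MarkovLogitAux.condexp_indicator_discrete μ hS R hR (W ⁻¹' s ∩ U ⁻¹' t)
      ((hW hs).inter (hU ht))
  have hA2 := MarkovLogitAux.condexp_indicator_discrete μ hS R hR (W ⁻¹' s) (hW hs)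
  have hA3 := MarkovLogitAux.condexp_indicator_discrete μ hS R hR (U ⁻¹' t) (hU ht)
  -- indicator functions are integrable
  have hind : ∀ w : Fin (n + 1) → Bool,
      (fun ω => if W ω = w then (1 : ℝ) else 0) = (W ⁻¹' {w}).indicator (fun _ => (1 : ℝ)) := by
    intro w; funext ω; by_cases h : W ω = w <;> simp [Set.indicator, h]
  have hint : ∀ w : Fin (n + 1) → Bool,
      Integrable (fun ω => if W ω = w then (1 : ℝ) else 0) μ := by
    intro w; rw [hind w]
    exact (integrable_const 1).indicator (hW (measurableSet_singleton w))
  -- key invariance of joint measures under equal statistics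
  have hval : ∀ (w'' : Fin (n + 1) → Bool) (t' : Set 𝓤), MeasurableSet t' →
      ∫ x in U ⁻¹' t', (if W x = w'' then (1 : ℝ) else 0) ∂μ
        = (μ (W ⁻¹' {w''} ∩ U ⁻¹' t')).toReal := by
    intro w'' t' ht'
    calc ∫ x in U ⁻¹' t', (if W x = w'' then (1 : ℝ) else 0) ∂μ
        = ∫ x in U ⁻¹' t', (W ⁻¹' {w''}).indicator (fun _ => (1 : ℝ)) x ∂μ := by rw [hind w'']
      _ = ∫ x in U ⁻¹' t' ∩ W ⁻¹' {w''}, (1 : ℝ) ∂μ :=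
          setIntegral_indicator (hW (measurableSet_singleton _))
      _ = (μ (U ⁻¹' t' ∩ W ⁻¹' {w''})).toReal := by
          rw [setIntegral_const, smul_eq_mul, mul_one, measureReal_def]
      _ = (μ (W ⁻¹' {w''} ∩ U ⁻¹' t')).toReal := by rw [Set.inter_comm]
  have hkey : ∀ (w w' : Fin (n + 1) → Bool),
      MarkovLogitAux.stat n w = MarkovLogitAux.stat n w' →
      ∀ (t' : Set 𝓤), MeasurableSet t' →
        μ (W ⁻¹' {w} ∩ U ⁻¹' t') = μ (W ⁻¹' {w'} ∩ U ⁻¹' t') := by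
    intro w w' hww t' ht'
    have hmU : MeasurableSpace.comap U inferInstance ≤ _ := hU.comap_le
    have hCm : MeasurableSet[MeasurableSpace.comap U inferInstance] (U ⁻¹' t') := ⟨t', ht', rfl⟩
    have hae : (μ[(fun ω => if W ω = w then (1 : ℝ) else 0) |
          MeasurableSpace.comap U inferInstance])
        =ᵐ[μ] (μ[(fun ω => if W ω = w' then (1 : ℝ) else 0) |
          MeasurableSpace.comap U inferInstance]) := by
      refine (hpmf w).trans (Filter.EventuallyEq.trans (ae_of_all _ fun ω => ?_) (hpmf w').symm)
      exact MarkovLogitAux.pmfVal_eq n hn0 w w' hww (a (U ω)) (g (U ω)) (p1 (U ω))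
    have hInt : ∫ x in U ⁻¹' t', (if W x = w then (1 : ℝ) else 0) ∂μ
        = ∫ x in U ⁻¹' t', (if W x = w' then (1 : ℝ) else 0) ∂μ := by
      rw [← setIntegral_condExp hmU (hint w) hCm, ← setIntegral_condExp hmU (hint w') hCm]
      exact setIntegral_congr_ae (hU ht') (hae.mono fun ω h _ => h)
    rw [hval w t' ht', hval w' t' ht'] at hInt
    exact (ENNReal.toReal_eq_toReal_iff' (measure_ne_top μ _) (measure_ne_top μ _)).mp hInt
  -- measure of a union of fibers
  have hsum : ∀ (B : Finset (Fin (n + 1) → Bool)) (t' : Set 𝓤), MeasurableSet t' →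
      μ (W ⁻¹' (↑B : Set _) ∩ U ⁻¹' t') = ∑ w ∈ B, μ (W ⁻¹' {w} ∩ U ⁻¹' t') := by
    intro B t' ht'
    have hBU : W ⁻¹' (↑B : Set _) ∩ U ⁻¹' t' = ⋃ w ∈ B, (W ⁻¹' {w} ∩ U ⁻¹' t') := by
      ext ω
      simp only [Set.mem_inter_iff, Set.mem_preimage, Finset.mem_coe, Set.mem_iUnion,
        Set.mem_singleton_iff, exists_prop]
      constructor
      · rintro ⟨h1, h2⟩; exact ⟨W ω, h1, rfl, h2⟩
      · rintro ⟨w, hw, h1, h2⟩; exact ⟨h1 ▸ hw, h2⟩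
    rw [hBU, measure_biUnion_finset ?_ fun w _ =>
      ((hW (measurableSet_singleton w)).inter (hU ht'))]
    intro w _ w' _ hne
    simp only [Function.onFun]
    refine Set.disjoint_left.mpr fun ω h1 h2 => ?_
    simp only [Set.mem_inter_iff, Set.mem_preimage, Set.mem_singleton_iff] at h1 h2
    exact hne (h1.1.symm.trans h2.1)
  -- atoms with zero measure are a.e. avoided
  have hnull : ∀ᵐ ω ∂μ, μ (S ⁻¹' {S ω}) ≠ 0 := by
    rw [ae_iff]
    refine measure_mono_null (fun ω h => ?_)
      ((measure_biUnion_null_iff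
        (Set.to_countable {v : ℕ × ℕ × Bool × Bool | μ (S ⁻¹' {v}) = 0})).2
        fun v hv => hv)
    simp only [Set.mem_setOf_eq, not_not] at h
    exact Set.mem_biUnion h rfl
  filter_upwards [hA1, hA2, hA3, hnull] with ω h1 h2 h3 h0
  rw [h1, h2, h3]
  -- pointwise computation at the atom of ω
  set v : ℕ × ℕ × Bool × Bool := S ω with hv_def
  have hvW : MarkovLogitAux.stat n (W ω) = v := (hSW ω).symm
  set E : Finset (Fin (n + 1) → Bool) :=
    Finset.univ.filter (fun w => MarkovLogitAux.stat n w = v) with hE_def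
  set Es : Finset (Fin (n + 1) → Bool) :=
    Finset.univ.filter (fun w => w ∈ s ∧ MarkovLogitAux.stat n w = v) with hEs_def
  have hstatE : ∀ w ∈ E, MarkovLogitAux.stat n w = MarkovLogitAux.stat n (W ω) := by
    intro w hw
    rw [hE_def] at hw
    simp only [Finset.mem_filter, Finset.mem_univ, true_and] at hw
    rw [hw, hvW]
  have hstatEs : ∀ w ∈ Es, MarkovLogitAux.stat n w = MarkovLogitAux.stat n (W ω) := by
    intro w hw
    rw [hEs_def] at hw
    simp only [Finset.mem_filter, Finset.mem_univ, true_and] at hw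
    rw [hw.2, hvW]
  -- the four measures
  have hm1 : μ ((W ⁻¹' s ∩ U ⁻¹' t) ∩ S ⁻¹' {v})
      = Es.card • μ (W ⁻¹' {W ω} ∩ U ⁻¹' t) := by
    have hset : (W ⁻¹' s ∩ U ⁻¹' t) ∩ S ⁻¹' {v} = W ⁻¹' (↑Es : Set _) ∩ U ⁻¹' t := by
      ext ω'
      simp only [Set.mem_inter_iff, Set.mem_preimage, Set.mem_singleton_iff, Finset.mem_coe,
        hEs_def, Finset.mem_filter, Finset.mem_univ, true_and, hSW ω']
      tauto
    rw [hset, hsum Es t ht,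
      Finset.sum_congr rfl (fun w hw => hkey w (W ω) (hstatEs w hw) t ht),
      Finset.sum_const]
  have hm2 : μ ((W ⁻¹' s) ∩ S ⁻¹' {v})
      = Es.card • μ (W ⁻¹' {W ω}) := by
    have hset : (W ⁻¹' s) ∩ S ⁻¹' {v} = W ⁻¹' (↑Es : Set _) ∩ U ⁻¹' Set.univ := by
      ext ω'
      simp only [Set.mem_inter_iff, Set.mem_preimage, Set.mem_singleton_iff, Finset.mem_coe,
        hEs_def, Finset.mem_filter, Finset.mem_univ, true_and, hSW ω', Set.mem_univ, and_true]
    rw [hset, hsum Es Set.univ MeasurableSet.univ,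
      Finset.sum_congr rfl (fun w hw => hkey w (W ω) (hstatEs w hw) Set.univ MeasurableSet.univ),
      Finset.sum_const, Set.preimage_univ, Set.inter_univ]
  have hm3 : μ ((U ⁻¹' t) ∩ S ⁻¹' {v})
      = E.card • μ (W ⁻¹' {W ω} ∩ U ⁻¹' t) := by
    have hset : (U ⁻¹' t) ∩ S ⁻¹' {v} = W ⁻¹' (↑E : Set _) ∩ U ⁻¹' t := by
      ext ω'
      simp only [Set.mem_inter_iff, Set.mem_preimage, Set.mem_singleton_iff, Finset.mem_coe,
        hE_def, Finset.mem_filter, Finset.mem_univ, true_and, hSW ω']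
      tauto
    rw [hset, hsum E t ht,
      Finset.sum_congr rfl (fun w hw => hkey w (W ω) (hstatE w hw) t ht),
      Finset.sum_const]
  have hmD : μ (S ⁻¹' {v}) = E.card • μ (W ⁻¹' {W ω}) := by
    have hset : S ⁻¹' {v} = W ⁻¹' (↑E : Set _) ∩ U ⁻¹' Set.univ := by
      ext ω'
      simp only [Set.mem_inter_iff, Set.mem_preimage, Set.mem_singleton_iff, Finset.mem_coe,
        hE_def, Finset.mem_filter, Finset.mem_univ, true_and, hSW ω', Set.mem_univ, and_true]
    rw [hset, hsum E Set.univ MeasurableSet.univ,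
      Finset.sum_congr rfl (fun w hw => hkey w (W ω) (hstatE w hw) Set.univ MeasurableSet.univ),
      Finset.sum_const, Set.preimage_univ, Set.inter_univ]
  -- final arithmetic
  have hD0 : ((μ (S ⁻¹' {v})).toReal) ≠ 0 :=
    ENNReal.toReal_ne_zero.mpr ⟨h0, measure_ne_top μ _⟩
  set x : ℝ := (μ (W ⁻¹' {W ω} ∩ U ⁻¹' t)).toReal with hx_def
  set y : ℝ := (μ (W ⁻¹' {W ω})).toReal with hy_def
  have t1 : (μ ((W ⁻¹' s ∩ U ⁻¹' t) ∩ S ⁻¹' {v})).toReal = (Es.card : ℝ) * x := by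
    rw [hm1]; simp [nsmul_eq_mul, ENNReal.toReal_mul]; exact Or.inl rfl
  have t2 : (μ ((W ⁻¹' s) ∩ S ⁻¹' {v})).toReal = (Es.card : ℝ) * y := by
    rw [hm2]; simp [nsmul_eq_mul, ENNReal.toReal_mul]; exact Or.inl rfl
  have t3 : (μ ((U ⁻¹' t) ∩ S ⁻¹' {v})).toReal = (E.card : ℝ) * x := by
    rw [hm3]; simp [nsmul_eq_mul, ENNReal.toReal_mul]; exact Or.inl rfl
  have tD : (μ (S ⁻¹' {v})).toReal = (E.card : ℝ) * y := by
    rw [hmD]; simp [nsmul_eq_mul, ENNReal.toReal_mul]; exact Or.inl rfl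
  rw [t1, t2, t3, tD]
  have hEy : (E.card : ℝ) * y ≠ 0 := tD ▸ hD0
  rw [div_mul_div_comm, div_eq_div_iff hEy (mul_ne_zero hEy hEy)]
  ring
end

section
/- The set 𝕎_outc is non-empty if and only if the support matrix 𝐖 contains, up to permutation of the two selected rows and the two selected columns, at least one of the following 2×2 submatrices: W₁ = [[0,1],[0,0]], W₂ = [[1,1],[0,1]], W₃ = [[0,1],[1,0]]. That is, 𝕎_outc ≠ ∅ iff there exist row indices k₁ ≠ k₂ and time indices t₁ ≠ t₂ such that the 2×2 submatrix (𝐖_{k_a t_b})_{a,b∈{1,2}} equals one of W₁, W₂, W₃ after possibly permuting its rows and columns. -/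
open scoped BigOperators

/-- Sum of a function supported on two points times `g`. -/
lemma two_point_sum {ι : Type*} [Fintype ι] [DecidableEq ι]
    (x₁ x₂ : ι) (hx : x₁ ≠ x₂) (b c : ℝ) (g : ι → ℝ) :
    ∑ x, (if x = x₁ then b else if x = x₂ then c else 0) * g x
      = b * g x₁ + c * g x₂ := by
  have h : ∀ x, (if x = x₁ then b else if x = x₂ then c else 0) * g x
      = (if x = x₁ then b * g x else 0) + (if x = x₂ then c * g x else 0) := by
    intro x
    by_cases h1 : x = x₁
    · subst h1
      simp [hx]
    · by_cases h2 : x = x₂ <;> simp [h1, h2, Ne.symm hx]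
  rw [Finset.sum_congr rfl fun x _ => h x, Finset.sum_add_distrib]
  simp [Finset.sum_ite_eq']

/-- Classification of a pattern-free pair of 0/1 rows. -/
lemma pair_all_ones {T : ℕ} (r s : Fin T → ℝ)
    (hr : ∀ t, r t = 0 ∨ r t = 1) (hs : ∀ t, s t = 0 ∨ s t = 1)
    (hpat : ∀ t₁ t₂ : Fin T, t₁ ≠ t₂ →
      ¬((r t₁ = 0 ∧ r t₂ = 1 ∧ s t₁ = 0 ∧ s t₂ = 0) ∨
        (r t₁ = 1 ∧ r t₂ = 1 ∧ s t₁ = 0 ∧ s t₂ = 1) ∨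
        (r t₁ = 0 ∧ r t₂ = 1 ∧ s t₁ = 1 ∧ s t₂ = 0)))
    (t₀ : Fin T) (h1 : r t₀ = 1) (h0 : s t₀ = 0) :
    ∀ t, r t = 1 ∧ s t = 0 := by
  intro t
  by_cases htt : t = t₀
  · subst htt; exact ⟨h1, h0⟩
  · rcases hr t with h | h <;> rcases hs t with h' | h'
    · exact absurd (Or.inl ⟨h, h1, h', h0⟩) (hpat t t₀ htt)
    · exact absurd (Or.inr (Or.inr ⟨h, h1, h', h0⟩)) (hpat t t₀ htt)
    · exact ⟨h, h'⟩
    · exact absurd (Or.inr (Or.inl ⟨h1, h, h0, h'⟩)) (hpat t₀ t (Ne.symm htt))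

/-- Construction of a feasible weight array from scalar data. -/
lemma construct_w
    (T K : ℕ) (hT : 0 < T)
    (Wmat : Fin K → Fin T → ℝ)
    (π : Fin K → ℝ) (hπpos : ∀ k, 0 < π k)
    (k₁ k₂ : Fin K) (t₁ t₂ : Fin T) (hk : k₁ ≠ k₂) (ht : t₁ ≠ t₂) (a : ℝ)
    (hA' : π k₁ * (a * (Wmat k₁ t₁ - Wmat k₁ t₂))
            - π k₁ * (a * (Wmat k₂ t₁ - Wmat k₂ t₂)) = T)
    (hB1 : 0 ≤ a * (Wmat k₁ t₁ - Wmat k₁ t₂))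
    (hB2 : a * (Wmat k₂ t₁ - Wmat k₂ t₂) ≤ 0) :
    {w : Fin K → Fin T → ℝ |
        (1 / (T : ℝ)) * ∑ k, ∑ t, π k * w k t * Wmat k t = 1 ∧
        (∀ k, 0 ≤ (1 / (T : ℝ)) * ∑ t, w k t * Wmat k t) ∧
        (∀ k, ∑ t, w k t = 0) ∧
        (∀ t, ∑ k, π k * w k t = 0)}.Nonempty := by
  have hTpos : (0:ℝ) < T := by exact_mod_cast hT
  have hπ1 := hπpos k₁
  have hπ2 := hπpos k₂
  set ρ : Fin K → ℝ := fun k => if k = k₁ then 1 else if k = k₂ then -(π k₁ / π k₂) else 0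
    with hρ
  set u : Fin T → ℝ := fun t => if t = t₁ then a else if t = t₂ then -a else 0 with hu
  refine ⟨fun k t => ρ k * u t, ?_, ?_, ?_, ?_⟩
  · -- constraint A
    have hsum : ∀ k : Fin K, ∑ t, π k * (ρ k * u t) * Wmat k t
        = π k * ρ k * (a * Wmat k t₁ - a * Wmat k t₂) := by
      intro k
      have := two_point_sum t₁ t₂ ht a (-a) (fun t => Wmat k t)
      calc ∑ t, π k * (ρ k * u t) * Wmat k t
          = π k * ρ k * ∑ t, u t * Wmat k t := by
            rw [Finset.mul_sum]; exact Finset.sum_congr rfl fun t _ => by ring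
        _ = π k * ρ k * (a * Wmat k t₁ - a * Wmat k t₂) := by
            rw [hu]; rw [this]; ring
    rw [Finset.sum_congr rfl fun k _ => hsum k]
    have key : ∑ k, (fun k => π k * ρ k * (a * Wmat k t₁ - a * Wmat k t₂)) k
        = (1:ℝ) * (π k₁ * (a * Wmat k₁ t₁ - a * Wmat k₁ t₂))
          + (-(π k₁ / π k₂)) * (π k₂ * (a * Wmat k₂ t₁ - a * Wmat k₂ t₂)) := by
      have := two_point_sum k₁ k₂ hk (1:ℝ) (-(π k₁ / π k₂))
        (fun k => π k * (a * Wmat k t₁ - a * Wmat k t₂))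
      rw [← this]
      exact Finset.sum_congr rfl fun k _ => by rw [hρ]; ring
    rw [key]
    have h2 : -(π k₁ / π k₂) * (π k₂ * (a * Wmat k₂ t₁ - a * Wmat k₂ t₂))
        = -(π k₁ * (a * (Wmat k₂ t₁ - Wmat k₂ t₂))) := by
      field_simp
    rw [h2]
    have : (1:ℝ) * (π k₁ * (a * Wmat k₁ t₁ - a * Wmat k₁ t₂))
        = π k₁ * (a * (Wmat k₁ t₁ - Wmat k₁ t₂)) := by ring
    rw [this]
    rw [show π k₁ * (a * (Wmat k₁ t₁ - Wmat k₁ t₂))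
        + -(π k₁ * (a * (Wmat k₂ t₁ - Wmat k₂ t₂))) = (T:ℝ) by linarith [hA']]
    field_simp
  · -- constraint B
    intro k
    have hsum : ∑ t, (ρ k * u t) * Wmat k t
        = ρ k * (a * (Wmat k t₁ - Wmat k t₂)) := by
      have := two_point_sum t₁ t₂ ht a (-a) (fun t => Wmat k t)
      calc ∑ t, (ρ k * u t) * Wmat k t
          = ρ k * ∑ t, u t * Wmat k t := by
            rw [Finset.mul_sum]; exact Finset.sum_congr rfl fun t _ => by ring
        _ = ρ k * (a * (Wmat k t₁ - Wmat k t₂)) := by rw [hu]; rw [this]; ring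
    rw [hsum]
    have h1T : 0 ≤ 1 / (T:ℝ) := by positivity
    apply mul_nonneg h1T
    by_cases hk1 : k = k₁
    · subst hk1; simp only [hρ, if_pos rfl]; linarith [hB1]
    · by_cases hk2 : k = k₂
      · have hρk : ρ k = -(π k₁ / π k₂) := by rw [hρ]; simp [hk1, hk2, Ne.symm hk]
        rw [hρk, hk2]
        have hq : 0 < π k₁ / π k₂ := by positivity
        nlinarith [hB2, hq]
      · simp [hρ, hk1, hk2]
  · -- constraint C
    intro k
    have := two_point_sum t₁ t₂ ht a (-a) (fun _ => (1:ℝ))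
    calc ∑ t, ρ k * u t = ρ k * ∑ t, u t * 1 := by
          rw [Finset.mul_sum]; exact Finset.sum_congr rfl fun t _ => by ring
      _ = 0 := by rw [hu]; rw [this]; ring
  · -- constraint D
    intro t
    have := two_point_sum k₁ k₂ hk (1:ℝ) (-(π k₁ / π k₂)) (fun k => π k * u t)
    calc ∑ k, π k * (ρ k * u t) = ∑ k, ρ k * (π k * u t) := by
          exact Finset.sum_congr rfl fun k _ => by ring
      _ = 1 * (π k₁ * u t) + (-(π k₁ / π k₂)) * (π k₂ * u t) := by rw [hρ]; rw [this]
      _ = 0 := by field_simp; ring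

/-- **Non-emptiness of 𝕎_outc.**
The set `𝕎_outc` of outcome-model weights is non-empty if and only if the
support matrix `𝐖` contains, up to permutations of the two selected rows and
the two selected columns, one of the 2×2 submatrices
`[[0,1],[0,0]]`, `[[1,1],[0,1]]`, `[[0,1],[1,0]]`.  (Permutations of the rows
and columns of the 2×2 submatrix are captured by the ordered choices of the
indices `k₁ ≠ k₂` and `t₁ ≠ t₂`.) -/
theorem Woutc_nonempty_iff
    (T K : ℕ) (hT : 0 < T) (hK : 0 < K)
    (Wmat : Fin K → Fin T → ℝ)
    (hW01 : ∀ k t, Wmat k t = 0 ∨ Wmat k t = 1)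
    (hWdistinct : Function.Injective Wmat)
    (π : Fin K → ℝ) (hπpos : ∀ k, 0 < π k) (hπsum : ∑ k, π k = 1) :
    {w : Fin K → Fin T → ℝ |
        (1 / (T : ℝ)) * ∑ k, ∑ t, π k * w k t * Wmat k t = 1 ∧
        (∀ k, 0 ≤ (1 / (T : ℝ)) * ∑ t, w k t * Wmat k t) ∧
        (∀ k, ∑ t, w k t = 0) ∧
        (∀ t, ∑ k, π k * w k t = 0)}.Nonempty ↔
      ∃ (k₁ k₂ : Fin K) (t₁ t₂ : Fin T), k₁ ≠ k₂ ∧ t₁ ≠ t₂ ∧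
        ((Wmat k₁ t₁ = 0 ∧ Wmat k₁ t₂ = 1 ∧ Wmat k₂ t₁ = 0 ∧ Wmat k₂ t₂ = 0) ∨
         (Wmat k₁ t₁ = 1 ∧ Wmat k₁ t₂ = 1 ∧ Wmat k₂ t₁ = 0 ∧ Wmat k₂ t₂ = 1) ∨
         (Wmat k₁ t₁ = 0 ∧ Wmat k₁ t₂ = 1 ∧ Wmat k₂ t₁ = 1 ∧ Wmat k₂ t₂ = 0)) := by
  have hTpos : (0:ℝ) < T := by exact_mod_cast hT
  constructor
  · rintro ⟨w, hA, hB, hC, hD⟩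
    by_contra hR
    have hR' : ∀ (p q : Fin K) (s₁ s₂ : Fin T), p ≠ q → s₁ ≠ s₂ →
        ¬((Wmat p s₁ = 0 ∧ Wmat p s₂ = 1 ∧ Wmat q s₁ = 0 ∧ Wmat q s₂ = 0) ∨
          (Wmat p s₁ = 1 ∧ Wmat p s₂ = 1 ∧ Wmat q s₁ = 0 ∧ Wmat q s₂ = 1) ∨
          (Wmat p s₁ = 0 ∧ Wmat p s₂ = 1 ∧ Wmat q s₁ = 1 ∧ Wmat q s₂ = 0)) := by
      intro p q s₁ s₂ h1 h2 h3
      exact hR ⟨p, q, s₁, s₂, h1, h2, h3⟩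
    rcases Nat.lt_or_ge K 2 with hK2 | hK2
    · -- K = 1
      have hK1 : K = 1 := by omega
      subst hK1
      have hw0 : ∀ t, w 0 t = 0 := by
        intro t
        have hd := hD t
        rw [Fin.sum_univ_one] at hd
        have hπ0 := (hπpos 0).ne'
        rcases mul_eq_zero.mp hd with h | h
        · exact absurd h hπ0
        · exact h
      rw [Fin.sum_univ_one] at hA
      rw [Finset.sum_eq_zero (fun t _ => by rw [hw0 t]; ring)] at hA
      norm_num at hA
    · -- K ≥ 2
      have main : ∀ p q : Fin K, p ≠ q → ∀ t₀ : Fin T,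
          Wmat p t₀ = 1 → Wmat q t₀ = 0 → False := by
        intro p q hpq t₀ h1 h0
        have hrows := pair_all_ones (Wmat p) (Wmat q) (hW01 p) (hW01 q)
          (fun s₁ s₂ hne => hR' p q s₁ s₂ hpq hne) t₀ h1 h0
        have hall : ∀ k : Fin K, k = p ∨ k = q := by
          intro k
          by_contra hcon
          push_neg at hcon
          obtain ⟨hkp, hkq⟩ := hcon
          have hne2 : Wmat p ≠ Wmat k := fun h => hkp (hWdistinct h).symm
          obtain ⟨t', ht'⟩ := Function.ne_iff.mp hne2
          have hp1 := (hrows t').1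
          have hk0 : Wmat k t' = 0 := by
            rcases hW01 k t' with h | h
            · exact h
            · rw [hp1, h] at ht'; exact absurd rfl ht'
          have h2 := pair_all_ones (Wmat p) (Wmat k) (hW01 p) (hW01 k)
            (fun s₁ s₂ hne => hR' p k s₁ s₂ (Ne.symm hkp) hne) t' hp1 hk0
          have : Wmat k = Wmat q := funext fun t => by rw [(h2 t).2, (hrows t).2]
          exact hkq (hWdistinct this)
        have hzero : ∀ k : Fin K, ∑ t, π k * w k t * Wmat k t = 0 := by
          intro k
          rcases hall k with rfl | rfl
          · calc ∑ t, π k * w k t * Wmat k t = π k * ∑ t, w k t := by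
                  rw [Finset.mul_sum]
                  exact Finset.sum_congr rfl fun t _ => by rw [(hrows t).1]; ring
              _ = 0 := by rw [hC k]; ring
          · exact Finset.sum_eq_zero fun t _ => by rw [(hrows t).2]; ring
        rw [Finset.sum_eq_zero (fun k _ => hzero k)] at hA
        norm_num at hA
      set k0 : Fin K := ⟨0, by omega⟩ with hk0def
      set ka : Fin K := ⟨1, by omega⟩ with hkadef
      have h01 : k0 ≠ ka := by
        intro h
        have := congrArg Fin.val h
        simp [hk0def, hkadef] at this
      have hne : Wmat k0 ≠ Wmat ka := fun h => h01 (hWdistinct h)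
      obtain ⟨t₀, ht₀⟩ := Function.ne_iff.mp hne
      rcases hW01 k0 t₀ with h0 | h0 <;> rcases hW01 ka t₀ with h1 | h1
      · rw [h0, h1] at ht₀; exact absurd rfl ht₀
      · exact main ka k0 (Ne.symm h01) t₀ h1 h0
      · exact main k0 ka h01 t₀ h0 h1
      · rw [h0, h1] at ht₀; exact absurd rfl ht₀
  · rintro ⟨k₁, k₂, t₁, t₂, hk, ht, hpat⟩
    have hπ1 := hπpos k₁
    rcases hpat with ⟨h11, h12, h21, h22⟩ | ⟨h11, h12, h21, h22⟩ | ⟨h11, h12, h21, h22⟩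
    · refine construct_w T K hT Wmat π hπpos k₁ k₂ t₁ t₂ hk ht (-(T / π k₁)) ?_ ?_ ?_ <;>
        simp only [h11, h12, h21, h22]
      · field_simp; ring
      · have hq : (0:ℝ) < (T:ℝ) / π k₁ := by positivity
        nlinarith [hq]
      · nlinarith
    · refine construct_w T K hT Wmat π hπpos k₁ k₂ t₁ t₂ hk ht (T / π k₁) ?_ ?_ ?_ <;>
        simp only [h11, h12, h21, h22]
      · field_simp; ring
      · nlinarith
      · have hq : (0:ℝ) < (T:ℝ) / π k₁ := by positivity
        nlinarith [hq]
    · refine construct_w T K hT Wmat π hπpos k₁ k₂ t₁ t₂ hk ht (-(T / (2 * π k₁))) ?_ ?_ ?_ <;>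
        simp only [h11, h12, h21, h22]
      · field_simp; ring
      · have hq : (0:ℝ) < (T:ℝ) / (2 * π k₁) := by positivity
        nlinarith [hq]
      · have hq : (0:ℝ) < (T:ℝ) / (2 * π k₁) := by positivity
        nlinarith [hq]
end

section
/- The set 𝕎_dr is non-empty if and only if there exists a value σ of the sufficient statistic such that the submatrix 𝐖^σ of rows k with s(k) = σ contains, up to permutation of the two selected rows and the two selected columns, at least one of the 2×2 submatrices [[0,1],[1,0]] or [[0,1],[0,0]]. -/
open scoped BigOperators

/-- **Non-emptiness of 𝕎_dr.**
The set `𝕎_dr` of doubly robust weights is non-empty if and only if there is a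
value `σ` of the sufficient statistic such that the submatrix `𝐖^σ` of rows `k`
with `s(k) = σ` contains, up to permutations of the two selected rows and the
two selected columns, one of the 2×2 submatrices `[[0,1],[1,0]]` or
`[[0,1],[0,0]]`.  (Permutations are captured by the ordered choices of the
indices `k₁ ≠ k₂` and `t₁ ≠ t₂`.) -/
theorem Wdr_nonempty_iff
    {𝕊 : Type*} [Fintype 𝕊] [DecidableEq 𝕊]
    (T K : ℕ) (hT : 0 < T) (hK : 0 < K)
    (Wmat : Fin K → Fin T → ℝ)
    (hW01 : ∀ k t, Wmat k t = 0 ∨ Wmat k t = 1)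
    (hWdistinct : Function.Injective Wmat)
    (π : Fin K → ℝ) (hπpos : ∀ k, 0 < π k) (hπsum : ∑ k, π k = 1)
    (s : Fin K → 𝕊) :
    {w : Fin K → Fin T → ℝ |
        (1 / (T : ℝ)) * ∑ k, ∑ t, π k * w k t * Wmat k t = 1 ∧
        (∀ k, ∑ t, w k t = 0) ∧
        (∀ (σ : 𝕊) (t : Fin T),
          ∑ k ∈ Finset.univ.filter (fun k => s k = σ), π k * w k t = 0) ∧
        (∀ k t, 0 ≤ w k t * Wmat k t)}.Nonempty ↔
      ∃ (σ : 𝕊) (k₁ k₂ : Fin K) (t₁ t₂ : Fin T),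
        s k₁ = σ ∧ s k₂ = σ ∧ k₁ ≠ k₂ ∧ t₁ ≠ t₂ ∧
        ((Wmat k₁ t₁ = 0 ∧ Wmat k₁ t₂ = 1 ∧ Wmat k₂ t₁ = 1 ∧ Wmat k₂ t₂ = 0) ∨
         (Wmat k₁ t₁ = 0 ∧ Wmat k₁ t₂ = 1 ∧ Wmat k₂ t₁ = 0 ∧ Wmat k₂ t₂ = 0)) := by
  constructor
  · -- necessity
    rintro ⟨w, hA, hB, hC, hD⟩
    by_contra hno
    push_neg at hno
    have sub : ∀ a b : Fin K, s a = s b → a ≠ b → ∀ u v : Fin T,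
        Wmat a u = 0 → Wmat a v = 1 → Wmat b v = 0 → False := by
      intro a b hs hab u v hau hav hbv
      have huv : u ≠ v := by
        intro h; rw [h, hav] at hau; norm_num at hau
      rcases hW01 b u with hbu | hbu
      · exact (hno (s a) a b u v rfl hs.symm hab huv).2 hau hav hbu hbv
      · exact (hno (s a) a b u v rfl hs.symm hab huv).1 hau hav hbu hbv
    have key : ∀ a b : Fin K, s a = s b → a ≠ b →
        (∀ t, Wmat a t = 1) ∨ (∀ t, Wmat b t = 1) := by
      intro a b hs hab
      by_contra hcon
      push_neg at hcon
      obtain ⟨⟨u, hu⟩, ⟨v, hv⟩⟩ := hcon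
      have hu0 : Wmat a u = 0 := (hW01 a u).resolve_right hu
      have hv0 : Wmat b v = 0 := (hW01 b v).resolve_right hv
      have hne : Wmat a ≠ Wmat b := fun h => hab (hWdistinct h)
      obtain ⟨t, ht⟩ := Function.ne_iff.mp hne
      rcases hW01 a t with h1 | h1 <;> rcases hW01 b t with h2 | h2
      · exact ht (h1.trans h2.symm)
      · exact sub b a hs.symm hab.symm v t hv0 h2 h1
      · exact sub a b hs hab u t hu0 h1 h2
      · exact ht (h1.trans h2.symm)
    have rowzero : ∀ k : Fin K, (∀ t, Wmat k t = 1) → ∀ t, w k t = 0 := by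
      intro k hk t
      have hnn : ∀ t' ∈ Finset.univ, (0:ℝ) ≤ w k t' := by
        intro t' _
        have := hD k t'
        rwa [hk t', mul_one] at this
      exact (Finset.sum_eq_zero_iff_of_nonneg hnn).mp (hB k) t (Finset.mem_univ t)
    have hw0 : ∀ k t, w k t = 0 := by
      intro k t
      by_cases hk : ∀ t', Wmat k t' = 1
      · exact rowzero k hk t
      · have hCk := hC (s k) t
        have hmem : k ∈ Finset.univ.filter (fun k' => s k' = s k) := by simp
        have hz : ∀ b ∈ Finset.univ.filter (fun k' => s k' = s k), b ≠ k →
            π b * w b t = 0 := by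
          intro b hb hbk
          have hsb : s b = s k := (Finset.mem_filter.mp hb).2
          have hall : ∀ t', Wmat b t' = 1 := (key b k hsb hbk).resolve_right hk
          rw [rowzero b hall t, mul_zero]
        rw [Finset.sum_eq_single_of_mem k hmem hz] at hCk
        exact (mul_eq_zero.mp hCk).resolve_left (ne_of_gt (hπpos k))
    simp only [hw0, mul_zero, zero_mul, Finset.sum_const_zero] at hA
    exact one_ne_zero hA.symm
  · -- sufficiency
    rintro ⟨σ, k₁, k₂, t₁, t₂, hs1, hs2, hkk, htt, hcase⟩
    obtain ⟨h11, h12, h22, he⟩ : Wmat k₁ t₁ = 0 ∧ Wmat k₁ t₂ = 1 ∧ Wmat k₂ t₂ = 0 ∧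
        (Wmat k₂ t₁ = 1 ∨ Wmat k₂ t₁ = 0) := by
      rcases hcase with ⟨a, b, c, d⟩ | ⟨a, b, c, d⟩
      exacts [⟨a, b, d, Or.inl c⟩, ⟨a, b, d, Or.inr c⟩]
    have he0 : (0:ℝ) ≤ Wmat k₂ t₁ := by rcases he with h | h <;> rw [h] <;> norm_num
    have he1 : (0:ℝ) < 1 + Wmat k₂ t₁ := by linarith
    have hTpos : (0:ℝ) < T := by exact_mod_cast hT
    set D : ℝ := (T : ℝ) / (1 + Wmat k₂ t₁) with hDdef
    have hDpos : 0 < D := div_pos hTpos he1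
    have hπ1 : π k₁ ≠ 0 := ne_of_gt (hπpos k₁)
    have hπ2 : π k₂ ≠ 0 := ne_of_gt (hπpos k₂)
    refine ⟨fun k t =>
      ((if k = k₁ then D / π k₁ else 0) + (if k = k₂ then -(D / π k₂) else 0)) *
      ((if t = t₂ then (1:ℝ) else 0) - (if t = t₁ then 1 else 0)), ?_, ?_, ?_, ?_⟩
    · -- condition A
      have inner : ∀ k : Fin K, ∑ t, π k *
          (((if k = k₁ then D / π k₁ else 0) + (if k = k₂ then -(D / π k₂) else 0)) *
          ((if t = t₂ then (1:ℝ) else 0) - (if t = t₁ then 1 else 0))) * Wmat k t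
          = π k * ((if k = k₁ then D / π k₁ else 0) + (if k = k₂ then -(D / π k₂) else 0)) *
            (Wmat k t₂ - Wmat k t₁) := by
        intro k
        set C : ℝ := π k * ((if k = k₁ then D / π k₁ else 0) +
          (if k = k₂ then -(D / π k₂) else 0)) with hCdef
        calc ∑ t, π k *
            (((if k = k₁ then D / π k₁ else 0) + (if k = k₂ then -(D / π k₂) else 0)) *
            ((if t = t₂ then (1:ℝ) else 0) - (if t = t₁ then 1 else 0))) * Wmat k t
            = ∑ t, (C * (if t = t₂ then Wmat k t else 0) -
                    C * (if t = t₁ then Wmat k t else 0)) := by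
              refine Finset.sum_congr rfl fun t _ => ?_
              by_cases h2 : t = t₂ <;> by_cases h1 : t = t₁ <;>
                simp_all [htt] <;> ring
          _ = C * (Wmat k t₂ - Wmat k t₁) := by
              rw [Finset.sum_sub_distrib, ← Finset.mul_sum, ← Finset.mul_sum]
              simp [Finset.sum_ite_eq', mul_sub]
      rw [Finset.sum_congr rfl fun k _ => inner k]
      simp only [mul_add, add_mul, mul_ite, ite_mul, mul_zero, zero_mul,
        Finset.sum_add_distrib, Finset.sum_ite_eq', Finset.mem_univ, if_true]
      rw [h11, h12, h22]
      rw [hDdef]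
      field_simp
      ring
    · -- condition B
      intro k
      rw [← Finset.mul_sum]
      rw [Finset.sum_sub_distrib]
      simp
    · -- condition C
      intro σ' t
      simp only [mul_add, add_mul, mul_ite, ite_mul, mul_zero, zero_mul,
        Finset.sum_add_distrib, Finset.sum_ite_eq', Finset.mem_filter, Finset.mem_univ,
        true_and]
      rw [hs1, hs2]
      have hc1 : π k₁ * (D / π k₁) = D := by rw [mul_comm]; exact div_mul_cancel₀ D hπ1
      have hc2 : π k₂ * (D / π k₂) = D := by rw [mul_comm]; exact div_mul_cancel₀ D hπ2
      split_ifs <;>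
        first
          | simp [hc1, hc2]
          | (field_simp; ring)
          | field_simp
    · -- condition D
      intro k t
      by_cases hk1 : k = k₁ <;> by_cases hk2 : k = k₂ <;>
        by_cases ht1 : t = t₁ <;> by_cases ht2 : t = t₂ <;>
        simp_all [h11, h12, h22] <;>
        first
          | positivity
          | exact div_nonneg hDpos.le (hπpos _).le
          | exact mul_nonneg (div_nonneg hDpos.le (hπpos _).le) he0
          | exact div_nonneg (div_nonneg (Nat.cast_nonneg _) (by linarith)) (hπpos _).le
          | nlinarith [div_nonneg hDpos.le (hπpos k₁).le,
              div_nonneg hDpos.le (hπpos k₂).le, he0,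
              mul_nonneg (div_nonneg hDpos.le (hπpos k₂).le) he0]
end

section
/- Suppose the assignments {W_it} are such that there exist no (α, β, γ) ∈ ℝ^N × ℝ^T × ℝ^p with α_i + β_t + ψ_itᵀγ ≥ 0 for all (i,t) and W_it = 1{α_i + β_t + ψ_itᵀγ > 0} for all (i,t). Then the feasible set of the primal weighting problem is non-empty, closed and convex, and the problem of minimizing (1/(NT)²)·Σ_{i,t} ω_it² over this feasible set has a unique solution. -/
open scoped BigOperators
open Finset


variable {ι : Type*} [Fintype ι]

/-- dot product on `ι → ℝ`. -/
def dotp (x y : ι → ℝ) : ℝ := ∑ i, x i * y i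

lemma dotp_sub_smul_left (x z y : ι → ℝ) (c : ℝ) :
    dotp (x - c • z) y = dotp x y - c * dotp z y := by
  simp only [dotp, Pi.sub_apply, Pi.smul_apply, smul_eq_mul, sub_mul, mul_sum]
  rw [Finset.sum_sub_distrib]
  congr 1
  exact Finset.sum_congr rfl (fun i _ => by ring)

lemma dotp_sub_smul_right (x y z : ι → ℝ) (c : ℝ) :
    dotp x (y - c • z) = dotp x y - c * dotp x z := by
  simp only [dotp, Pi.sub_apply, Pi.smul_apply, smul_eq_mul, mul_sub, mul_sum]
  rw [Finset.sum_sub_distrib]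
  congr 1
  exact Finset.sum_congr rfl (fun i _ => by ring)

lemma dotp_sum_left {k : ℕ} (a : Fin k → ι → ℝ) (l : Fin k → ℝ) (y : ι → ℝ) :
    dotp (∑ i, l i • a i) y = ∑ i, l i * dotp (a i) y := by
  simp only [dotp, Finset.sum_apply, Pi.smul_apply, smul_eq_mul, Finset.sum_mul]
  rw [Finset.sum_comm]
  refine Finset.sum_congr rfl (fun i _ => ?_)
  rw [mul_sum]
  exact Finset.sum_congr rfl (fun x _ => by ring)

lemma dotp_self_pos (x : ι → ℝ) (hx : x ≠ 0) : 0 < dotp x x := by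
  obtain ⟨i, hi⟩ : ∃ i, x i ≠ 0 := by
    by_contra h
    push_neg at h
    exact hx (funext h)
  apply Finset.sum_pos' (fun j _ => mul_self_nonneg _)
  exact ⟨i, Finset.mem_univ i, mul_self_pos.mpr hi⟩

/-- Farkas' lemma. -/
theorem farkas (k : ℕ) : ∀ (a : Fin k → ι → ℝ) (b : ι → ℝ),
    (∃ l : Fin k → ℝ, (∀ i, 0 ≤ l i) ∧ b = ∑ i, l i • a i) ∨
    (∃ y : ι → ℝ, (∀ i, 0 ≤ dotp (a i) y) ∧ dotp b y < 0) := by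
  induction k with
  | zero =>
    intro a b
    by_cases hb : b = 0
    · exact Or.inl ⟨0, fun i => le_refl _, by simp [hb]⟩
    · refine Or.inr ⟨-b, fun i => i.elim0, ?_⟩
      have := dotp_self_pos b hb
      have : dotp b (-b) = -dotp b b := by
        simp [dotp, Finset.sum_neg_distrib]
      · rw [this]; linarith [dotp_self_pos b hb]
  | succ k ih =>
    intro a b
    set a' : Fin k → ι → ℝ := fun i => a i.castSucc with ha'
    set ak : ι → ℝ := a (Fin.last k) with hak
    rcases ih a' b with ⟨l, hl, hb⟩ | ⟨y, hy, hby⟩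
    · refine Or.inl ⟨Fin.snoc l 0, ?_, ?_⟩
      · intro i
        refine Fin.lastCases ?_ ?_ i <;> simp [Fin.snoc_last, Fin.snoc_castSucc]
        exact hl
      · rw [Fin.sum_univ_castSucc]
        simp [Fin.snoc_last, Fin.snoc_castSucc, hb, ha']
    · by_cases hk : 0 ≤ dotp ak y
      · refine Or.inr ⟨y, ?_, hby⟩
        intro i
        refine Fin.lastCases hk (fun j => hy j) i
      · push_neg at hk
        set c : ℝ := dotp ak y with hc
        set a'' : Fin k → ι → ℝ := fun i => a' i - (dotp (a' i) y / c) • ak with ha''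
        set b' : ι → ℝ := b - (dotp b y / c) • ak with hb'
        rcases ih a'' b' with ⟨l, hl, hbe⟩ | ⟨z, hz, hbz⟩
        · -- reconstruct membership
          set μ : ℝ := (dotp b y - ∑ i, l i * dotp (a' i) y) / c with hμ
          have hμ0 : 0 ≤ μ := by
            have h1 : 0 ≤ ∑ i, l i * dotp (a' i) y :=
              Finset.sum_nonneg (fun i _ => mul_nonneg (hl i) (hy i))
            have h2 : dotp b y - ∑ i, l i * dotp (a' i) y < 0 := by linarith
            exact le_of_lt (div_pos_of_neg_of_neg h2 hk)
          refine Or.inl ⟨Fin.snoc l μ, ?_, ?_⟩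
          · intro i
            refine Fin.lastCases ?_ ?_ i <;> simp [Fin.snoc_last, Fin.snoc_castSucc]
            · exact hμ0
            · exact hl
          · rw [Fin.sum_univ_castSucc]
            simp only [Fin.snoc_last, Fin.snoc_castSucc]
            have hS : ∑ i, l i • a'' i
                = (∑ i, l i • a' i) - ((∑ i, l i * dotp (a' i) y) / c) • ak := by
              rw [ha'']
              simp only [smul_sub, smul_smul]
              rw [Finset.sum_sub_distrib, ← Finset.sum_smul]
              congr 2
              rw [Finset.sum_div]
              exact Finset.sum_congr rfl (fun i _ => by ring)
            have hexp : b = (∑ i, l i • a' i) + μ • ak := by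
              have hb2 : b = b' + (dotp b y / c) • ak := by rw [hb']; abel
              rw [hb2, hbe, hS, hμ, sub_div, sub_smul]
              abel
            rw [hexp]
        · refine Or.inr ⟨z - (dotp ak z / c) • y, ?_, ?_⟩
          · intro i
            refine Fin.lastCases ?_ ?_ i
            · rw [dotp_sub_smul_right, ← hak, ← hc]
              rw [div_mul_cancel₀]
              · simp
              · exact ne_of_lt hk
            · intro j
              have h0 := hz j
              rw [ha'', dotp_sub_smul_left] at h0
              show 0 ≤ dotp (a' j) (z - (dotp ak z / c) • y)
              rw [dotp_sub_smul_right]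
              have heq : dotp (a' j) z - dotp ak z / c * dotp (a' j) y
                  = dotp (a' j) z - dotp (a' j) y / c * dotp ak z := by ring
              rw [heq]
              exact h0
          · have := hbz
            rw [hb', dotp_sub_smul_left] at this
            rw [dotp_sub_smul_right]
            calc dotp b z - dotp ak z / c * dotp b y
                = dotp b z - dotp b y / c * dotp ak z := by ring
              _ < 0 := this

lemma feasible_nonempty
    (N T p : ℕ) (hN : 0 < N) (hT : 0 < T)
    (W : Fin N → Fin T → ℝ) (hW01 : ∀ i t, W i t = 0 ∨ W i t = 1)
    (ψ : Fin N → Fin T → Fin p → ℝ)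
    (hnosep : ¬ ∃ (α : Fin N → ℝ) (β : Fin T → ℝ) (γ : Fin p → ℝ),
      (∀ i t, 0 ≤ α i + β t + ∑ j, ψ i t j * γ j) ∧
      (∀ i t, W i t = if 0 < α i + β t + ∑ j, ψ i t j * γ j then 1 else 0)) :
    ∃ ω : Fin N → Fin T → ℝ,
      1 ≤ (1 / ((N : ℝ) * T)) * ∑ i, ∑ t, ω i t * W i t ∧
      (∀ t, ∑ i, ω i t = 0) ∧
      (∀ i, ∑ t, ω i t = 0) ∧
      (∀ j, (1 / ((N : ℝ) * T)) * ∑ i, ∑ t, ω i t * ψ i t j = 0) ∧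
      (∀ i t, 0 ≤ ω i t * W i t) := by
  classical
  set u : Fin N → Fin T → (Unit ⊕ (Fin T ⊕ (Fin N ⊕ Fin p))) → ℝ := fun i t =>
    Sum.elim (fun _ => W i t) (Sum.elim (fun t' => if t' = t then 1 else 0)
      (Sum.elim (fun i' => if i' = i then 1 else 0) (fun j => ψ i t j))) with hu
  set g : (Bool × Fin N × Fin T) → (Unit ⊕ (Fin T ⊕ (Fin N ⊕ Fin p))) → ℝ := fun c =>
    if c.1 = true then u c.2.1 c.2.2
    else if W c.2.1 c.2.2 = 0 then -u c.2.1 c.2.2 else u c.2.1 c.2.2 with hg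
  set b : (Unit ⊕ (Fin T ⊕ (Fin N ⊕ Fin p))) → ℝ := Sum.elim (fun _ => 1) (fun _ => 0) with hb
  set e := Fintype.equivFin (Bool × Fin N × Fin T) with he
  set a : Fin (Fintype.card (Bool × Fin N × Fin T)) → (Unit ⊕ (Fin T ⊕ (Fin N ⊕ Fin p))) → ℝ := fun i => g (e.symm i) with ha
  have hNT : ((N : ℝ) * T) ≠ 0 := by positivity
  rcases farkas _ a b with ⟨l, hl, hbe⟩ | ⟨y, hy, hby⟩
  · -- feasibility
    set m : (Bool × Fin N × Fin T) → ℝ := fun c => l (e c) with hm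
    have hm0 : ∀ c, 0 ≤ m c := fun c => hl (e c)
    have hbsum : b = ∑ c, m c • g c := by
      rw [hbe, ← Equiv.sum_comp e.symm (fun c => m c • g c)]
      exact Finset.sum_congr rfl (fun i _ => by simp [hm, ha])
    set ω0 : Fin N → Fin T → ℝ := fun i t =>
      if W i t = 0 then m (true, i, t) - m (false, i, t)
      else m (true, i, t) + m (false, i, t) with hω0
    have hsum : ∀ x : Unit ⊕ (Fin T ⊕ (Fin N ⊕ Fin p)), b x = ∑ i, ∑ t, ω0 i t * u i t x := by
      intro x
      have h1 : b x = ∑ c, m c * g c x := by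
        rw [hbsum]; simp [Finset.sum_apply]
      rw [h1, Fintype.sum_prod_type, Fintype.sum_bool, ← Finset.sum_add_distrib,
        Fintype.sum_prod_type]
      refine Finset.sum_congr rfl (fun i _ => Finset.sum_congr rfl (fun t _ => ?_))
      rcases hW01 i t with h | h <;>
        simp [hg, hω0, h, sub_mul, add_mul, neg_mul] <;> ring
    have key1 : (1 : ℝ) = ∑ i, ∑ t, ω0 i t * W i t := by
      have := hsum (Sum.inl ())
      simpa [hb, hu] using this
    have key2 : ∀ t', ∑ i, ω0 i t' = 0 := by
      intro t'
      have := hsum (Sum.inr (Sum.inl t'))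
      simp only [hb, hu, Sum.elim_inr, Sum.elim_inl, mul_ite, mul_one, mul_zero,
        Finset.sum_ite_eq, Finset.mem_univ, if_true] at this
      exact this.symm
    have key3 : ∀ i', ∑ t, ω0 i' t = 0 := by
      intro i'
      have := hsum (Sum.inr (Sum.inr (Sum.inl i')))
      rw [Finset.sum_comm] at this
      simp only [hb, hu, Sum.elim_inr, Sum.elim_inl, mul_ite, mul_one, mul_zero,
        Finset.sum_ite_eq, Finset.mem_univ, if_true] at this
      exact this.symm
    have key4 : ∀ j, ∑ i, ∑ t, ω0 i t * ψ i t j = 0 := by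
      intro j
      have := hsum (Sum.inr (Sum.inr (Sum.inr j)))
      simpa [hb, hu] using this.symm
    have key5 : ∀ i t, W i t = 1 → 0 ≤ ω0 i t := by
      intro i t h
      have hne : ¬ (W i t = 0) := by rw [h]; norm_num
      simp only [hω0, if_neg hne]
      exact add_nonneg (hm0 _) (hm0 _)
    refine ⟨fun i t => ((N : ℝ) * T) * ω0 i t, ?_, ?_, ?_, ?_, ?_⟩
    · have : ∑ i, ∑ t, ((N : ℝ) * T) * ω0 i t * W i t
          = ((N : ℝ) * T) * ∑ i, ∑ t, ω0 i t * W i t := by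
        rw [Finset.mul_sum]
        exact Finset.sum_congr rfl (fun i _ => by
          rw [Finset.mul_sum]; exact Finset.sum_congr rfl (fun t _ => by ring))
      rw [this, ← key1, mul_one, one_div, inv_mul_cancel₀ hNT]
    · intro t
      have : ∑ i, ((N : ℝ) * T) * ω0 i t = ((N : ℝ) * T) * ∑ i, ω0 i t := by
        rw [Finset.mul_sum]
      rw [this, key2, mul_zero]
    · intro i
      have : ∑ t, ((N : ℝ) * T) * ω0 i t = ((N : ℝ) * T) * ∑ t, ω0 i t := by
        rw [Finset.mul_sum]
      rw [this, key3, mul_zero]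
    · intro j
      have : ∑ i, ∑ t, ((N : ℝ) * T) * ω0 i t * ψ i t j
          = ((N : ℝ) * T) * ∑ i, ∑ t, ω0 i t * ψ i t j := by
        rw [Finset.mul_sum]
        exact Finset.sum_congr rfl (fun i _ => by
          rw [Finset.mul_sum]; exact Finset.sum_congr rfl (fun t _ => by ring))
      rw [this, key4, mul_zero, mul_zero]
    · intro i t
      rcases hW01 i t with h | h
      · rw [h, mul_zero]
      · rw [h, mul_one]
        have := key5 i t h
        positivity
  · -- contradiction with hnosep
    exfalso
    set y0 : ℝ := y (Sum.inl ()) with hy0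
    set β : Fin T → ℝ := fun t => y (Sum.inr (Sum.inl t)) with hβ
    set α : Fin N → ℝ := fun i => y (Sum.inr (Sum.inr (Sum.inl i))) with hα
    set γ : Fin p → ℝ := fun j => y (Sum.inr (Sum.inr (Sum.inr j))) with hγ
    have hby' : y0 < 0 := by
      have : dotp b y = y0 := by
        simp [dotp, hb, Fintype.sum_sum_type, hy0]
      rwa [this] at hby
    have hgc : ∀ c, 0 ≤ dotp (g c) y := by
      intro c
      have := hy (e c)
      simpa [ha] using this
    have hud : ∀ i t, dotp (u i t) y
        = W i t * y0 + (β t + (α i + ∑ j, ψ i t j * γ j)) := by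
      intro i t
      simp [dotp, hu, Fintype.sum_sum_type, ite_mul, one_mul, zero_mul,
        Finset.sum_ite_eq, Finset.sum_ite_eq', hβ, hα, hγ, hy0]
    have hlam : ∀ i t, (W i t = 0 → α i + β t + ∑ j, ψ i t j * γ j = 0) ∧
        (W i t = 1 → 0 < α i + β t + ∑ j, ψ i t j * γ j) := by
      intro i t
      constructor
      · intro h
        have h1 := hgc (true, i, t)
        have h2 := hgc (false, i, t)
        simp only [hg, if_pos rfl] at h1
        simp only [hg] at h2
        rw [if_neg (by simp), if_pos h] at h2
        have hneg : dotp (-u i t) y = -dotp (u i t) y := by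
          simp [dotp, neg_mul, Finset.sum_neg_distrib]
        rw [hneg] at h2
        rw [hud i t, h] at h1 h2
        linarith
      · intro h
        have h1 := hgc (true, i, t)
        simp only [hg, if_pos rfl] at h1
        rw [hud i t, h] at h1
        linarith
    exact hnosep ⟨α, β, γ, fun i t => by
        rcases hW01 i t with h | h
        · rw [(hlam i t).1 h]
        · exact le_of_lt ((hlam i t).2 h),
      fun i t => by
        rcases hW01 i t with h | h
        · rw [h, if_neg (by rw [(hlam i t).1 h]; exact lt_irrefl 0)]
        · rw [h, if_pos ((hlam i t).2 h)]⟩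

lemma midpoint_sq_sum {A B : Type*} [Fintype A] [Fintype B] (f g : A → B → ℝ) :
    ∑ i, ∑ t, ((f i t + g i t)/2)^2
      = (∑ i, ∑ t, (f i t)^2 + ∑ i, ∑ t, (g i t)^2)/2
        - ∑ i, ∑ t, ((f i t - g i t)/2)^2 := by
  rw [eq_sub_iff_add_eq, ← Finset.sum_add_distrib]
  have h1 : ∀ i : A, ((∑ t, ((f i t + g i t)/2)^2) + ∑ t, ((f i t - g i t)/2)^2)
      = ∑ t, ((f i t)^2 + (g i t)^2)/2 := by
    intro i
    rw [← Finset.sum_add_distrib]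
    exact Finset.sum_congr rfl (fun t _ => by ring)
  rw [Finset.sum_congr rfl (fun i _ => h1 i)]
  rw [← Finset.sum_add_distrib, Finset.sum_div]
  refine Finset.sum_congr rfl (fun i _ => ?_)
  rw [← Finset.sum_div]
  congr 1
  rw [← Finset.sum_add_distrib]


lemma feasible_closed (N T : ℕ) (W : Fin N → Fin T → ℝ) (p : ℕ) (ψ : Fin N → Fin T → Fin p → ℝ) :
    IsClosed {ω : Fin N → Fin T → ℝ |
      1 ≤ (1 / ((N : ℝ) * T)) * ∑ i, ∑ t, ω i t * W i t ∧
      (∀ t, ∑ i, ω i t = 0) ∧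
      (∀ i, ∑ t, ω i t = 0) ∧
      (∀ j, (1 / ((N : ℝ) * T)) * ∑ i, ∑ t, ω i t * ψ i t j = 0) ∧
      (∀ i t, 0 ≤ ω i t * W i t)} := by
  have hrw : {ω : Fin N → Fin T → ℝ |
      1 ≤ (1 / ((N : ℝ) * T)) * ∑ i, ∑ t, ω i t * W i t ∧
      (∀ t, ∑ i, ω i t = 0) ∧
      (∀ i, ∑ t, ω i t = 0) ∧
      (∀ j, (1 / ((N : ℝ) * T)) * ∑ i, ∑ t, ω i t * ψ i t j = 0) ∧
      (∀ i t, 0 ≤ ω i t * W i t)}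
      = {ω : Fin N → Fin T → ℝ | 1 ≤ (1 / ((N : ℝ) * T)) * ∑ i, ∑ t, ω i t * W i t}
        ∩ ((⋂ t, {ω : Fin N → Fin T → ℝ | ∑ i, ω i t = 0})
        ∩ ((⋂ i, {ω : Fin N → Fin T → ℝ | ∑ t, ω i t = 0})
        ∩ ((⋂ j, {ω : Fin N → Fin T → ℝ |
              (1 / ((N : ℝ) * T)) * ∑ i, ∑ t, ω i t * ψ i t j = 0})
        ∩ (⋂ i, ⋂ t, {ω : Fin N → Fin T → ℝ | 0 ≤ ω i t * W i t})))) := by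
    ext ω
    simp only [Set.mem_setOf_eq, Set.mem_inter_iff, Set.mem_iInter]
  rw [hrw]
  refine IsClosed.inter (isClosed_le continuous_const (by fun_prop)) ?_
  refine IsClosed.inter (isClosed_iInter fun t =>
    isClosed_eq (by fun_prop) continuous_const) ?_
  refine IsClosed.inter (isClosed_iInter fun i =>
    isClosed_eq (by fun_prop) continuous_const) ?_
  refine IsClosed.inter (isClosed_iInter fun j =>
    isClosed_eq (by fun_prop) continuous_const) ?_
  exact isClosed_iInter fun i => isClosed_iInter fun t =>
    isClosed_le continuous_const (by fun_prop)

lemma feasible_convex (N T : ℕ) (W : Fin N → Fin T → ℝ) (p : ℕ) (ψ : Fin N → Fin T → Fin p → ℝ) :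
    Convex ℝ {ω : Fin N → Fin T → ℝ |
      1 ≤ (1 / ((N : ℝ) * T)) * ∑ i, ∑ t, ω i t * W i t ∧
      (∀ t, ∑ i, ω i t = 0) ∧
      (∀ i, ∑ t, ω i t = 0) ∧
      (∀ j, (1 / ((N : ℝ) * T)) * ∑ i, ∑ t, ω i t * ψ i t j = 0) ∧
      (∀ i t, 0 ≤ ω i t * W i t)} := by
  intro x hx y hy sa sb ha hb hab
  obtain ⟨hx1, hx2, hx3, hx4, hx5⟩ := hx
  obtain ⟨hy1, hy2, hy3, hy4, hy5⟩ := hy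
  have hcomb : ∀ (v : Fin N → Fin T → ℝ),
      ∑ i, ∑ t, (sa • x + sb • y) i t * v i t
        = sa * (∑ i, ∑ t, x i t * v i t) + sb * (∑ i, ∑ t, y i t * v i t) := by
    intro v
    rw [Finset.mul_sum, Finset.mul_sum, ← Finset.sum_add_distrib]
    refine Finset.sum_congr rfl (fun i _ => ?_)
    rw [Finset.mul_sum, Finset.mul_sum, ← Finset.sum_add_distrib]
    refine Finset.sum_congr rfl (fun t _ => ?_)
    simp only [Pi.add_apply, Pi.smul_apply, smul_eq_mul]
    ring
  refine ⟨?_, ?_, ?_, ?_, ?_⟩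
  · rw [hcomb W, mul_add]
    have e1 : (1 / ((N : ℝ) * T)) * (sa * ∑ i, ∑ t, x i t * W i t)
        = sa * ((1 / ((N : ℝ) * T)) * ∑ i, ∑ t, x i t * W i t) := by ring
    have e2 : (1 / ((N : ℝ) * T)) * (sb * ∑ i, ∑ t, y i t * W i t)
        = sb * ((1 / ((N : ℝ) * T)) * ∑ i, ∑ t, y i t * W i t) := by ring
    rw [e1, e2]
    have h1 := mul_le_mul_of_nonneg_left hx1 ha
    have h2 := mul_le_mul_of_nonneg_left hy1 hb
    rw [mul_one] at h1 h2
    linarith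
  · intro t
    have : ∑ i, (sa • x + sb • y) i t
        = sa * (∑ i, x i t) + sb * (∑ i, y i t) := by
      rw [Finset.mul_sum, Finset.mul_sum, ← Finset.sum_add_distrib]
      refine Finset.sum_congr rfl (fun i _ => ?_)
      simp only [Pi.add_apply, Pi.smul_apply, smul_eq_mul]
    rw [this, hx2 t, hy2 t, mul_zero, mul_zero, add_zero]
  · intro i
    have : ∑ t, (sa • x + sb • y) i t
        = sa * (∑ t, x i t) + sb * (∑ t, y i t) := by
      rw [Finset.mul_sum, Finset.mul_sum, ← Finset.sum_add_distrib]
      refine Finset.sum_congr rfl (fun t _ => ?_)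
      simp only [Pi.add_apply, Pi.smul_apply, smul_eq_mul]
    rw [this, hx3 i, hy3 i, mul_zero, mul_zero, add_zero]
  · intro j
    rw [hcomb (fun i t => ψ i t j), mul_add]
    have e1 : (1 / ((N : ℝ) * T)) * (sa * ∑ i, ∑ t, x i t * ψ i t j)
        = sa * ((1 / ((N : ℝ) * T)) * ∑ i, ∑ t, x i t * ψ i t j) := by ring
    have e2 : (1 / ((N : ℝ) * T)) * (sb * ∑ i, ∑ t, y i t * ψ i t j)
        = sb * ((1 / ((N : ℝ) * T)) * ∑ i, ∑ t, y i t * ψ i t j) := by ring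
    rw [e1, e2, hx4 j, hy4 j, mul_zero, mul_zero, add_zero]
  · intro i t
    have : (sa • x + sb • y) i t * W i t
        = sa * (x i t * W i t) + sb * (y i t * W i t) := by
      simp only [Pi.add_apply, Pi.smul_apply, smul_eq_mul]
      ring
    rw [this]
    exact add_nonneg (mul_nonneg ha (hx5 i t)) (mul_nonneg hb (hy5 i t))

-- minimization over a nonempty closed convex set

lemma exists_unique_min (N T : ℕ) (F : Set (Fin N → Fin T → ℝ)) (hne : F.Nonempty)
    (hcl : IsClosed F) (hcv : Convex ℝ F) (c : ℝ) (hc : 0 < c) :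
    ∃! ω, ω ∈ F ∧ ∀ ω' ∈ F,
        c * ∑ i, ∑ t, (ω i t) ^ 2 ≤ c * ∑ i, ∑ t, (ω' i t) ^ 2 := by
  classical
  set S : (Fin N → Fin T → ℝ) → ℝ := fun ω => ∑ i, ∑ t, (ω i t)^2 with hS
  have hScont : Continuous S := by fun_prop
  obtain ⟨ω₀, hω₀⟩ := hne
  set K : Set (Fin N → Fin T → ℝ) := F ∩ {ω | S ω ≤ S ω₀} with hK
  have hKc : IsClosed K := hcl.inter (isClosed_le hScont continuous_const)
  have hKb : Bornology.IsBounded K := by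
    rw [isBounded_iff_forall_norm_le]
    refine ⟨Real.sqrt (S ω₀), fun ω hω => ?_⟩
    rw [pi_norm_le_iff_of_nonneg (Real.sqrt_nonneg _)]
    intro i
    rw [pi_norm_le_iff_of_nonneg (Real.sqrt_nonneg _)]
    intro t
    rw [Real.norm_eq_abs, ← Real.sqrt_sq_eq_abs]
    apply Real.sqrt_le_sqrt
    calc (ω i t)^2 ≤ ∑ t', (ω i t')^2 :=
          Finset.single_le_sum (f := fun t' => (ω i t')^2)
            (fun t' _ => sq_nonneg _) (Finset.mem_univ t)
      _ ≤ S ω := Finset.single_le_sum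
          (f := fun i' => ∑ t', (ω i' t')^2)
          (fun i' _ => Finset.sum_nonneg (fun t' _ => sq_nonneg _)) (Finset.mem_univ i)
      _ ≤ S ω₀ := hω.2
  have hKcomp : IsCompact K := Metric.isCompact_of_isClosed_isBounded hKc hKb
  have hKne : K.Nonempty := ⟨ω₀, hω₀, show S ω₀ ≤ S ω₀ from le_rfl⟩
  obtain ⟨ω₁, hω₁K, hmin⟩ := hKcomp.exists_isMinOn hKne hScont.continuousOn
  have hglobal : ∀ ω' ∈ F, S ω₁ ≤ S ω' := by
    intro ω' h'
    by_cases hcase : S ω' ≤ S ω₀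
    · exact hmin ⟨h', hcase⟩
    · push_neg at hcase
      exact le_trans (hmin ⟨hω₀, show S ω₀ ≤ S ω₀ from le_rfl⟩) (le_of_lt hcase)
  refine ⟨ω₁, ⟨hω₁K.1, fun ω' h' =>
    mul_le_mul_of_nonneg_left (hglobal ω' h') (le_of_lt hc)⟩, ?_⟩
  rintro ω' ⟨h'mem, h'min⟩
  -- ω' is also a minimizer; show ω' = ω₁
  have hle1 : S ω' ≤ S ω₁ := by
    have := h'min ω₁ hω₁K.1
    exact (mul_le_mul_iff_right₀ hc).mp this
  have hle2 : S ω₁ ≤ S ω' := hglobal ω' h'mem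
  have heq : S ω' = S ω₁ := le_antisymm hle1 hle2
  set m : Fin N → Fin T → ℝ := (1/2 : ℝ) • ω' + (1/2 : ℝ) • ω₁ with hm
  have hmF : m ∈ F := hcv h'mem hω₁K.1 (by norm_num) (by norm_num) (by norm_num)
  have hSm : S m = (S ω' + S ω₁)/2 - ∑ i, ∑ t, ((ω' i t - ω₁ i t)/2)^2 := by
    have h1 : S m = ∑ i, ∑ t, ((ω' i t + ω₁ i t)/2)^2 := by
      refine Finset.sum_congr rfl (fun i _ => Finset.sum_congr rfl (fun t _ => ?_))
      simp only [hm, Pi.add_apply, Pi.smul_apply, smul_eq_mul]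
      ring
    rw [h1, midpoint_sq_sum]
  have hd0 : ∑ i, ∑ t, ((ω' i t - ω₁ i t)/2)^2 ≤ 0 := by
    have := hglobal m hmF
    rw [hSm, heq] at this
    linarith
  have hd0' : ∑ i, ∑ t, ((ω' i t - ω₁ i t)/2)^2 = 0 :=
    le_antisymm hd0 (Finset.sum_nonneg fun i _ => Finset.sum_nonneg fun t _ => sq_nonneg _)
  funext i t
  have h1 := (Finset.sum_eq_zero_iff_of_nonneg
    (fun i' (_ : i' ∈ Finset.univ) =>
      Finset.sum_nonneg fun t' _ => sq_nonneg ((ω' i' t' - ω₁ i' t')/2))).mp hd0' i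
    (Finset.mem_univ i)
  have h2 := (Finset.sum_eq_zero_iff_of_nonneg
    (fun t' (_ : t' ∈ Finset.univ) => sq_nonneg ((ω' i t' - ω₁ i t')/2))).mp h1 t
    (Finset.mem_univ t)
  have h3 : (ω' i t - ω₁ i t)/2 = 0 := by
    exact pow_eq_zero_iff (n := 2) (by norm_num) |>.mp h2
  have : ω' i t - ω₁ i t = 0 := by linarith
  linarith


/-- **Lemma 1(a) (Existence and uniqueness of the primal solution).**
If there is no `(α, β, γ)` with `α_i + β_t + ψ_itᵀγ ≥ 0` for all `(i,t)` and
`W_it = 1{α_i + β_t + ψ_itᵀγ > 0}`, then the feasible set of the primal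
weighting problem is non-empty, closed and convex, and the problem of
minimizing `(1/(NT)²)·Σ_{i,t} ω_it²` over it has a unique solution. -/
theorem primal_problem_unique_solution
    (N T p : ℕ) (hN : 0 < N) (hT : 0 < T)
    (W : Fin N → Fin T → ℝ) (hW01 : ∀ i t, W i t = 0 ∨ W i t = 1)
    (ψ : Fin N → Fin T → Fin p → ℝ)
    (hnosep : ¬ ∃ (α : Fin N → ℝ) (β : Fin T → ℝ) (γ : Fin p → ℝ),
      (∀ i t, 0 ≤ α i + β t + ∑ j, ψ i t j * γ j) ∧
      (∀ i t, W i t = if 0 < α i + β t + ∑ j, ψ i t j * γ j then 1 else 0)) :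
    let F : Set (Fin N → Fin T → ℝ) := {ω |
      1 ≤ (1 / ((N : ℝ) * T)) * ∑ i, ∑ t, ω i t * W i t ∧
      (∀ t, ∑ i, ω i t = 0) ∧
      (∀ i, ∑ t, ω i t = 0) ∧
      (∀ j, (1 / ((N : ℝ) * T)) * ∑ i, ∑ t, ω i t * ψ i t j = 0) ∧
      (∀ i t, 0 ≤ ω i t * W i t)}
    F.Nonempty ∧ IsClosed F ∧ Convex ℝ F ∧
      (∃! ω, ω ∈ F ∧ ∀ ω' ∈ F,
        (1 / (((N : ℝ) * T) ^ 2)) * ∑ i, ∑ t, (ω i t) ^ 2 ≤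
          (1 / (((N : ℝ) * T) ^ 2)) * ∑ i, ∑ t, (ω' i t) ^ 2) := by
  intro F
  have hne : F.Nonempty := by
    obtain ⟨ω, h⟩ := feasible_nonempty N T p hN hT W hW01 ψ hnosep
    exact ⟨ω, h⟩
  have hcl : IsClosed F := feasible_closed N T W p ψ
  have hcv : Convex ℝ F := feasible_convex N T W p ψ
  have hpos : (0 : ℝ) < 1 / (((N : ℝ) * T) ^ 2) := by positivity
  exact ⟨hne, hcl, hcv, exists_unique_min N T F hne hcl hcv _ hpos⟩
end
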